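/- arXiv:1411.0613 — 4 statements merged into one kernel-verified Lean document; each statement's English description precedes it below -/
import Mathlib

section
/- Let k be a field. Every pointwise finite-dimensional persistence module indexed by (ℤ, ≤) is isomorphic to a direct sum of interval modules. Precisely: if V is a functor from ℤ (viewed as a category via its usual order) to k-vector spaces such that V(n) is finite-dimensional for every n ∈ ℤ, then there exist an index set J, a family of nonempty order-convex subsets (intervals) I_j ⊆ ℤ for j ∈ J, and an isomorphism of functors V ≅ ⨁_{j ∈ J} k_{I_j}, where the direct sum of functors is taken pointwise. -/
set_option linter.unusedSectionVars false
set_option maxHeartbeats 1000000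

open scoped Classical
open Submodule


/-- The structure map of a pointwise direct sum of interval modules over `ℤ`:
on the summand indexed by `j` with `s ∈ I j`, it is the identity onto the summand
indexed by `j` if `t ∈ I j`, and zero otherwise. -/
noncomputable def intervalSumMap (k : Type) [Field k] {J : Type} (I : J → Set ℤ)
    (s t : ℤ) :
    ({j : J // s ∈ I j} →₀ k) →ₗ[k] ({j : J // t ∈ I j} →₀ k) :=
  Finsupp.lsum k fun j =>
    if h : t ∈ I j.1 then Finsupp.lsingle (⟨j.1, h⟩ : {j : J // t ∈ I j}) else 0

namespace CB

variable (k : Type) [Field k]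
variable (V : ℤ → Type) [∀ t, AddCommGroup (V t)] [∀ t, Module k (V t)]
variable (ρ : ∀ s t : ℤ, s ≤ t → (V s →ₗ[k] V t))

/-- image of `ρ a t` (or `⊤` if `a > t`). -/
noncomputable def imF (a t : ℤ) : Submodule k (V t) :=
  if h : a ≤ t then LinearMap.range (ρ a t h) else ⊤

/-- kernel of `ρ t (b+1)` (or `⊥` if `b < t`). -/
noncomputable def kerF (t b : ℤ) : Submodule k (V t) :=
  if h : t ≤ b then LinearMap.ker (ρ t (b + 1) (by omega)) else ⊥

variable {k V ρ}
variable (hcomp : ∀ r s t : ℤ, ∀ (hrs : r ≤ s) (hst : s ≤ t),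
      (ρ s t hst).comp (ρ r s hrs) = ρ r t (hrs.trans hst))
variable (hid : ∀ t : ℤ, ρ t t le_rfl = LinearMap.id)

include hcomp

lemma imF_mono {a a' t : ℤ} (h : a ≤ a') : imF k V ρ a t ≤ imF k V ρ a' t := by
  by_cases h2 : a' ≤ t
  · rw [imF, dif_pos (h.trans h2), imF, dif_pos h2, ← hcomp a a' t h h2,
      LinearMap.range_comp]
    exact LinearMap.map_le_range
  · simp only [imF]; rw [dif_neg h2]; exact le_top

lemma map_imF {a t : ℤ} (h : a ≤ t) :
    Submodule.map (ρ t (t+1) (by omega)) (imF k V ρ a t) = imF k V ρ a (t+1) := by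
  rw [imF, dif_pos h, imF, dif_pos (by omega : a ≤ t + 1),
    ← hcomp a t (t+1) h (by omega), LinearMap.range_comp]

omit hcomp in
include hid in
lemma imF_self (t : ℤ) :
    imF k V ρ t t = ⊤ := by
  rw [imF, dif_pos le_rfl]
  have : ρ t t le_rfl = LinearMap.id := hid t
  rw [this, LinearMap.range_id]

lemma kerF_comap {t b : ℤ} (h : t ≤ b) :
    kerF k V ρ t b = Submodule.comap (ρ t (t+1) (by omega)) (kerF k V ρ (t+1) b) := by
  by_cases h2 : t + 1 ≤ b
  · rw [kerF, dif_pos h, kerF, dif_pos h2,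
      ← hcomp t (t+1) (b+1) (by omega) (by omega), LinearMap.ker_comp]
  · have hb : b = t := by omega
    subst hb
    rw [kerF, dif_pos le_rfl, kerF, dif_neg (by omega), Submodule.comap_bot]

lemma kerF_mono {t b b' : ℤ} (h : b ≤ b') : kerF k V ρ t b ≤ kerF k V ρ t b' := by
  by_cases h2 : t ≤ b
  · rw [kerF, dif_pos h2, kerF, dif_pos (h2.trans h),
      ← hcomp t (b+1) (b'+1) (by omega) (by omega), LinearMap.ker_comp]
    exact fun x hx => by
      simp only [Submodule.mem_comap]
      exact (Submodule.mem_comap).2 (by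
        have : ρ t (b+1) (by omega) x = 0 := hx
        simp [Submodule.mem_comap, this])
  · rw [kerF, dif_neg h2]; exact bot_le

variable (hfd : ∀ t : ℤ, FiniteDimensional k (V t))
include hfd

lemma imStab (t : ℤ) : ∃ a₀, a₀ ≤ t ∧ ∀ a, a ≤ a₀ →
    imF k V ρ a t = ⨅ a' : ℤ, imF k V ρ a' t := by
  haveI := hfd t
  set g : ℕ → ℕ := fun n => Module.finrank k (imF k V ρ (t - n) t) with hg
  obtain ⟨n₀, hn₀⟩ : sInf (Set.range g) ∈ Set.range g :=
    Nat.sInf_mem (Set.range_nonempty g)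
  refine ⟨t - n₀, by omega, ?_⟩
  have key : ∀ a, a ≤ t - n₀ → imF k V ρ a t = imF k V ρ (t - n₀) t := by
    intro a ha
    refine eq_of_le_of_finrank_le (imF_mono hcomp (by omega)) ?_
    have h1 : imF k V ρ a t = imF k V ρ (t - ((t - a).toNat : ℤ)) t := by
      congr 1; omega
    calc Module.finrank k (imF k V ρ (t - (n₀ : ℤ)) t) = g n₀ := rfl
      _ = sInf (Set.range g) := hn₀
      _ ≤ g ((t - a).toNat) := Nat.sInf_le ⟨_, rfl⟩
      _ = Module.finrank k (imF k V ρ a t) := by simp only [hg]; rw [← h1]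
  have hinf : (⨅ a' : ℤ, imF k V ρ a' t) = imF k V ρ (t - n₀) t := by
    refine le_antisymm (iInf_le _ _) (le_iInf fun a' => ?_)
    rcases le_or_gt a' (t - n₀) with h | h
    · rw [key a' h]
    · exact imF_mono hcomp h.le
  intro a ha; rw [key a ha, hinf]

lemma kerStab (t : ℤ) : ∃ b₀, t ≤ b₀ ∧ ∀ b, b₀ ≤ b →
    kerF k V ρ t b = ⨆ b' : ℤ, kerF k V ρ t b' := by
  haveI := hfd t
  set g : ℕ → ℕ := fun n => Module.finrank k (kerF k V ρ t (t + n)) with hg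
  have hbdd : BddAbove (Set.range g) := ⟨Module.finrank k (V t), by
    rintro x ⟨n, rfl⟩; exact Submodule.finrank_le _⟩
  obtain ⟨n₀, hn₀⟩ : sSup (Set.range g) ∈ Set.range g :=
    Nat.sSup_mem (Set.range_nonempty g) hbdd
  refine ⟨t + n₀, by omega, ?_⟩
  have key : ∀ b, t + n₀ ≤ b → kerF k V ρ t b = kerF k V ρ t (t + n₀) := by
    intro b hb
    refine (eq_of_le_of_finrank_le (kerF_mono hcomp (by omega)) ?_).symm
    have h1 : kerF k V ρ t b = kerF k V ρ t (t + ((b - t).toNat : ℤ)) := by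
      congr 1; omega
    calc Module.finrank k (kerF k V ρ t b) = g ((b - t).toNat) := by simp only [hg]; rw [← h1]
      _ ≤ sSup (Set.range g) := le_csSup hbdd ⟨_, rfl⟩
      _ = g n₀ := hn₀.symm
  have hsup : (⨆ b' : ℤ, kerF k V ρ t b') = kerF k V ρ t (t + n₀) := by
    refine le_antisymm (iSup_le fun b' => ?_) (le_iSup _ _)
    rcases le_or_gt (t + n₀) b' with h | h
    · rw [key b' h]
    · exact kerF_mono hcomp h.le
  intro b hb; rw [key b hb, hsup]


omit hcomp hfd

/-! ### the two filtrations -/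

variable (k V ρ) in
noncomputable def im (t : ℤ) : WithBot ℤ → Submodule k (V t) :=
  WithBot.recBotCoe (⨅ a' : ℤ, imF k V ρ a' t) (fun a => imF k V ρ a t)

variable (k V ρ) in
noncomputable def pim (t : ℤ) : WithBot ℤ → Submodule k (V t) :=
  WithBot.recBotCoe ⊥ (fun a => imF k V ρ (a - 1) t)

variable (k V ρ) in
noncomputable def kf (t : ℤ) : WithTop ℤ → Submodule k (V t) :=
  WithTop.recTopCoe ⊤ (fun b => kerF k V ρ t b)

variable (k V ρ) in
noncomputable def pk (t : ℤ) : WithTop ℤ → Submodule k (V t) :=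
  WithTop.recTopCoe (⨆ b' : ℤ, kerF k V ρ t b') (fun b => kerF k V ρ t (b - 1))

@[simp] lemma im_bot (t : ℤ) : im k V ρ t ⊥ = ⨅ a' : ℤ, imF k V ρ a' t := rfl
@[simp] lemma im_coe (t a : ℤ) : im k V ρ t (a : WithBot ℤ) = imF k V ρ a t := rfl
@[simp] lemma pim_bot (t : ℤ) : pim k V ρ t ⊥ = ⊥ := rfl
@[simp] lemma pim_coe (t a : ℤ) : pim k V ρ t (a : WithBot ℤ) = imF k V ρ (a-1) t := rfl
@[simp] lemma kf_top (t : ℤ) : kf k V ρ t ⊤ = ⊤ := rfl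
@[simp] lemma kf_coe (t b : ℤ) : kf k V ρ t (b : WithTop ℤ) = kerF k V ρ t b := rfl
@[simp] lemma pk_top (t : ℤ) : pk k V ρ t ⊤ = ⨆ b' : ℤ, kerF k V ρ t b' := rfl
@[simp] lemma pk_coe (t b : ℤ) : pk k V ρ t (b : WithTop ℤ) = kerF k V ρ t (b-1) := rfl

variable (k V ρ) in
noncomputable def cell (t : ℤ) (a : WithBot ℤ) (b : WithTop ℤ) : Submodule k (V t) :=
  im k V ρ t a ⊓ kf k V ρ t b

variable (k V ρ) in
noncomputable def low (t : ℤ) (a : WithBot ℤ) (b : WithTop ℤ) : Submodule k (V t) :=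
  (pim k V ρ t a ⊓ kf k V ρ t b) ⊔ (im k V ρ t a ⊓ pk k V ρ t b)

/-- membership in the interval determined by `a`, `b`. -/
def memI (a : WithBot ℤ) (b : WithTop ℤ) (t : ℤ) : Prop :=
  a ≤ (t : WithBot ℤ) ∧ (t : WithTop ℤ) ≤ b

include hcomp in
lemma pim_le_im (t : ℤ) (a : WithBot ℤ) : pim k V ρ t a ≤ im k V ρ t a := by
  induction a using WithBot.recBotCoe with
  | bot => exact bot_le
  | coe a => exact imF_mono hcomp (by omega)

include hcomp in
lemma pk_le_kf (t : ℤ) (b : WithTop ℤ) : pk k V ρ t b ≤ kf k V ρ t b := by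
  induction b using WithTop.recTopCoe with
  | top => exact le_top
  | coe b => exact kerF_mono hcomp (by omega)

include hcomp in
lemma low_le_cell (t : ℤ) (a : WithBot ℤ) (b : WithTop ℤ) :
    low k V ρ t a b ≤ cell k V ρ t a b :=
  sup_le (inf_le_inf_right _ (pim_le_im hcomp t a))
    (inf_le_inf_left _ (pk_le_kf hcomp t b))

include hcomp in
lemma im_lt_le_pim (t : ℤ) {a' a : WithBot ℤ} (h : a' < a) :
    im k V ρ t a' ≤ pim k V ρ t a := by
  induction a using WithBot.recBotCoe with
  | bot => exact absurd h (by simp)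
  | coe a =>
    induction a' using WithBot.recBotCoe with
    | bot => exact iInf_le _ _
    | coe a' =>
      have ha : a' ≤ a - 1 := by
        have := WithBot.coe_lt_coe.1 h; omega
      exact imF_mono hcomp ha

include hcomp in
lemma kf_lt_le_pk (t : ℤ) {b' b : WithTop ℤ} (h : b' < b) :
    kf k V ρ t b' ≤ pk k V ρ t b := by
  induction b' using WithTop.recTopCoe with
  | top => exact absurd h (by simp)
  | coe b' =>
    induction b using WithTop.recTopCoe with
    | top => exact le_iSup (fun b'' : ℤ => kerF k V ρ t b'') b'
    | coe b =>
      have hb : b' ≤ b - 1 := by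
        have := WithTop.coe_lt_coe.1 h; omega
      exact kerF_mono hcomp hb

/-! ### transport lemmas -/

include hcomp hfd in
lemma map_im {t : ℤ} {a : WithBot ℤ} (ha : a ≤ (t : WithBot ℤ)) :
    Submodule.map (ρ t (t+1) (by omega)) (im k V ρ t a) = im k V ρ (t+1) a := by
  induction a using WithBot.recBotCoe with
  | coe a => exact map_imF hcomp (WithBot.coe_le_coe.1 ha)
  | bot =>
    obtain ⟨a₁, ha₁, hs₁⟩ := imStab hcomp hfd t
    obtain ⟨a₂, ha₂, hs₂⟩ := imStab hcomp hfd (t+1)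
    simp only [im_bot]
    rw [← hs₁ (min a₁ a₂) (min_le_left _ _), ← hs₂ (min a₁ a₂) (min_le_right _ _)]
    exact map_imF hcomp (by omega)

include hcomp in
lemma map_pim {t : ℤ} {a : WithBot ℤ} (ha : a ≤ (t : WithBot ℤ)) :
    Submodule.map (ρ t (t+1) (by omega)) (pim k V ρ t a) = pim k V ρ (t+1) a := by
  induction a using WithBot.recBotCoe with
  | bot => simp
  | coe a =>
    have := WithBot.coe_le_coe.1 ha
    exact map_imF hcomp (by omega)

include hcomp in
lemma comap_kf {t : ℤ} {b : WithTop ℤ} (hb : ((t+1 : ℤ) : WithTop ℤ) ≤ b) :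
    kf k V ρ t b = Submodule.comap (ρ t (t+1) (by omega)) (kf k V ρ (t+1) b) := by
  induction b using WithTop.recTopCoe with
  | top => simp
  | coe b =>
    have := WithTop.coe_le_coe.1 hb
    exact kerF_comap hcomp (by omega)

include hcomp hfd in
lemma comap_pk {t : ℤ} {b : WithTop ℤ} (hb : ((t+1 : ℤ) : WithTop ℤ) ≤ b) :
    pk k V ρ t b = Submodule.comap (ρ t (t+1) (by omega)) (pk k V ρ (t+1) b) := by
  induction b using WithTop.recTopCoe with
  | coe b =>
    have := WithTop.coe_le_coe.1 hb
    exact kerF_comap hcomp (by omega)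
  | top =>
    obtain ⟨b₁, hb₁, hs₁⟩ := kerStab hcomp hfd t
    obtain ⟨b₂, hb₂, hs₂⟩ := kerStab hcomp hfd (t+1)
    simp only [pk_top]
    rw [← hs₁ (max b₁ b₂) (le_max_left _ _), ← hs₂ (max b₁ b₂) (le_max_right _ _)]
    exact kerF_comap hcomp (by omega)

include hcomp hfd in
lemma map_cell_le {t : ℤ} {a : WithBot ℤ} {b : WithTop ℤ}
    (ha : a ≤ (t : WithBot ℤ)) (hb : ((t+1 : ℤ) : WithTop ℤ) ≤ b) :
    Submodule.map (ρ t (t+1) (by omega)) (cell k V ρ t a b) ≤ cell k V ρ (t+1) a b := by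
  refine le_inf ?_ ?_
  · exact le_trans (Submodule.map_mono inf_le_left) (map_im hcomp hfd ha).le
  · refine le_trans (Submodule.map_mono inf_le_right) ?_
    rw [comap_kf hcomp hb]
    exact Submodule.map_comap_le _ _

include hcomp hfd in
lemma map_low_le {t : ℤ} {a : WithBot ℤ} {b : WithTop ℤ}
    (ha : a ≤ (t : WithBot ℤ)) (hb : ((t+1 : ℤ) : WithTop ℤ) ≤ b) :
    Submodule.map (ρ t (t+1) (by omega)) (low k V ρ t a b) ≤ low k V ρ (t+1) a b := by
  rw [low, Submodule.map_sup]
  refine sup_le_sup ?_ ?_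
  · refine le_inf ?_ ?_
    · exact le_trans (Submodule.map_mono inf_le_left) (map_pim hcomp ha).le
    · refine le_trans (Submodule.map_mono inf_le_right) ?_
      rw [comap_kf hcomp hb]; exact Submodule.map_comap_le _ _
  · refine le_inf ?_ ?_
    · exact le_trans (Submodule.map_mono inf_le_left) (map_im hcomp hfd ha).le
    · refine le_trans (Submodule.map_mono inf_le_right) ?_
      rw [comap_pk hcomp hfd hb]; exact Submodule.map_comap_le _ _

include hcomp hfd in
lemma cell_le_map {t : ℤ} {a : WithBot ℤ} {b : WithTop ℤ}
    (ha : a ≤ (t : WithBot ℤ)) (hb : ((t+1 : ℤ) : WithTop ℤ) ≤ b) :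
    cell k V ρ (t+1) a b ≤ Submodule.map (ρ t (t+1) (by omega)) (cell k V ρ t a b) := by
  intro y hy
  obtain ⟨hy1, hy2⟩ := Submodule.mem_inf.1 hy
  rw [← map_im hcomp hfd ha] at hy1
  obtain ⟨x, hx, rfl⟩ := hy1
  refine ⟨x, Submodule.mem_inf.2 ⟨hx, ?_⟩, rfl⟩
  rw [comap_kf hcomp hb]
  exact hy2

include hcomp hfd in
lemma cell_inj {t : ℤ} {a : WithBot ℤ} {b : WithTop ℤ}
    (ha : a ≤ (t : WithBot ℤ)) (hb : ((t+1 : ℤ) : WithTop ℤ) ≤ b) :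
    cell k V ρ t a b ⊓ Submodule.comap (ρ t (t+1) (by omega)) (low k V ρ (t+1) a b)
      ≤ low k V ρ t a b := by
  intro x hx
  obtain ⟨hxc, hxl⟩ := Submodule.mem_inf.1 hx
  obtain ⟨hxi, hxk⟩ := Submodule.mem_inf.1 hxc
  rw [Submodule.mem_comap] at hxl
  obtain ⟨u, hu, w, hw, huw⟩ := Submodule.mem_sup.1 hxl
  obtain ⟨hu1, hu2⟩ := Submodule.mem_inf.1 hu
  obtain ⟨hw1, hw2⟩ := Submodule.mem_inf.1 hw
  rw [← map_pim hcomp ha] at hu1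
  obtain ⟨u', hu'p, rfl⟩ := hu1
  have hu'k : u' ∈ kf k V ρ t b := by rw [comap_kf hcomp hb]; exact hu2
  have hxu : x - u' ∈ pk k V ρ t b := by
    rw [comap_pk hcomp hfd hb]
    refine Submodule.mem_comap.2 ?_
    have heq : ρ t (t+1) (by omega) (x - u') = w := by
      rw [map_sub, ← huw]; abel
    rw [heq]; exact hw2
  have hxu_im : x - u' ∈ im k V ρ t a :=
    Submodule.sub_mem _ hxi (pim_le_im hcomp t a hu'p)
  have hxs : x = u' + (x - u') := by abel
  rw [hxs]
  exact Submodule.mem_sup.2 ⟨u', Submodule.mem_inf.2 ⟨hu'p, hu'k⟩, x - u',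
    Submodule.mem_inf.2 ⟨hxu_im, hxu⟩, rfl⟩

include hcomp in
lemma cell_inf_sup_le {t : ℤ} {a : WithBot ℤ} {b : WithTop ℤ} {x : V t}
    (hx : x ∈ cell k V ρ t a b) (hx2 : x ∈ pim k V ρ t a ⊔ pk k V ρ t b) :
    x ∈ low k V ρ t a b := by
  obtain ⟨hxi, hxk⟩ := Submodule.mem_inf.1 hx
  obtain ⟨u, hu, w, hw, huw⟩ := Submodule.mem_sup.1 hx2
  have hwm : w ∈ im k V ρ t a ⊓ pk k V ρ t b := by
    refine Submodule.mem_inf.2 ⟨?_, hw⟩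
    have : w = x - u := by rw [← huw]; abel
    rw [this]
    exact Submodule.sub_mem _ hxi (pim_le_im hcomp t a hu)
  have hum : u ∈ pim k V ρ t a ⊓ kf k V ρ t b := by
    refine Submodule.mem_inf.2 ⟨hu, ?_⟩
    have : u = x - w := by rw [← huw]; abel
    rw [this]
    exact Submodule.sub_mem _ hxk (pk_le_kf hcomp t b hw)
  exact Submodule.mem_sup.2 ⟨u, hum, w, hwm, huw⟩

/-! ### good families -/

variable (k V ρ) in
/-- `w` is a family spanning a complement of `low` inside `cell`. -/
def Good {d : ℕ} (t : ℤ) (a : WithBot ℤ) (b : WithTop ℤ) (w : Fin d → V t) : Prop :=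
  (∀ i, w i ∈ cell k V ρ t a b) ∧
  (∀ c : Fin d → k, (∑ i, c i • w i) ∈ low k V ρ t a b → ∀ i, c i = 0) ∧
  (cell k V ρ t a b ≤ low k V ρ t a b ⊔ Submodule.span k (Set.range w))

lemma exists_compl_fam {W : Type} [AddCommGroup W] [Module k W] [FiniteDimensional k W]
    (L C : Submodule k W) :
    ∃ (d : ℕ) (w : Fin d → W), (∀ i, w i ∈ C) ∧
      (∀ c : Fin d → k, (∑ i, c i • w i) ∈ L → ∀ i, c i = 0) ∧
      (C ≤ L ⊔ Submodule.span k (Set.range w)) := by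
  classical
  set L' : Submodule k C := L.comap C.subtype with hL'
  haveI : FiniteDimensional k (C ⧸ L') := inferInstance
  set d := Module.finrank k (C ⧸ L') with hd
  set bQ : Module.Basis (Fin d) k (C ⧸ L') := Module.finBasis k (C ⧸ L') with hbQ
  have hsurj := Submodule.mkQ_surjective L'
  choose u hu using fun i => hsurj (bQ i)
  have coe_sum : ∀ c : Fin d → k, ((∑ i, c i • u i : C) : W) = ∑ i, c i • (u i : W) := by
    intro c; simp
  refine ⟨d, fun i => (u i : W), fun i => (u i).2, ?_, ?_⟩
  · intro c hc
    have hs : (∑ i, c i • u i : C) ∈ L' := by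
      rw [hL', Submodule.mem_comap, Submodule.subtype_apply, coe_sum]
      exact hc
    have h0 : (∑ i, c i • bQ i) = (0 : C ⧸ L') := by
      have : Submodule.mkQ L' (∑ i, c i • u i) = 0 :=
        (Submodule.Quotient.mk_eq_zero L').2 hs
      rw [← this, map_sum]
      exact Finset.sum_congr rfl fun i _ => by rw [map_smul, hu]
    exact Fintype.linearIndependent_iff.1 bQ.linearIndependent c h0
  · intro x hx
    set c := bQ.repr (Submodule.mkQ L' ⟨x, hx⟩) with hc
    have hrepr : ∑ i, c i • bQ i = Submodule.mkQ L' ⟨x, hx⟩ := bQ.sum_repr _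
    have hker : ((⟨x, hx⟩ : C) - ∑ i, c i • u i) ∈ L' := by
      rw [← Submodule.Quotient.mk_eq_zero L']
      show Submodule.mkQ L' _ = 0
      rw [map_sub, map_sum]
      have hs : (∑ i, Submodule.mkQ L' (c i • u i)) = ∑ i, c i • bQ i :=
        Finset.sum_congr rfl fun i _ => by rw [map_smul, hu]
      rw [hs, hrepr, sub_self]
    have hxL : x - ∑ i, c i • (u i : W) ∈ L := by
      have := hker
      rw [hL', Submodule.mem_comap, Submodule.subtype_apply] at this
      simpa using this
    refine Submodule.mem_sup.2 ⟨x - ∑ i, c i • (u i : W), hxL,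
      ∑ i, c i • (u i : W), ?_, by abel⟩
    exact Submodule.sum_mem _ fun i _ => Submodule.smul_mem _ _
      (Submodule.subset_span ⟨i, rfl⟩)

include hcomp hfd in
lemma stepR {d : ℕ} {t : ℤ} {a : WithBot ℤ} {b : WithTop ℤ}
    (ha : a ≤ (t : WithBot ℤ)) (hb : ((t+1 : ℤ) : WithTop ℤ) ≤ b)
    {w : Fin d → V t} (hw : Good k V ρ t a b w) :
    Good k V ρ (t+1) a b (fun i => ρ t (t+1) (by omega) (w i)) := by
  obtain ⟨h1, h2, h3⟩ := hw
  refine ⟨fun i => map_cell_le hcomp hfd ha hb ⟨w i, h1 i, rfl⟩, ?_, ?_⟩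
  · intro c hc
    apply h2 c
    apply cell_inj hcomp hfd ha hb
    refine Submodule.mem_inf.2 ⟨Submodule.sum_mem _ fun i _ =>
      Submodule.smul_mem _ _ (h1 i), Submodule.mem_comap.2 ?_⟩
    have : ρ t (t+1) (by omega) (∑ i, c i • w i) =
        ∑ i, c i • ρ t (t+1) (by omega) (w i) := by
      rw [map_sum]; exact Finset.sum_congr rfl fun i _ => by rw [map_smul]
    rw [this]; exact hc
  · intro y hy
    obtain ⟨x, hx, rfl⟩ := cell_le_map hcomp hfd ha hb hy
    obtain ⟨l, hl, sd, hs, rfl⟩ := Submodule.mem_sup.1 (h3 hx)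
    rw [map_add]
    refine Submodule.add_mem_sup (map_low_le hcomp hfd ha hb ⟨l, hl, rfl⟩) ?_
    have hmem : ρ t (t+1) (by omega) sd ∈
        Submodule.map (ρ t (t+1) (by omega)) (Submodule.span k (Set.range w)) :=
      ⟨sd, hs, rfl⟩
    rw [Submodule.map_span] at hmem
    have hrange : (ρ t (t+1) (by omega)) '' Set.range w =
        Set.range (fun i => ρ t (t+1) (by omega) (w i)) := by
      rw [← Set.range_comp]; rfl
    rwa [hrange] at hmem

include hcomp hfd in
lemma stepL {d : ℕ} {t : ℤ} {a : WithBot ℤ} {b : WithTop ℤ}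
    (ha : a ≤ (t : WithBot ℤ)) (hb : ((t+1 : ℤ) : WithTop ℤ) ≤ b)
    {w : Fin d → V (t+1)} (hw : Good k V ρ (t+1) a b w) :
    ∃ w' : Fin d → V t, Good k V ρ t a b w' ∧
      ∀ i, ρ t (t+1) (by omega) (w' i) = w i := by
  obtain ⟨h1, h2, h3⟩ := hw
  have hex : ∀ i, ∃ x, x ∈ cell k V ρ t a b ∧ ρ t (t+1) (by omega) x = w i := by
    intro i
    obtain ⟨x, hx, hxe⟩ := cell_le_map hcomp hfd ha hb (h1 i)
    exact ⟨x, hx, hxe⟩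
  choose w' hw'c hw'e using hex
  have hsum : ∀ c : Fin d → k, ρ t (t+1) (by omega) (∑ i, c i • w' i) =
      ∑ i, c i • w i := by
    intro c
    rw [map_sum]
    exact Finset.sum_congr rfl fun i _ => by rw [map_smul, hw'e]
  refine ⟨w', ⟨hw'c, ?_, ?_⟩, hw'e⟩
  · intro c hc
    apply h2 c
    have := map_low_le hcomp hfd ha hb ⟨_, hc, rfl⟩
    rwa [hsum] at this
  · intro x hx
    have hρx := h3 (map_cell_le hcomp hfd ha hb ⟨x, hx, rfl⟩)
    obtain ⟨l, hl, sd, hs, heq⟩ := Submodule.mem_sup.1 hρx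
    obtain ⟨c, hc⟩ := (mem_span_range_iff_exists_fun k).1 hs
    have hsub : x - ∑ i, c i • w' i ∈ low k V ρ t a b := by
      apply cell_inj hcomp hfd ha hb
      refine Submodule.mem_inf.2 ⟨Submodule.sub_mem _ hx (Submodule.sum_mem _
        fun i _ => Submodule.smul_mem _ _ (hw'c i)), Submodule.mem_comap.2 ?_⟩
      have : ρ t (t+1) (by omega) (x - ∑ i, c i • w' i) = l := by
        rw [map_sub, hsum, hc, ← heq]; abel
      rw [this]; exact hl
    have hxeq : x = (x - ∑ i, c i • w' i) + ∑ i, c i • w' i := by abel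
    rw [hxeq]
    refine Submodule.add_mem_sup hsub ?_
    exact Submodule.sum_mem _ fun i _ => Submodule.smul_mem _ _
      (Submodule.subset_span ⟨i, rfl⟩)

/-! ### a generic chain-construction lemma over `ℤ` -/

universe u
omit hcomp hfd

lemma exists_chain {α : ℤ → Type u} (R : ∀ t : ℤ, α t → α (t+1) → Prop) (t₀ : ℤ)
    (h0 : Nonempty (α t₀))
    (hup : ∀ t : ℤ, t₀ ≤ t → ∀ x : α t, ∃ y : α (t+1), R t x y)
    (hdown : ∀ t : ℤ, t < t₀ → ∀ y : α (t+1), ∃ x : α t, R t x y) :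
    ∃ f : ∀ t, α t, ∀ t, R t (f t) (f (t+1)) := by
  classical
  -- every `α t` is nonempty
  have hneU : ∀ n : ℕ, Nonempty (α (t₀ + n)) := by
    intro n
    induction n with
    | zero => rw [show t₀ + ((0:ℕ):ℤ) = t₀ by simp]; exact h0
    | succ n ih =>
      obtain ⟨x⟩ := ih
      obtain ⟨y, -⟩ := hup (t₀ + n) (by omega) x
      rw [show t₀ + ((n+1:ℕ):ℤ) = t₀ + (n:ℕ) + 1 by push_cast; ring]
      exact ⟨y⟩
  have hneD : ∀ n : ℕ, Nonempty (α (t₀ - n)) := by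
    intro n
    induction n with
    | zero => rw [show t₀ - ((0:ℕ):ℤ) = t₀ by simp]; exact h0
    | succ n ih =>
      rw [show t₀ - ((n+1:ℕ):ℤ) = t₀ - (n:ℕ) - 1 by push_cast; ring]
      have hx : Nonempty (α (t₀ - (n:ℕ) - 1 + 1)) := by
        rw [show t₀ - ((n:ℕ):ℤ) - 1 + 1 = t₀ - (n:ℕ) by ring]; exact ih
      obtain ⟨y⟩ := hx
      obtain ⟨x, -⟩ := hdown (t₀ - (n:ℕ) - 1) (by omega) y
      exact ⟨x⟩
  have hne : ∀ t : ℤ, Nonempty (α t) := by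
    intro t
    obtain ⟨n, rfl | rfl⟩ : ∃ n : ℕ, t = t₀ + n ∨ t = t₀ - n :=
      ⟨(t - t₀).natAbs, by omega⟩
    · exact hneU n
    · exact hneD n
  -- partial chains defined on all of `ℤ`, correct on `[t₀ - n, t₀ + n]`
  set P : ℕ → (∀ t, α t) → Prop :=
    fun n g => ∀ t : ℤ, t₀ - n ≤ t → t < t₀ + n → R t (g t) (g (t+1)) with hP
  have base : ∃ g, P 0 g := ⟨fun t => (hne t).some, fun t h1 h2 => by omega⟩
  have step : ∀ n (g : ∀ t, α t), P n g →
      ∃ g', P (n+1) g' ∧ ∀ t : ℤ, t₀ - n ≤ t → t ≤ t₀ + n → g' t = g t := by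
    intro n g hg
    obtain ⟨yR, hyR⟩ := hup (t₀ + n) (by omega) (g (t₀ + n))
    obtain ⟨yL, hyL⟩ := hdown (t₀ - n - 1) (by omega) (g (t₀ - n - 1 + 1))
    refine ⟨fun t =>
      if h : t = t₀ + (n:ℕ) + 1 then cast (congrArg α h.symm) yR
      else if h2 : t = t₀ - (n:ℕ) - 1 then cast (congrArg α h2.symm) yL
      else g t, ?_, ?_⟩
    · intro t h1 h2
      by_cases hA : t = t₀ + (n:ℕ)
      · subst hA
        beta_reduce
        rw [dif_neg (show ¬(t₀ + (n:ℕ) = t₀ + (n:ℕ) + 1) by omega),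
          dif_neg (show ¬(t₀ + (n:ℕ) = t₀ - (n:ℕ) - 1) by omega),
          dif_pos (rfl : t₀ + (n:ℕ) + 1 = t₀ + (n:ℕ) + 1)]
        exact hyR
      · by_cases hB : t = t₀ - (n:ℕ) - 1
        · subst hB
          beta_reduce
          rw [dif_neg (show ¬(t₀ - (n:ℕ) - 1 = t₀ + (n:ℕ) + 1) by omega),
            dif_pos (rfl : t₀ - (n:ℕ) - 1 = t₀ - (n:ℕ) - 1),
            dif_neg (show ¬(t₀ - (n:ℕ) - 1 + 1 = t₀ + (n:ℕ) + 1) by omega),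
            dif_neg (show ¬(t₀ - (n:ℕ) - 1 + 1 = t₀ - (n:ℕ) - 1) by omega)]
          exact hyL
        · beta_reduce
          rw [dif_neg (show ¬(t = t₀ + (n:ℕ) + 1) by omega),
            dif_neg (show ¬(t = t₀ - (n:ℕ) - 1) from hB),
            dif_neg (show ¬(t + 1 = t₀ + (n:ℕ) + 1) by omega),
            dif_neg (show ¬(t + 1 = t₀ - (n:ℕ) - 1) by omega)]
          exact hg t (by omega) (by omega)
    · intro t h1 h2
      beta_reduce
      rw [dif_neg (show ¬(t = t₀ + (n:ℕ) + 1) by omega),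
        dif_neg (show ¬(t = t₀ - (n:ℕ) - 1) by omega)]
  -- iterate
  let G : (n : ℕ) → {g : ∀ t, α t // P n g} := fun n =>
    Nat.rec ⟨base.choose, base.choose_spec⟩
      (fun n gn => ⟨(step n gn.1 gn.2).choose, (step n gn.1 gn.2).choose_spec.1⟩) n
  have Gagree : ∀ (n : ℕ) (t : ℤ), t₀ - n ≤ t → t ≤ t₀ + n →
      (G (n+1)).1 t = (G n).1 t := fun n t h1 h2 =>
    (step n (G n).1 (G n).2).choose_spec.2 t h1 h2
  have Gstab : ∀ (n m : ℕ), n ≤ m → ∀ t : ℤ, t₀ - n ≤ t → t ≤ t₀ + n →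
      (G m).1 t = (G n).1 t := by
    intro n m hnm
    induction m, hnm using Nat.le_induction with
    | base => intro t _ _; rfl
    | succ m hm ih =>
      intro t h1 h2
      rw [Gagree m t (by omega) (by omega)]
      exact ih t h1 h2
  refine ⟨fun t => (G (t - t₀).natAbs).1 t, ?_⟩
  intro t
  show R t ((G ((t - t₀).natAbs)).1 t) ((G ((t + 1 - t₀).natAbs)).1 (t+1))
  set n1 := (t - t₀).natAbs with hn1
  set n2 := (t + 1 - t₀).natAbs with hn2
  set N := n1 + n2 + 1 with hN
  have e1 : (G N).1 t = (G n1).1 t := Gstab n1 N (by omega) t (by omega) (by omega)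
  have e2 : (G N).1 (t+1) = (G n2).1 (t+1) :=
    Gstab n2 N (by omega) (t+1) (by omega) (by omega)
  rw [← e1, ← e2]
  exact (G N).2 t (by omega) (by omega)

/-! ### interval families -/

def basept (a : WithBot ℤ) (b : WithTop ℤ) : ℤ :=
  WithBot.recBotCoe (WithTop.recTopCoe 0 id b) (fun a' => a') a

@[simp] lemma basept_coe (a : ℤ) (b : WithTop ℤ) : basept (a : WithBot ℤ) b = a := rfl
@[simp] lemma basept_bot_coe (b : ℤ) : basept ⊥ (b : WithTop ℤ) = b := rfl
@[simp] lemma basept_bot_top : basept ⊥ ⊤ = 0 := rfl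

lemma memI_basept {a : WithBot ℤ} {b : WithTop ℤ} {t : ℤ} (h : memI a b t) :
    memI a b (basept a b) := by
  induction a using WithBot.recBotCoe with
  | bot =>
    induction b using WithTop.recTopCoe with
    | top => exact ⟨bot_le, le_top⟩
    | coe b => exact ⟨bot_le, le_refl _⟩
  | coe a =>
    simp only [basept_coe]
    refine ⟨le_refl _, ?_⟩
    induction b using WithTop.recTopCoe with
    | top => exact le_top
    | coe b =>
      have h1 := WithBot.coe_le_coe.1 h.1
      have h2 := WithTop.coe_le_coe.1 h.2
      exact WithTop.coe_le_coe.2 (by omega)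

lemma memI_convex {a : WithBot ℤ} {b : WithTop ℤ} {r s t : ℤ}
    (hr : memI a b r) (ht : memI a b t) (hrs : r ≤ s) (hst : s ≤ t) :
    memI a b s :=
  ⟨hr.1.trans (WithBot.coe_le_coe.2 hrs), (WithTop.coe_le_coe.2 hst).trans ht.2⟩

include hcomp hfd in
lemma exists_interval_fam (a : WithBot ℤ) (b : WithTop ℤ)
    (hm : memI a b (basept a b)) :
    ∃ (d : ℕ) (w : ∀ t : ℤ, Fin d → V t),
      (∀ t, memI a b t → Good k V ρ t a b (w t)) ∧
      (∀ t, memI a b t → memI a b (t+1) →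
        ∀ i, ρ t (t+1) (by omega) (w t i) = w (t+1) i) := by
  classical
  set t₀ := basept a b with ht₀
  haveI := hfd t₀
  obtain ⟨d, w₀, h1, h2, h3⟩ :=
    exists_compl_fam (k := k) (low k V ρ t₀ a b) (cell k V ρ t₀ a b)
  set α : ℤ → Type := fun t => {w : Fin d → V t // memI a b t → Good k V ρ t a b w}
    with hα
  set R : ∀ t : ℤ, α t → α (t+1) → Prop := fun t x y =>
    memI a b t → memI a b (t+1) → ∀ i, ρ t (t+1) (by omega) (x.1 i) = y.1 i
    with hR
  have h0 : Nonempty (α t₀) := ⟨⟨w₀, fun _ => ⟨h1, h2, h3⟩⟩⟩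
  have hup : ∀ t, t₀ ≤ t → ∀ x : α t, ∃ y : α (t+1), R t x y := by
    intro t ht x
    by_cases h1t : memI a b (t+1)
    · have hmt : memI a b t := memI_convex hm h1t ht (by omega)
      have hg := x.2 hmt
      exact ⟨⟨fun i => ρ t (t+1) (by omega) (x.1 i),
        fun _ => stepR hcomp hfd hmt.1 h1t.2 hg⟩, fun _ _ i => rfl⟩
    · exact ⟨⟨fun _ => 0, fun h => absurd h h1t⟩, fun _ h => absurd h h1t⟩
  have hdown : ∀ t, t < t₀ → ∀ y : α (t+1), ∃ x : α t, R t x y := by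
    intro t ht y
    by_cases hmt : memI a b t
    · have h1t : memI a b (t+1) := memI_convex hmt hm (by omega) (by omega)
      have hg := y.2 h1t
      obtain ⟨w', hw', he⟩ := stepL hcomp hfd hmt.1 h1t.2 hg
      exact ⟨⟨w', fun _ => hw'⟩, fun _ _ => he⟩
    · exact ⟨⟨fun _ => 0, fun h => absurd h hmt⟩, fun h => absurd h hmt⟩
  obtain ⟨f, hf⟩ := exists_chain R t₀ h0 hup hdown
  exact ⟨d, fun t => (f t).1, fun t ht => (f t).2 ht, fun t ht ht1 i => hf t ht ht1 i⟩

variable (k V ρ)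

include hcomp hfd in
noncomputable def interData (a : WithBot ℤ) (b : WithTop ℤ) :
    Σ d : ℕ, ∀ t : ℤ, Fin d → V t :=
  if h : memI a b (basept a b) then
    ⟨(exists_interval_fam hcomp hfd a b h).choose,
      (exists_interval_fam hcomp hfd a b h).choose_spec.choose⟩
  else ⟨0, fun _ => Fin.elim0⟩

variable {k V ρ}

include hcomp hfd in
lemma interData_spec (a : WithBot ℤ) (b : WithTop ℤ) (h : memI a b (basept a b)) :
    (∀ t, memI a b t →
        Good k V ρ t a b ((interData k V ρ hcomp hfd a b).2 t)) ∧
      (∀ t, memI a b t → memI a b (t+1) → ∀ i,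
        ρ t (t+1) (by omega) ((interData k V ρ hcomp hfd a b).2 t i) =
          (interData k V ρ hcomp hfd a b).2 (t+1) i) := by
  have : interData k V ρ hcomp hfd a b =
      ⟨(exists_interval_fam hcomp hfd a b h).choose,
        (exists_interval_fam hcomp hfd a b h).choose_spec.choose⟩ := by
    rw [interData, dif_pos h]
  rw [this]
  exact ⟨(exists_interval_fam hcomp hfd a b h).choose_spec.choose_spec.1,
    (exists_interval_fam hcomp hfd a b h).choose_spec.choose_spec.2⟩

include hid hcomp hfd in
lemma wfun_compat (a : WithBot ℤ) (b : WithTop ℤ) {s t : ℤ} (hst : s ≤ t)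
    (hs : memI a b s) (ht : memI a b t) (i : Fin (interData k V ρ hcomp hfd a b).1) :
    ρ s t hst ((interData k V ρ hcomp hfd a b).2 s i) =
      (interData k V ρ hcomp hfd a b).2 t i := by
  have main : ∀ u : ℤ, s ≤ u → ∀ h : s ≤ u, memI a b u →
      ρ s u h ((interData k V ρ hcomp hfd a b).2 s i) =
        (interData k V ρ hcomp hfd a b).2 u i := by
    refine Int.le_induction ?_ ?_
    · exact fun _ _ => DFunLike.congr_fun (hid s) _
    · intro t' ht' ih h ht1
      have hmt' : memI a b t' := memI_convex hs ht1 ht' (by omega)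
      have hstep := (interData_spec hcomp hfd a b (memI_basept hs)).2 t' hmt' ht1 i
      have h1 : ρ s (t'+1) (by omega) ((interData k V ρ hcomp hfd a b).2 s i) =
          ρ t' (t'+1) (by omega) (ρ s t' ht' ((interData k V ρ hcomp hfd a b).2 s i)) :=
        (DFunLike.congr_fun (hcomp s t' (t'+1) ht' (by omega)) _).symm
      rw [ih ht' hmt', hstep] at h1
      exact h1
  exact main t hst hst ht

include hid hcomp hfd in
lemma wfun_dead (a : WithBot ℤ) (b : WithTop ℤ) {s t : ℤ} (hst : s ≤ t)
    (hs : memI a b s) (ht : ¬ memI a b t) (i : Fin (interData k V ρ hcomp hfd a b).1) :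
    ρ s t hst ((interData k V ρ hcomp hfd a b).2 s i) = 0 := by
  have ha : a ≤ (t : WithBot ℤ) := hs.1.trans (WithBot.coe_le_coe.2 hst)
  induction b using WithTop.recTopCoe with
  | top => exact absurd ⟨ha, le_top⟩ ht
  | coe b' =>
    have hb't : b' < t := by
      by_contra hcon
      exact ht ⟨ha, WithTop.coe_le_coe.2 (by omega)⟩
    have hsb' : s ≤ b' := WithTop.coe_le_coe.1 hs.2
    have hmb' : memI a ((b' : ℤ) : WithTop ℤ) b' :=
      ⟨hs.1.trans (WithBot.coe_le_coe.2 hsb'), le_refl _⟩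
    have hgood := (interData_spec hcomp hfd a ((b' : ℤ) : WithTop ℤ)
      (memI_basept hmb')).1 b' hmb'
    have hcell := hgood.1 i
    have hker : (interData k V ρ hcomp hfd a ((b' : ℤ) : WithTop ℤ)).2 b' i ∈
        kerF k V ρ b' b' := by
      have := (Submodule.mem_inf.1 hcell).2
      rwa [kf_coe] at this
    rw [kerF, dif_pos le_rfl] at hker
    have hzero : ρ b' (b'+1) (by omega)
        ((interData k V ρ hcomp hfd a ((b' : ℤ) : WithTop ℤ)).2 b' i) = 0 :=
      LinearMap.mem_ker.1 hker
    have e1 : ρ s b' hsb' ((interData k V ρ hcomp hfd a ((b' : ℤ) : WithTop ℤ)).2 s i) =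
        (interData k V ρ hcomp hfd a ((b' : ℤ) : WithTop ℤ)).2 b' i :=
      wfun_compat hcomp hid hfd a _ hsb' hs hmb' i
    have c2 : ρ b' (b'+1) (by omega)
          (ρ s b' hsb' ((interData k V ρ hcomp hfd a ((b' : ℤ) : WithTop ℤ)).2 s i)) =
        ρ s (b'+1) (by omega) ((interData k V ρ hcomp hfd a ((b' : ℤ) : WithTop ℤ)).2 s i) :=
      DFunLike.congr_fun (hcomp s b' (b'+1) hsb' (by omega)) _
    have c1 : ρ (b'+1) t (by omega)
          (ρ s (b'+1) (by omega) ((interData k V ρ hcomp hfd a ((b' : ℤ) : WithTop ℤ)).2 s i)) =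
        ρ s t hst ((interData k V ρ hcomp hfd a ((b' : ℤ) : WithTop ℤ)).2 s i) :=
      DFunLike.congr_fun (hcomp s (b'+1) t (by omega) (by omega)) _
    rw [← c1, ← c2, e1, hzero, map_zero]

/-! ### the global family -/

variable (k V ρ) in
include hcomp hfd in
def Jset : Type :=
  {x : (WithBot ℤ × WithTop ℤ) × ℕ //
    memI x.1.1 x.1.2 (basept x.1.1 x.1.2) ∧
      x.2 < (interData k V ρ hcomp hfd x.1.1 x.1.2).1}

variable (k V ρ) in
include hcomp hfd in
def Iset : Jset k V ρ hcomp hfd → Set ℤ := fun j => {s | memI j.1.1.1 j.1.1.2 s}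

variable (k V ρ) in
include hcomp hfd in
noncomputable def famF (t : ℤ) :
    {j : Jset k V ρ hcomp hfd // t ∈ Iset k V ρ hcomp hfd j} → V t :=
  fun j => (interData k V ρ hcomp hfd j.1.1.1.1 j.1.1.1.2).2 t ⟨j.1.1.2, j.1.2.2⟩

include hcomp hfd in
lemma famF_mem_cell (t : ℤ) (j : {j : Jset k V ρ hcomp hfd // t ∈ Iset k V ρ hcomp hfd j}) :
    famF k V ρ hcomp hfd t j ∈ cell k V ρ t j.1.1.1.1 j.1.1.1.2 :=
  ((interData_spec hcomp hfd j.1.1.1.1 j.1.1.1.2 j.1.2.1).1 t j.2).1 _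

include hcomp hfd in
lemma famF_indep (t : ℤ) : LinearIndependent k (famF k V ρ hcomp hfd t) := by
  classical
  rw [linearIndependent_iff]
  intro l hl
  by_contra hne
  have hsupp : l.support.Nonempty := Finsupp.support_nonempty_iff.2 hne
  set pa : {j : Jset k V ρ hcomp hfd // t ∈ Iset k V ρ hcomp hfd j} → WithBot ℤ := fun j => j.1.1.1.1 with hpa
  set pb : {j : Jset k V ρ hcomp hfd // t ∈ Iset k V ρ hcomp hfd j} → WithTop ℤ := fun j => j.1.1.1.2 with hpb
  set A := (l.support.image pa).max' (hsupp.image pa) with hA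
  set S1 := l.support.filter (fun j => pa j = A) with hS1
  have hS1ne : S1.Nonempty := by
    obtain ⟨x, hx⟩ := Finset.mem_image.1 ((l.support.image pa).max'_mem (hsupp.image pa))
    exact ⟨x, Finset.mem_filter.2 ⟨hx.1, hx.2⟩⟩
  set B := (S1.image pb).max' (hS1ne.image pb) with hB
  obtain ⟨jB, hjB, hjB2⟩ := Finset.mem_image.1 ((S1.image pb).max'_mem (hS1ne.image pb))
  obtain ⟨hjBsup, hjBpa⟩ := Finset.mem_filter.1 hjB
  -- t lies in the interval (A, B)
  have htAB : memI A B t := by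
    have hmem : memI (pa jB) (pb jB) t := jB.2
    rwa [hjBpa, hjB2] at hmem
  set G := l.support.filter (fun j => pa j = A ∧ pb j = B) with hG
  set x := ∑ j ∈ G, l j • famF k V ρ hcomp hfd t j with hx
  -- x lies in the (A, B) cell
  have h_cell : x ∈ cell k V ρ t A B := by
    refine Submodule.sum_mem _ fun j hj => Submodule.smul_mem _ _ ?_
    obtain ⟨-, hja, hjb⟩ := Finset.mem_filter.1 hj
    have := famF_mem_cell hcomp hfd t j
    rwa [show j.1.1.1.1 = A from hja, show j.1.1.1.2 = B from hjb] at this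
  -- x also lies in `pim ⊔ pk`
  have h_rest : x ∈ pim k V ρ t A ⊔ pk k V ρ t B := by
    have htot : ∑ j ∈ l.support, l j • famF k V ρ hcomp hfd t j = 0 := by
      rw [Finsupp.linearCombination_apply, Finsupp.sum] at hl
      exact hl
    have hsplit := Finset.sum_filter_add_sum_filter_not l.support
      (fun j => pa j = A ∧ pb j = B) (fun j => l j • famF k V ρ hcomp hfd t j)
    rw [htot] at hsplit
    have hxeq : x = - ∑ j ∈ l.support.filter (fun j => ¬(pa j = A ∧ pb j = B)),
        l j • famF k V ρ hcomp hfd t j := by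
      rw [hx, eq_neg_iff_add_eq_zero]
      exact hsplit
    rw [hxeq]
    refine Submodule.neg_mem _ (Submodule.sum_mem _ fun j hj => Submodule.smul_mem _ _ ?_)
    obtain ⟨hjsup, hjnot⟩ := Finset.mem_filter.1 hj
    by_cases hja : pa j = A
    · have hjb : pb j ≠ B := fun h => hjnot ⟨hja, h⟩
      have hjb_le : pb j ≤ B := Finset.le_max' _ _
        (Finset.mem_image.2 ⟨j, Finset.mem_filter.2 ⟨hjsup, hja⟩, rfl⟩)
      have hjb_lt : pb j < B := lt_of_le_of_ne hjb_le hjb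
      refine Submodule.mem_sup_right ?_
      have h1 : famF k V ρ hcomp hfd t j ∈ kf k V ρ t (pb j) := by
        have := famF_mem_cell hcomp hfd t j
        exact (Submodule.mem_inf.1 this).2
      exact kf_lt_le_pk hcomp t hjb_lt h1
    · have hja_le : pa j ≤ A := Finset.le_max' _ _
        (Finset.mem_image.2 ⟨j, hjsup, rfl⟩)
      have hja_lt : pa j < A := lt_of_le_of_ne hja_le hja
      refine Submodule.mem_sup_left ?_
      have h1 : famF k V ρ hcomp hfd t j ∈ im k V ρ t (pa j) :=
        (Submodule.mem_inf.1 (famF_mem_cell hcomp hfd t j)).1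
      exact im_lt_le_pim hcomp t hja_lt h1
  have h_low : x ∈ low k V ρ t A B := cell_inf_sup_le hcomp h_cell h_rest
  -- rewrite x as a combination of the (A, B) interval family
  have hJmem : memI A B (basept A B) := memI_basept htAB
  set dAB := (interData k V ρ hcomp hfd A B).1 with hdAB
  set jOf : Fin dAB → {j : Jset k V ρ hcomp hfd // t ∈ Iset k V ρ hcomp hfd j} :=
    fun i => ⟨⟨((A, B), i.1), ⟨hJmem, i.2⟩⟩, htAB⟩ with hjOf
  have hjOf_inj : Function.Injective jOf := by
    intro i1 i2 h
    have := congrArg (fun j : {j : Jset k V ρ hcomp hfd // t ∈ Iset k V ρ hcomp hfd j} =>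
      j.1.1.2) h
    exact Fin.ext this
  set c : Fin dAB → k := fun i => l (jOf i) with hc
  have hGim : G = (Finset.univ.filter (fun i : Fin dAB => l (jOf i) ≠ 0)).image jOf := by
    ext j
    constructor
    · intro hj
      obtain ⟨hjsup, hja, hjb⟩ := Finset.mem_filter.1 hj
      have hlt : j.1.1.2 < dAB := by
        have := j.1.2.2
        rwa [show j.1.1.1.1 = A from hja, show j.1.1.1.2 = B from hjb] at this
      have hjeq : j = jOf ⟨j.1.1.2, hlt⟩ := by
        apply Subtype.ext
        apply Subtype.ext
        have h1 : j.1.1 = ((A, B), j.1.1.2) := by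
          have : j.1.1.1 = (A, B) := Prod.ext hja hjb
          exact Prod.ext this rfl
        exact h1
      refine Finset.mem_image.2 ⟨⟨j.1.1.2, hlt⟩, ?_, hjeq.symm⟩
      refine Finset.mem_filter.2 ⟨Finset.mem_univ _, ?_⟩
      rw [← hjeq]
      exact Finsupp.mem_support_iff.1 hjsup
    · intro hj
      obtain ⟨i, hi, rfl⟩ := Finset.mem_image.1 hj
      have hi' := (Finset.mem_filter.1 hi).2
      exact Finset.mem_filter.2 ⟨Finsupp.mem_support_iff.2 hi', rfl, rfl⟩
  have hxsum : ∑ i : Fin dAB, c i • (interData k V ρ hcomp hfd A B).2 t i = x := by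
    have h1 : x = ∑ i ∈ Finset.univ.filter (fun i : Fin dAB => l (jOf i) ≠ 0),
        l (jOf i) • famF k V ρ hcomp hfd t (jOf i) := by
      rw [hx, hGim]
      exact Finset.sum_image (fun i1 _ i2 _ h => hjOf_inj h)
    have h2 : ∀ i : Fin dAB, famF k V ρ hcomp hfd t (jOf i) =
        (interData k V ρ hcomp hfd A B).2 t i := fun i => rfl
    rw [h1]
    rw [Finset.sum_filter_of_ne (fun i _ hne' => ?_)]
    · exact Finset.sum_congr rfl fun i _ => by rw [h2]
    · intro hzero
      exact hne' (by rw [hzero, zero_smul])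
  -- conclude: all the coefficients on the (A, B) cell vanish
  have hzero := ((interData_spec hcomp hfd A B hJmem).1 t htAB).2.1 c (by rw [hxsum]; exact h_low)
  -- contradiction with `l jB ≠ 0`
  have hltB : jB.1.1.2 < dAB := by
    have := jB.1.2.2
    rwa [show jB.1.1.1.1 = A from hjBpa, show jB.1.1.1.2 = B from hjB2] at this
  have hjBeq : jB = jOf ⟨jB.1.1.2, hltB⟩ := by
    apply Subtype.ext; apply Subtype.ext
    have : jB.1.1.1 = (A, B) := Prod.ext hjBpa hjB2
    exact Prod.ext this rfl
  have hfin : l (jOf ⟨jB.1.1.2, hltB⟩) = 0 := hzero ⟨jB.1.1.2, hltB⟩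
  rw [← hjBeq] at hfin
  exact Finsupp.mem_support_iff.1 hjBsup hfin

include hid hcomp hfd in
lemma famF_span (t : ℤ) :
    ⊤ ≤ Submodule.span k (Set.range (famF k V ρ hcomp hfd t)) := by
  classical
  obtain ⟨a₀, ha₀, hstabA⟩ := imStab hcomp hfd t
  obtain ⟨b₀, hb₀, hstabB⟩ := kerStab hcomp hfd t
  set S := Submodule.span k (Set.range (famF k V ρ hcomp hfd t)) with hS
  have hw_le : ∀ (a : WithBot ℤ) (b : WithTop ℤ) (hm : memI a b t)
      (i : Fin (interData k V ρ hcomp hfd a b).1),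
      (interData k V ρ hcomp hfd a b).2 t i ∈ S := by
    intro a b hm i
    have heq : (interData k V ρ hcomp hfd a b).2 t i =
        famF k V ρ hcomp hfd t ⟨⟨((a, b), i.1), ⟨memI_basept hm, i.2⟩⟩, hm⟩ := rfl
    exact Submodule.subset_span ⟨_, heq.symm⟩
  set μa : WithBot ℤ → ℕ := WithBot.recBotCoe 0 (fun a => (a - a₀).toNat + 1) with hμa
  set μb : WithTop ℤ → ℕ :=
    WithTop.recTopCoe ((b₀ - t).toNat + 2) (fun b => (b - t).toNat + 1) with hμb
  have main : ∀ n : ℕ, ∀ (a : WithBot ℤ) (b : WithTop ℤ), memI a b t →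
      μa a + μb b ≤ n →
      cell k V ρ t a b ≤ S := by
    intro n
    induction n using Nat.strong_induction_on with
    | _ n ih =>
      intro a b hm hμ
      have hGood := (interData_spec hcomp hfd a b (memI_basept hm)).1 t hm
      refine le_trans hGood.2.2 (sup_le (sup_le ?_ ?_) ?_)
      · -- pim ⊓ kf ≤ S
        induction a using WithBot.recBotCoe with
        | bot => simp
        | coe a' =>
          have ha't : a' ≤ t := WithBot.coe_le_coe.1 hm.1
          by_cases ha' : a' ≤ a₀
          · have hpe : pim k V ρ t (a' : WithBot ℤ) = im k V ρ t ⊥ := by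
              rw [pim_coe, hstabA (a' - 1) (by omega), im_bot]
            rw [hpe]
            have hlt : μa ⊥ + μb b < n := by
              have h1 : μa ((a' : ℤ) : WithBot ℤ) = (a' - a₀).toNat + 1 := rfl
              have h2 : μa ⊥ = 0 := rfl
              omega
            exact ih _ hlt ⊥ b ⟨bot_le, hm.2⟩ le_rfl
          · have hpe : pim k V ρ t ((a' : ℤ) : WithBot ℤ) =
                im k V ρ t (((a' - 1 : ℤ)) : WithBot ℤ) := by
              rw [pim_coe, im_coe]
            rw [hpe]
            have hlt : μa (((a' - 1 : ℤ)) : WithBot ℤ) + μb b < n := by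
              have h1 : μa ((a' : ℤ) : WithBot ℤ) = (a' - a₀).toNat + 1 := rfl
              have h2 : μa (((a' - 1 : ℤ)) : WithBot ℤ) = (a' - 1 - a₀).toNat + 1 := rfl
              omega
            exact ih _ hlt _ b ⟨WithBot.coe_le_coe.2 (by omega), hm.2⟩ le_rfl
      · -- im ⊓ pk ≤ S
        induction b using WithTop.recTopCoe with
        | top =>
          have hpe : pk k V ρ t ⊤ = kf k V ρ t ((b₀ : ℤ) : WithTop ℤ) := by
            rw [pk_top, kf_coe, hstabB b₀ le_rfl]
          rw [hpe]
          have hlt : μa a + μb ((b₀ : ℤ) : WithTop ℤ) < n := by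
            have h1 : μb ((b₀ : ℤ) : WithTop ℤ) = (b₀ - t).toNat + 1 := rfl
            have h2 : μb ⊤ = (b₀ - t).toNat + 2 := rfl
            omega
          exact ih _ hlt a _ ⟨hm.1, WithTop.coe_le_coe.2 hb₀⟩ le_rfl
        | coe b' =>
          by_cases hb' : b' ≤ t
          · have hpe : pk k V ρ t ((b' : ℤ) : WithTop ℤ) = ⊥ := by
              rw [pk_coe, kerF, dif_neg (by omega)]
            rw [hpe, inf_bot_eq]
            exact bot_le
          · have hpe : pk k V ρ t ((b' : ℤ) : WithTop ℤ) =
                kf k V ρ t (((b' - 1 : ℤ)) : WithTop ℤ) := by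
              rw [pk_coe, kf_coe]
            rw [hpe]
            have hlt : μa a + μb (((b' - 1 : ℤ)) : WithTop ℤ) < n := by
              have h1 : μb ((b' : ℤ) : WithTop ℤ) = (b' - t).toNat + 1 := rfl
              have h2 : μb (((b' - 1 : ℤ)) : WithTop ℤ) = (b' - 1 - t).toNat + 1 := rfl
              omega
            exact ih _ hlt a _ ⟨hm.1, WithTop.coe_le_coe.2 (by omega)⟩ le_rfl
      · -- the span of the interval family
        rw [Submodule.span_le]
        rintro _ ⟨i, rfl⟩
        exact hw_le a b hm i
  have htop : (⊤ : Submodule k (V t)) ≤ cell k V ρ t ((t : ℤ) : WithBot ℤ) ⊤ := by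
    rw [cell, kf_top, im_coe, imF_self hid, top_inf_eq]
  exact le_trans htop (main (μa ((t : ℤ) : WithBot ℤ) + μb ⊤) _ ⊤
    ⟨le_refl _, le_top⟩ le_rfl)

include hid hcomp hfd in
lemma famF_step (s t : ℤ) (h : s ≤ t)
    (j : {j : Jset k V ρ hcomp hfd // s ∈ Iset k V ρ hcomp hfd j}) :
    ρ s t h (famF k V ρ hcomp hfd s j) =
      if hj : t ∈ Iset k V ρ hcomp hfd j.1 then famF k V ρ hcomp hfd t ⟨j.1, hj⟩
      else 0 := by
  by_cases hj : t ∈ Iset k V ρ hcomp hfd j.1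
  · rw [dif_pos hj]
    exact wfun_compat hcomp hid hfd _ _ h j.2 hj _
  · rw [dif_neg hj]
    exact wfun_dead hcomp hid hfd _ _ h j.2 hj _

end CB

/-- Crawley-Boevey's theorem: every pointwise finite-dimensional persistence module
indexed by `(ℤ, ≤)` is isomorphic to a direct sum of interval modules. -/
theorem crawleyBoevey_int
    (k : Type) [Field k]
    (V : ℤ → Type) [∀ t, AddCommGroup (V t)] [∀ t, Module k (V t)]
    (ρ : ∀ s t : ℤ, s ≤ t → (V s →ₗ[k] V t))
    (hid : ∀ t : ℤ, ρ t t le_rfl = LinearMap.id)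
    (hcomp : ∀ r s t : ℤ, ∀ (hrs : r ≤ s) (hst : s ≤ t),
      (ρ s t hst).comp (ρ r s hrs) = ρ r t (hrs.trans hst))
    (hfd : ∀ t : ℤ, FiniteDimensional k (V t)) :
    ∃ (J : Type) (I : J → Set ℤ),
      (∀ j, (I j).Nonempty) ∧
      (∀ j, ∀ r s t : ℤ, r ∈ I j → t ∈ I j → r ≤ s → s ≤ t → s ∈ I j) ∧
      ∃ e : ∀ t : ℤ, V t ≃ₗ[k] ({j : J // t ∈ I j} →₀ k),
        ∀ (s t : ℤ) (h : s ≤ t) (v : V s),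
          e t (ρ s t h v) = intervalSumMap k I s t (e s v) := by
  classical
  refine ⟨CB.Jset k V ρ hcomp hfd, CB.Iset k V ρ hcomp hfd, ?_, ?_, ?_⟩
  · intro j
    exact ⟨CB.basept j.1.1.1 j.1.1.2, j.2.1⟩
  · intro j r s t hr ht hrs hst
    exact CB.memI_convex hr ht hrs hst
  · refine ⟨fun u => (Module.Basis.mk (CB.famF_indep hcomp hfd u)
      (CB.famF_span hcomp hid hfd u)).repr, ?_⟩
    intro s t h v
    set Bs := Module.Basis.mk (CB.famF_indep hcomp hfd s) (CB.famF_span hcomp hid hfd s)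
      with hBs
    set Bt := Module.Basis.mk (CB.famF_indep hcomp hfd t) (CB.famF_span hcomp hid hfd t)
      with hBt
    have key : (Bt.repr.toLinearMap ∘ₗ ρ s t h) =
        (intervalSumMap k (CB.Iset k V ρ hcomp hfd) s t) ∘ₗ Bs.repr.toLinearMap := by
      apply Module.Basis.ext Bs
      intro j
      simp only [LinearMap.comp_apply, LinearEquiv.coe_coe]
      rw [Module.Basis.repr_self]
      rw [show Bs j = CB.famF k V ρ hcomp hfd s j from by rw [hBs, Module.Basis.mk_apply]]
      rw [CB.famF_step hcomp hid hfd s t h j]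
      rw [intervalSumMap, Finsupp.lsum_single]
      by_cases hj : t ∈ CB.Iset k V ρ hcomp hfd j.1
      · rw [dif_pos hj, dif_pos hj, Finsupp.lsingle_apply]
        rw [show CB.famF k V ρ hcomp hfd t ⟨j.1, hj⟩ = Bt ⟨j.1, hj⟩ from by
          rw [hBt, Module.Basis.mk_apply]]
        exact Module.Basis.repr_self _ _
      · rw [dif_neg hj, dif_neg hj, map_zero, LinearMap.zero_apply]
    exact DFunLike.congr_fun key v
end

section
/- Interleaving of Vietoris–Rips and Čech complexes in Euclidean space: let n ≥ 1, let σ be a nonempty finite set of points in ℝⁿ (Euclidean space with the standard norm), and let r > 0. Then: (a) if the intersection ⋂_{x ∈ σ} B̄(x, r) of the closed balls of radius r centered at the points of σ is nonempty, then ‖x − y‖ ≤ 2r for all x, y ∈ σ; and (b) conversely, if ‖x − y‖ ≤ 2r for all x, y ∈ σ, then the intersection ⋂_{x ∈ σ} B̄(x, √2·r) of the closed balls of radius √2·r centered at the points of σ is nonempty. Consequently, for a finite point cloud X ⊂ ℝⁿ, every simplex of the Čech complex Č_r(X) is a simplex of the Vietoris–Rips complex V_r(X), and every simplex of V_r(X)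 is a simplex of Č_{√2 r}(X), giving the inclusions V_r(X) ⊆ Č_{√2 r}(X) ⊆ V_{√2 r}(X). -/
open Metric

section Jung

variable {E : Type*} [NormedAddCommGroup E] [InnerProductSpace ℝ E] [ProperSpace E]

local notation "⟪" x ", " y "⟫" => @inner ℝ _ _ x y

/-- Weak Jung theorem: a finite set of diameter at most `2r` in a proper real inner
product space is contained in a closed ball of radius `√2 · r`. -/
theorem weak_jung (σ : Finset E) (hσ : σ.Nonempty) (r : ℝ)
    (h : ∀ x ∈ σ, ∀ y ∈ σ, ‖x - y‖ ≤ 2 * r) :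
    ∃ c : E, ∀ x ∈ σ, ‖x - c‖ ≤ Real.sqrt 2 * r := by
  -- the "max distance" function
  set f : E → ℝ := fun c => σ.sup' hσ (fun x => ‖x - c‖) with hf
  have hle : ∀ c, ∀ x ∈ σ, ‖x - c‖ ≤ f c := by
    intro c x hx
    rw [hf]
    exact Finset.le_sup' (fun y => ‖y - c‖) hx
  have hlip : LipschitzWith 1 f := by
    refine LipschitzWith.of_dist_le_mul fun c d => ?_
    rw [NNReal.coe_one, one_mul, Real.dist_eq, abs_sub_le_iff]
    constructor
    · refine sub_le_iff_le_add.2 (Finset.sup'_le _ _ fun x hx => ?_)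
      calc ‖x - c‖ ≤ ‖x - d‖ + ‖d - c‖ := norm_sub_le_norm_sub_add_norm_sub x d c
        _ ≤ f d + dist c d := by
            rw [dist_comm, dist_eq_norm]; exact add_le_add (hle d x hx) le_rfl
        _ ≤ dist c d + f d := by linarith
    · refine sub_le_iff_le_add.2 (Finset.sup'_le _ _ fun x hx => ?_)
      calc ‖x - d‖ ≤ ‖x - c‖ + ‖c - d‖ := norm_sub_le_norm_sub_add_norm_sub x c d
        _ ≤ f c + dist c d := by
            rw [dist_eq_norm]; exact add_le_add (hle c x hx) le_rfl
        _ ≤ dist c d + f c := by linarith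
  obtain ⟨x₀, hx₀⟩ := id hσ
  -- a minimizer of f on a big closed ball
  have hK : IsCompact (closedBall x₀ (f x₀)) := isCompact_closedBall _ _
  have hx₀K : x₀ ∈ closedBall x₀ (f x₀) := by
    simp [mem_closedBall, dist_self]
    calc (0:ℝ) ≤ ‖x₀ - x₀‖ := norm_nonneg _
      _ ≤ f x₀ := hle x₀ x₀ hx₀
  obtain ⟨c, hcK, hc⟩ := hK.exists_isMinOn ⟨x₀, hx₀K⟩ hlip.continuous.continuousOn
  have hglobal : ∀ d, f c ≤ f d := by
    intro d
    by_cases hd : d ∈ closedBall x₀ (f x₀)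
    · exact hc hd
    · have h1 : f x₀ < dist d x₀ := by
        simpa [mem_closedBall] using hd
      calc f c ≤ f x₀ := hc hx₀K
        _ ≤ dist d x₀ := le_of_lt h1
        _ = ‖x₀ - d‖ := by rw [dist_comm, dist_eq_norm]
        _ ≤ f d := hle d x₀ hx₀
  set R : ℝ := f c with hR
  have hR0 : 0 ≤ R := le_trans (norm_nonneg _) (hle c x₀ hx₀)
  -- it suffices to show R ≤ √2 r
  refine ⟨c, fun x hx => le_trans (hle c x hx) ?_⟩
  by_contra hcon
  push_neg at hcon
  have hsqrt2 : (0:ℝ) ≤ Real.sqrt 2 := Real.sqrt_nonneg 2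
  have hr0 : 0 ≤ r := by
    have := h x₀ hx₀ x₀ hx₀; nlinarith [norm_nonneg (x₀ - x₀)]
  have hR2 : 2 * r ^ 2 < R ^ 2 := by
    have h2 : Real.sqrt 2 * r < R := hcon
    nlinarith [Real.sq_sqrt (by norm_num : (2:ℝ) ≥ 0), mul_nonneg hsqrt2 hr0]
  -- the set of farthest points
  set T : Finset E := σ.filter (fun x => ‖x - c‖ = R) with hT
  have hTne : T.Nonempty := by
    obtain ⟨x, hxσ, hxe⟩ := Finset.exists_mem_eq_sup' hσ (fun x => ‖x - c‖)
    exact ⟨x, Finset.mem_filter.2 ⟨hxσ, hxe.symm⟩⟩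
  have hTR : ∀ x ∈ T, ‖x - c‖ = R := fun x hx => (Finset.mem_filter.1 hx).2
  have hTσ : ∀ x ∈ T, x ∈ σ := fun x hx => (Finset.mem_filter.1 hx).1
  -- positive inner products among farthest points
  have hpos : ∀ x ∈ T, ∀ y ∈ T, 0 < ⟪x - c, y - c⟫ := by
    intro x hx y hy
    have hxy : ‖x - y‖ ≤ 2 * r := h x (hTσ x hx) y (hTσ y hy)
    have hexp : ‖(x - c) - (y - c)‖ ^ 2
        = ‖x - c‖ ^ 2 - 2 * ⟪x - c, y - c⟫ + ‖y - c‖ ^ 2 := by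
      rw [@norm_sub_sq_real]
    have hxyc : (x - c) - (y - c) = x - y := by abel
    rw [hxyc, hTR x hx, hTR y hy] at hexp
    nlinarith [norm_nonneg (x - y), sq_nonneg (‖x - y‖)]
  set v : E := T.sum (fun x => x - c) with hv
  have hvpos : ∀ x ∈ T, 0 < ⟪x - c, v⟫ := by
    intro x hx
    rw [hv, inner_sum]
    exact Finset.sum_pos (fun y hy => hpos x hx y hy) hTne
  have hvne : v ≠ 0 := by
    obtain ⟨x, hx⟩ := hTne
    intro h0
    have := hvpos x hx
    rw [h0, inner_zero_right] at this
    exact lt_irrefl 0 this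
  have hvn : 0 < ‖v‖ := norm_pos_iff.2 hvne
  -- the minimum inner product among the farthest points
  set δ : ℝ := T.inf' hTne (fun x => ⟪x - c, v⟫) with hδ
  have hδpos : 0 < δ := by
    obtain ⟨x, hx, hxe⟩ := Finset.exists_mem_eq_inf' hTne (fun x => ⟪x - c, v⟫)
    rw [hδ, hxe]; exact hvpos x hx
  have hδle : ∀ x ∈ T, δ ≤ ⟪x - c, v⟫ := fun x hx => Finset.inf'_le _ hx
  -- margin for non-farthest points
  set S : Finset E := σ.filter (fun x => ‖x - c‖ ≠ R) with hS
  set ε₂ : ℝ := if hs : S.Nonempty then S.inf' hs (fun x => (R - ‖x - c‖) / ‖v‖) else 1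
    with hε₂
  have hε₂pos : 0 < ε₂ := by
    rw [hε₂]
    split
    · rename_i hs
      obtain ⟨x, hx, hxe⟩ := Finset.exists_mem_eq_inf' hs (fun x => (R - ‖x - c‖) / ‖v‖)
      rw [hxe]
      have hxσ : x ∈ σ := (Finset.mem_filter.1 hx).1
      have hxne : ‖x - c‖ ≠ R := (Finset.mem_filter.1 hx).2
      have : ‖x - c‖ < R := lt_of_le_of_ne (hle c x hxσ) hxne
      exact div_pos (by linarith) hvn
    · norm_num
  have hε₂le : ∀ x ∈ S, ε₂ ≤ (R - ‖x - c‖) / ‖v‖ := by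
    intro x hx
    have hs : S.Nonempty := ⟨x, hx⟩
    rw [hε₂, dif_pos hs]
    exact Finset.inf'_le _ hx
  set ε : ℝ := min (δ / ‖v‖ ^ 2) ε₂ / 2 with hε
  have hεpos : 0 < ε := by
    have h1 : 0 < δ / ‖v‖ ^ 2 := div_pos hδpos (by positivity)
    rw [hε]; positivity
  have hε1 : ε < δ / ‖v‖ ^ 2 := by
    have h1 : 0 < δ / ‖v‖ ^ 2 := div_pos hδpos (by positivity)
    rw [hε]
    calc min (δ / ‖v‖ ^ 2) ε₂ / 2 < min (δ / ‖v‖ ^ 2) ε₂ := by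
          have := lt_min h1 hε₂pos; linarith
      _ ≤ δ / ‖v‖ ^ 2 := min_le_left _ _
  have hε2 : ε < ε₂ := by
    have h1 : 0 < δ / ‖v‖ ^ 2 := div_pos hδpos (by positivity)
    rw [hε]
    calc min (δ / ‖v‖ ^ 2) ε₂ / 2 < min (δ / ‖v‖ ^ 2) ε₂ := by
          have := lt_min h1 hε₂pos; linarith
      _ ≤ ε₂ := min_le_right _ _
  -- every point is at distance < R from the shifted center
  have hkey : ∀ x ∈ σ, ‖x - (c + ε • v)‖ < R := by
    intro x hx
    by_cases hxT : ‖x - c‖ = R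
    · -- farthest point: use inner product
      have hxTm : x ∈ T := Finset.mem_filter.2 ⟨hx, hxT⟩
      have hiv : δ ≤ ⟪x - c, v⟫ := hδle x hxTm
      have hexp : ‖(x - c) - ε • v‖ ^ 2
          = ‖x - c‖ ^ 2 - 2 * (ε * ⟪x - c, v⟫) + ε ^ 2 * ‖v‖ ^ 2 := by
        rw [@norm_sub_sq_real, real_inner_smul_right, norm_smul]
        simp [Real.norm_eq_abs, mul_pow, sq_abs]
      have hrw : x - (c + ε • v) = (x - c) - ε • v := by abel
      have hlt : ‖(x - c) - ε • v‖ ^ 2 < R ^ 2 := by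
        rw [hexp, hxT]
        have hεv : ε * ‖v‖ ^ 2 < δ := by
          rw [div_eq_mul_inv] at hε1
          calc ε * ‖v‖ ^ 2 < δ / ‖v‖ ^ 2 * ‖v‖ ^ 2 := by
                apply mul_lt_mul_of_pos_right _ (by positivity)
                rw [div_eq_mul_inv]; exact hε1
            _ = δ := by field_simp
        nlinarith
      rw [hrw]
      have h1 : ‖(x - c) - ε • v‖ < R := by
        nlinarith [norm_nonneg ((x - c) - ε • v)]
      exact h1
    · -- non-farthest point: use triangle inequality
      have hxS : x ∈ S := Finset.mem_filter.2 ⟨hx, hxT⟩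
      have hεb : ε₂ ≤ (R - ‖x - c‖) / ‖v‖ := hε₂le x hxS
      have hεv : ε * ‖v‖ < R - ‖x - c‖ := by
        calc ε * ‖v‖ < ε₂ * ‖v‖ := mul_lt_mul_of_pos_right hε2 hvn
          _ ≤ (R - ‖x - c‖) / ‖v‖ * ‖v‖ := mul_le_mul_of_nonneg_right hεb hvn.le
          _ = R - ‖x - c‖ := by field_simp
      calc ‖x - (c + ε • v)‖ = ‖(x - c) - ε • v‖ := by rw [show x - (c + ε • v) = (x - c) - ε • v from by abel]
        _ ≤ ‖x - c‖ + ‖ε • v‖ := norm_sub_le _ _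
        _ = ‖x - c‖ + ε * ‖v‖ := by rw [norm_smul, Real.norm_eq_abs, abs_of_pos hεpos]
        _ < R := by linarith
  -- contradiction with minimality
  have hfl : f (c + ε • v) < R := by
    rw [hf]
    exact Finset.sup'_lt_iff hσ |>.2 (fun x hx => hkey x hx)
  exact absurd (hglobal (c + ε • v)) (not_le.2 hfl)

end Jung

/-- Interleaving of Vietoris–Rips and Čech complexes in Euclidean space:
(a) a Čech simplex at radius `r` is a Rips simplex at radius `r`, and
(b) a Rips simplex at radius `r` is a Čech simplex at radius `√2 · r`. -/
theorem cech_rips_interleaving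
    (n : ℕ) (hn : 1 ≤ n)
    (σ : Finset (EuclideanSpace ℝ (Fin n))) (hσ : σ.Nonempty)
    (r : ℝ) (hr : 0 < r) :
    ((⋂ x ∈ σ, closedBall x r).Nonempty →
      ∀ x ∈ σ, ∀ y ∈ σ, ‖x - y‖ ≤ 2 * r) ∧
    ((∀ x ∈ σ, ∀ y ∈ σ, ‖x - y‖ ≤ 2 * r) →
      (⋂ x ∈ σ, closedBall x (Real.sqrt 2 * r)).Nonempty) := by
  constructor
  · rintro ⟨c, hc⟩ x hx y hy
    simp only [Set.mem_iInter, mem_closedBall] at hc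
    have h1 : dist c x ≤ r := hc x hx
    have h2 : dist c y ≤ r := hc y hy
    calc ‖x - y‖ = dist x y := (dist_eq_norm x y).symm
      _ ≤ dist x c + dist c y := dist_triangle x c y
      _ ≤ r + r := add_le_add (by rwa [dist_comm]) h2
      _ = 2 * r := by ring
  · intro h
    obtain ⟨c, hc⟩ := weak_jung σ hσ r h
    refine ⟨c, ?_⟩
    simp only [Set.mem_iInter, mem_closedBall]
    intro x hx
    rw [dist_comm, dist_eq_norm]
    exact hc x hx
end

section
/- The zeroth homology pre-cosheaf satisfies the cosheaf axiom on two-element covers (van Kampen for path components): let k be a field, X a topological space, and A, B open subsets with A ∪ B = X. For a topological space Z, let k[π₀ Z] denote the free k-vector space on the set of path components of Z, and note that any continuous map (in particular any inclusion) induces a k-linear map between these free vector spaces. Then the sequence k[π₀(A ∩ B)] → k[π₀ A] × k[π₀ B] → k[π₀ X] → 0 is exact, where the first map sends a path component c of A ∩ B to (the class of c in A, −(the class of c in B)), and the second map sends (a, b) to the image of a in k[π₀ X] plus the image of b in k[π₀ X]. That is, the second map is surjective and its kernel equals the image of the first map. -/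
open scoped Classical

/-- The map on path components induced by a continuous map. -/
def pi0Map {X Y : Type} [TopologicalSpace X] [TopologicalSpace Y] (f : C(X, Y)) :
    ZerothHomotopy X → ZerothHomotopy Y :=
  Quotient.map f (fun _ _ h => Nonempty.map (fun γ => γ.map f.continuous) h)

/-- The linear map `k[π₀ Z] → k[π₀ Z']` between free vector spaces induced by a
continuous map `Z → Z'`. -/
noncomputable def pi0LinearMap (k : Type) [Field k]
    {X Y : Type} [TopologicalSpace X] [TopologicalSpace Y] (f : C(X, Y)) :
    (ZerothHomotopy X →₀ k) →ₗ[k] (ZerothHomotopy Y →₀ k) :=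
  Finsupp.lmapDomain k k (pi0Map f)

namespace MV
open unitInterval

lemma joinedIn_of_path {X : Type} [TopologicalSpace X] {x y : X} (γ : Path x y) {A : Set X}
    {a b : I} (hab : (a : ℝ) ≤ b) (h : ∀ t : I, (a:ℝ) ≤ t → (t:ℝ) ≤ b → γ t ∈ A) :
    JoinedIn A (γ a) (γ b) := by
  have key : ∀ t : ℝ, t ∈ Set.Icc (0:ℝ) 1 →
      γ.extend ((a:ℝ) + t * ((b:ℝ) - a)) ∈ A := by
    intro t ht
    have h1 : (a:ℝ) + t * ((b:ℝ) - a) ∈ Set.Icc (a:ℝ) b := by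
      constructor
      · nlinarith [ht.1, ht.2]
      · nlinarith [ht.1, ht.2]
    have h2 : (a:ℝ) + t * ((b:ℝ) - a) ∈ (Set.Icc 0 1 : Set ℝ) :=
      ⟨le_trans a.2.1 h1.1, le_trans h1.2 b.2.2⟩
    rw [γ.extend_apply h2]
    exact h ⟨_, h2⟩ h1.1 h1.2
  apply JoinedIn.ofLine (f := fun t : ℝ => γ.extend ((a:ℝ) + t * ((b:ℝ) - a)))
  · exact (γ.continuous_extend.comp (by continuity)).continuousOn
  · simp [γ.extend_extends' a]
  · have : (a:ℝ) + 1 * ((b:ℝ) - a) = b := by ring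
    rw [this, γ.extend_extends' b]
  · rintro _ ⟨t, ht, rfl⟩
    exact key t ht

lemma dist_between (t u v : I) (h1 : min (t:ℝ) u ≤ v) (h2 : (v:ℝ) ≤ max (t:ℝ) u) :
    dist v t ≤ dist u t := by
  rw [Subtype.dist_eq, Subtype.dist_eq, Real.dist_eq, Real.dist_eq]
  rcases le_total (t:ℝ) u with h | h
  · rw [min_eq_left h] at h1
    rw [max_eq_right h] at h2
    rw [abs_of_nonneg (by linarith), abs_of_nonneg (by linarith)]
    linarith
  · rw [min_eq_right h] at h1
    rw [max_eq_left h] at h2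
    rw [abs_of_nonpos (by linarith), abs_of_nonpos (by linarith)]
    linarith

variable (k : Type) [Field k] (X : Type) [TopologicalSpace X] (A B : Set X)

noncomputable def psi :
    (ZerothHomotopy ↥(A ∩ B) →₀ k) →ₗ[k] (ZerothHomotopy A →₀ k) × (ZerothHomotopy B →₀ k) :=
  LinearMap.prod
    (pi0LinearMap k ⟨Set.inclusion Set.inter_subset_left,
      continuous_inclusion Set.inter_subset_left⟩)
    (-(pi0LinearMap k ⟨Set.inclusion Set.inter_subset_right,
      continuous_inclusion Set.inter_subset_right⟩))

noncomputable def phi :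
    ((ZerothHomotopy A →₀ k) × (ZerothHomotopy B →₀ k)) →ₗ[k] (ZerothHomotopy X →₀ k) :=
  (pi0LinearMap k ⟨Subtype.val, continuous_subtype_val⟩ :
      (ZerothHomotopy A →₀ k) →ₗ[k] (ZerothHomotopy X →₀ k)).comp
        (LinearMap.fst k (ZerothHomotopy A →₀ k) (ZerothHomotopy B →₀ k)) +
   (pi0LinearMap k ⟨Subtype.val, continuous_subtype_val⟩ :
      (ZerothHomotopy B →₀ k) →ₗ[k] (ZerothHomotopy X →₀ k)).comp
        (LinearMap.snd k (ZerothHomotopy A →₀ k) (ZerothHomotopy B →₀ k))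

noncomputable def sbar (hAB : A ∪ B = Set.univ) :
    X → ((ZerothHomotopy A →₀ k) × (ZerothHomotopy B →₀ k)) ⧸ LinearMap.range (psi k X A B) :=
  fun x =>
    if h : x ∈ A then
      Submodule.Quotient.mk (Finsupp.single (Quotient.mk (pathSetoid A) ⟨x, h⟩) 1, 0)
    else
      Submodule.Quotient.mk (0, Finsupp.single
        (Quotient.mk (pathSetoid B)
          ⟨x, (Set.eq_univ_iff_forall.mp hAB x).resolve_left h⟩) 1)

variable {X A B}

lemma sbar_of_memA (hAB : A ∪ B = Set.univ) {x : X} (h : x ∈ A) :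
    sbar k X A B hAB x =
      Submodule.Quotient.mk (Finsupp.single (Quotient.mk (pathSetoid A) ⟨x, h⟩) 1, 0) :=
  dif_pos h

lemma psi_single (c : ZerothHomotopy ↥(A ∩ B)) :
    psi k X A B (Finsupp.single c 1) =
      (Finsupp.single (pi0Map ⟨Set.inclusion Set.inter_subset_left,
          continuous_inclusion Set.inter_subset_left⟩ c) 1,
       - Finsupp.single (pi0Map ⟨Set.inclusion Set.inter_subset_right,
          continuous_inclusion Set.inter_subset_right⟩ c) 1) := by
  simp [psi, pi0LinearMap, Finsupp.mapDomain_single]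

lemma sbar_of_memB (hAB : A ∪ B = Set.univ) {x : X} (h : x ∈ B) :
    sbar k X A B hAB x =
      Submodule.Quotient.mk (0, Finsupp.single (Quotient.mk (pathSetoid B) ⟨x, h⟩) 1) := by
  by_cases hA : x ∈ A
  · rw [sbar_of_memA k hAB hA]
    apply (Submodule.Quotient.eq _).mpr
    refine ⟨Finsupp.single (Quotient.mk (pathSetoid ↥(A ∩ B)) ⟨x, ⟨hA, h⟩⟩) 1, ?_⟩
    erw [psi_single]
    erw [Prod.mk_sub_mk, sub_zero, zero_sub]
    rfl
  · unfold sbar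
    rw [dif_neg hA]
    rfl

lemma sbar_eq_of_joinedInA (hAB : A ∪ B = Set.univ) {x y : X} (h : JoinedIn A x y) :
    sbar k X A B hAB x = sbar k X A B hAB y := by
  rw [sbar_of_memA k hAB h.source_mem, sbar_of_memA k hAB h.target_mem]
  have : Quotient.mk (pathSetoid A) ⟨x, h.source_mem⟩ =
      Quotient.mk (pathSetoid A) ⟨y, h.target_mem⟩ := Quotient.sound h.joined_subtype
  rw [this]

lemma sbar_eq_of_joinedInB (hAB : A ∪ B = Set.univ) {x y : X} (h : JoinedIn B x y) :
    sbar k X A B hAB x = sbar k X A B hAB y := by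
  rw [sbar_of_memB k hAB h.source_mem, sbar_of_memB k hAB h.target_mem]
  have : Quotient.mk (pathSetoid B) ⟨x, h.source_mem⟩ =
      Quotient.mk (pathSetoid B) ⟨y, h.target_mem⟩ := Quotient.sound h.joined_subtype
  rw [this]

lemma sbar_joined (hA : IsOpen A) (hB : IsOpen B) (hAB : A ∪ B = Set.univ)
    {x y : X} (hxy : Joined x y) : sbar k X A B hAB x = sbar k X A B hAB y := by
  obtain ⟨γ⟩ := hxy
  haveI : PreconnectedSpace I := Subtype.preconnectedSpace isPreconnected_Icc
  have seg : ∀ (W : Set X), W = A ∨ W = B → ∀ t u : I,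
      (∀ v : I, min (t:ℝ) u ≤ v → (v:ℝ) ≤ max (t:ℝ) u → γ v ∈ W) →
      sbar k X A B hAB (γ t) = sbar k X A B hAB (γ u) := by
    intro W hW t u hseg
    have key : JoinedIn W (γ t) (γ u) ∨ JoinedIn W (γ u) (γ t) := by
      rcases le_total (t:ℝ) (u:ℝ) with h | h
      · exact Or.inl (joinedIn_of_path γ h (fun v h1 h2 =>
          hseg v (le_trans (min_le_left _ _) h1) (h2.trans (le_max_right _ _))))
      · exact Or.inr (joinedIn_of_path γ h (fun v h1 h2 =>
          hseg v (le_trans (min_le_right _ _) h1) (h2.trans (le_max_left _ _))))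
    have key2 : JoinedIn W (γ t) (γ u) := key.elim id JoinedIn.symm
    rcases hW with rfl | rfl
    · exact sbar_eq_of_joinedInA k hAB key2
    · exact sbar_eq_of_joinedInB k hAB key2
  set T : Set I := {t | sbar k X A B hAB (γ t) = sbar k X A B hAB x} with hT
  have hTuniv : T = Set.univ := by
    apply IsClopen.eq_univ
    · constructor
      · -- closed
        apply isClosed_of_closure_subset
        intro t ht
        rcases (Set.mem_union _ _ _).mp
            (Set.eq_univ_iff_forall.mp hAB (γ t) : γ t ∈ A ∪ B) with hmem | hmem
        · obtain ⟨ε, hε, hball⟩ := Metric.isOpen_iff.mp (hA.preimage γ.continuous) t hmem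
          obtain ⟨u, huT, hdu⟩ := Metric.mem_closure_iff.mp ht ε hε
          have h5 := seg A (Or.inl rfl) t u (fun v h1 h2 =>
            hball (Metric.mem_ball.mpr ((dist_between t u v h1 h2).trans_lt
              (by rwa [dist_comm] at hdu))))
          exact h5.trans huT
        · obtain ⟨ε, hε, hball⟩ := Metric.isOpen_iff.mp (hB.preimage γ.continuous) t hmem
          obtain ⟨u, huT, hdu⟩ := Metric.mem_closure_iff.mp ht ε hε
          have h5 := seg B (Or.inr rfl) t u (fun v h1 h2 =>
            hball (Metric.mem_ball.mpr ((dist_between t u v h1 h2).trans_lt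
              (by rwa [dist_comm] at hdu))))
          exact h5.trans huT
      · -- open
        rw [Metric.isOpen_iff]
        intro t ht
        rcases (Set.mem_union _ _ _).mp
            (Set.eq_univ_iff_forall.mp hAB (γ t) : γ t ∈ A ∪ B) with hmem | hmem
        · obtain ⟨ε, hε, hball⟩ := Metric.isOpen_iff.mp (hA.preimage γ.continuous) t hmem
          refine ⟨ε, hε, fun u hu => ?_⟩
          have h5 := seg A (Or.inl rfl) t u (fun v h1 h2 =>
            hball (Metric.mem_ball.mpr ((dist_between t u v h1 h2).trans_lt
              (Metric.mem_ball.mp hu))))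
          exact h5.symm.trans ht
        · obtain ⟨ε, hε, hball⟩ := Metric.isOpen_iff.mp (hB.preimage γ.continuous) t hmem
          refine ⟨ε, hε, fun u hu => ?_⟩
          have h5 := seg B (Or.inr rfl) t u (fun v h1 h2 =>
            hball (Metric.mem_ball.mpr ((dist_between t u v h1 h2).trans_lt
              (Metric.mem_ball.mp hu))))
          exact h5.symm.trans ht
    · exact ⟨0, by simp only [hT, Set.mem_setOf_eq, γ.source]⟩
  have h1 : (1 : I) ∈ T := hTuniv ▸ Set.mem_univ _
  have := h1
  simp only [hT, Set.mem_setOf_eq, γ.target] at this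
  exact this.symm


noncomputable def slin (hA : IsOpen A) (hB : IsOpen B) (hAB : A ∪ B = Set.univ) :
    (ZerothHomotopy X →₀ k) →ₗ[k]
      (((ZerothHomotopy A →₀ k) × (ZerothHomotopy B →₀ k)) ⧸ LinearMap.range (psi k X A B)) :=
  Finsupp.lift _ k _ (Quotient.lift (sbar k X A B hAB)
    (fun _ _ h => sbar_joined k hA hB hAB h))

lemma slin_comp (hA : IsOpen A) (hB : IsOpen B) (hAB : A ∪ B = Set.univ) :
    (slin k hA hB hAB).comp (phi k X A B) = (LinearMap.range (psi k X A B)).mkQ := by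
  ext a
  · induction a using Quotient.ind with
    | _ x =>
      simp only [LinearMap.coe_comp, Function.comp_apply, LinearMap.inl_apply,
        Finsupp.lsingle_apply, phi, pi0LinearMap, LinearMap.add_apply, LinearMap.fst_apply,
        LinearMap.snd_apply, Finsupp.lmapDomain_apply, Finsupp.mapDomain_single, map_zero,
        Finsupp.mapDomain_zero, add_zero, slin, Finsupp.lift_apply, pi0Map, Quotient.map_mk,
        Finsupp.sum_single_index, one_smul, zero_smul, Quotient.lift_mk, ContinuousMap.coe_mk,
        Submodule.mkQ_apply]
      erw [Finsupp.lsingle_apply, Finsupp.lmapDomain_apply, Finsupp.mapDomain_single, Finsupp.lift_apply, Finsupp.sum_single_index (by simp), one_smul]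
      exact sbar_of_memA k hAB x.2
  · induction a using Quotient.ind with
    | _ x =>
      simp only [LinearMap.coe_comp, Function.comp_apply, LinearMap.inr_apply,
        Finsupp.lsingle_apply, phi, pi0LinearMap, LinearMap.add_apply, LinearMap.fst_apply,
        LinearMap.snd_apply, Finsupp.lmapDomain_apply, Finsupp.mapDomain_single, map_zero,
        Finsupp.mapDomain_zero, zero_add, slin, Finsupp.lift_apply, pi0Map, Quotient.map_mk,
        Finsupp.sum_single_index, one_smul, zero_smul, Quotient.lift_mk, ContinuousMap.coe_mk,
        Submodule.mkQ_apply]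
      erw [Finsupp.lsingle_apply, Finsupp.lmapDomain_apply, Finsupp.mapDomain_single, Finsupp.lift_apply, Finsupp.sum_single_index (by simp), one_smul]
      exact sbar_of_memB k hAB x.2

lemma phi_comp_psi : (phi k X A B).comp (psi k X A B) = 0 := by
  ext c
  induction c using Quotient.ind with
  | _ x =>
    simp only [LinearMap.coe_comp, Function.comp_apply, Finsupp.lsingle_apply, psi_single,
      phi, pi0LinearMap, LinearMap.add_apply, LinearMap.fst_apply, LinearMap.snd_apply,
      Finsupp.lmapDomain_apply, Finsupp.mapDomain_single, pi0Map, Quotient.map_mk,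
      ContinuousMap.coe_mk, LinearMap.zero_apply, map_neg]
    erw [Finsupp.lsingle_apply, psi_single]
    erw [Finsupp.lmapDomain_apply, Finsupp.mapDomain_single]
    dsimp only
    erw [map_neg, Finsupp.lmapDomain_apply, Finsupp.mapDomain_single]
    exact DFunLike.congr_fun (add_neg_cancel _) _

end MV

/-- Mayer–Vietoris / van Kampen exactness for `H₀` with coefficients in a field
`k`: for open sets `A, B` covering `X`, the sequence
`k[π₀(A ∩ B)] → k[π₀ A] × k[π₀ B] → k[π₀ X] → 0` is exact, where the first map
is `c ↦ (c|_A, −c|_B)` and the second is `(a, b) ↦ a|_X + b|_X`. -/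
theorem pi0_mayer_vietoris_exact
    (k : Type) [Field k]
    (X : Type) [TopologicalSpace X] (A B : Set X)
    (hA : IsOpen A) (hB : IsOpen B) (hAB : A ∪ B = Set.univ) :
    Function.Surjective
      ((pi0LinearMap k ⟨Subtype.val, continuous_subtype_val⟩ :
          (ZerothHomotopy A →₀ k) →ₗ[k] (ZerothHomotopy X →₀ k)).comp
            (LinearMap.fst k (ZerothHomotopy A →₀ k) (ZerothHomotopy B →₀ k)) +
       (pi0LinearMap k ⟨Subtype.val, continuous_subtype_val⟩ :
          (ZerothHomotopy B →₀ k) →ₗ[k] (ZerothHomotopy X →₀ k)).comp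
            (LinearMap.snd k (ZerothHomotopy A →₀ k) (ZerothHomotopy B →₀ k))) ∧
    LinearMap.ker
      ((pi0LinearMap k ⟨Subtype.val, continuous_subtype_val⟩ :
          (ZerothHomotopy A →₀ k) →ₗ[k] (ZerothHomotopy X →₀ k)).comp
            (LinearMap.fst k (ZerothHomotopy A →₀ k) (ZerothHomotopy B →₀ k)) +
       (pi0LinearMap k ⟨Subtype.val, continuous_subtype_val⟩ :
          (ZerothHomotopy B →₀ k) →ₗ[k] (ZerothHomotopy X →₀ k)).comp
            (LinearMap.snd k (ZerothHomotopy A →₀ k) (ZerothHomotopy B →₀ k))) =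
    LinearMap.range
      (LinearMap.prod
        (pi0LinearMap k ⟨Set.inclusion Set.inter_subset_left,
          continuous_inclusion Set.inter_subset_left⟩ :
          (ZerothHomotopy ↥(A ∩ B) →₀ k) →ₗ[k] (ZerothHomotopy A →₀ k))
        (-(pi0LinearMap k ⟨Set.inclusion Set.inter_subset_right,
          continuous_inclusion Set.inter_subset_right⟩ :
          (ZerothHomotopy ↥(A ∩ B) →₀ k) →ₗ[k] (ZerothHomotopy B →₀ k)))) := by
  constructor
  · show Function.Surjective (MV.phi k X A B)
    intro f
    induction f using Finsupp.induction_linear with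
    | zero => exact ⟨0, map_zero _⟩
    | add f g hf hg =>
        obtain ⟨u, hu⟩ := hf
        obtain ⟨v, hv⟩ := hg
        exact ⟨u + v, by rw [map_add, hu, hv]⟩
    | single P c =>
        induction P using Quotient.ind with
        | _ x =>
          rcases (Set.mem_union _ _ _).mp (Set.eq_univ_iff_forall.mp hAB x) with h | h
          · refine ⟨(Finsupp.single (Quotient.mk (pathSetoid A) ⟨x, h⟩) c, 0), ?_⟩
            simp [MV.phi, pi0LinearMap, pi0Map, Finsupp.mapDomain_single]
            erw [Finsupp.lmapDomain_apply, Finsupp.mapDomain_single]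
            rfl
          · refine ⟨(0, Finsupp.single (Quotient.mk (pathSetoid B) ⟨x, h⟩) c), ?_⟩
            simp [MV.phi, pi0LinearMap, pi0Map, Finsupp.mapDomain_single]
            erw [Finsupp.lmapDomain_apply, Finsupp.mapDomain_single]
            rfl
  · show LinearMap.ker (MV.phi k X A B) = LinearMap.range (MV.psi k X A B)
    apply le_antisymm
    · intro v hv
      rw [LinearMap.mem_ker] at hv
      have h0 : (LinearMap.range (MV.psi k X A B)).mkQ v = 0 := by
        rw [← MV.slin_comp k hA hB hAB, LinearMap.comp_apply, hv, map_zero]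
      rwa [Submodule.mkQ_apply, Submodule.Quotient.mk_eq_zero] at h0
    · rintro v ⟨c, rfl⟩
      rw [LinearMap.mem_ker, ← LinearMap.comp_apply, MV.phi_comp_psi]
      rfl
end

section
/- Tarski–Seidenberg theorem: the image of a semialgebraic set under a coordinate projection is semialgebraic. Precisely: let n ≥ 0 and let A ⊆ ℝ^{n+1} be a semialgebraic set, i.e., a finite union of finite intersections of sets of the form {x ∈ ℝ^{n+1} : p(x) = 0} or {x ∈ ℝ^{n+1} : p(x) > 0} where p is a real polynomial in n+1 variables. Let π : ℝ^{n+1} → ℝⁿ be the projection onto the first n coordinates. Then π(A) is a semialgebraic subset of ℝⁿ, i.e., a finite union of finite intersections of sets of the form {x ∈ ℝⁿ : q(x) = 0} or {x ∈ ℝⁿ : q(x) > 0} for real polynomials q in n variables. -/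
/-- A subset of `ℝⁿ` is semialgebraic if it is a finite union of finite
intersections of sets of the form `{x : p x = 0}` or `{x : p x > 0}` for real
polynomials `p` in `n` variables. -/
def IsSemialgebraic {n : ℕ} (S : Set (Fin n → ℝ)) : Prop :=
  ∃ (p q : ℕ) (f : Fin p → Fin q → MvPolynomial (Fin n) ℝ)
    (c : Fin p → Fin q → Bool),
    S = ⋃ i : Fin p, ⋂ j : Fin q,
      {x : Fin n → ℝ |
        if c i j then MvPolynomial.eval x (f i j) = 0
        else 0 < MvPolynomial.eval x (f i j)}

namespace TS

open MvPolynomial Set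

abbrev Cond (n : ℕ) := MvPolynomial (Fin n) ℝ × Bool

def condSet {n : ℕ} (c : Cond n) : Set (Fin n → ℝ) :=
  if c.2 then {x | MvPolynomial.eval x c.1 = 0} else {x | 0 < MvPolynomial.eval x c.1}

def cellSet {n : ℕ} (L : List (Cond n)) : Set (Fin n → ℝ) := {x | ∀ c ∈ L, x ∈ condSet c}

def saSet {n : ℕ} (LL : List (List (Cond n))) : Set (Fin n → ℝ) := {x | ∃ L ∈ LL, x ∈ cellSet L}

def SA {n : ℕ} (S : Set (Fin n → ℝ)) : Prop := ∃ LL, S = saSet LL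

lemma mem_condSet {n : ℕ} (c : Cond n) (x : Fin n → ℝ) :
    x ∈ condSet c ↔ (if c.2 then MvPolynomial.eval x c.1 = 0 else 0 < MvPolynomial.eval x c.1) := by
  rcases c with ⟨e, b⟩; cases b <;> simp [condSet]

private lemma le_foldr_max (l : List ℕ) (a : ℕ) (ha : a ∈ l) : a ≤ l.foldr max 0 := by
  induction l with
  | nil => simp at ha
  | cons b t ih =>
      rcases List.mem_cons.1 ha with h | h
      · subst h; exact le_max_left _ _
      · exact le_trans (ih h) (le_max_right _ _)

lemma isSemialgebraic_iff_SA {n : ℕ} (S : Set (Fin n → ℝ)) :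
    IsSemialgebraic S ↔ SA S := by
  constructor
  · rintro ⟨p, q, f, c, rfl⟩
    refine ⟨(List.finRange p).map fun i => (List.finRange q).map fun j => (f i j, c i j), ?_⟩
    ext x
    simp only [mem_iUnion, mem_iInter, saSet, cellSet, mem_condSet, List.mem_map,
      List.mem_finRange, mem_setOf_eq]
    constructor
    · rintro ⟨i, hi⟩
      refine ⟨(List.finRange q).map fun j => (f i j, c i j), ⟨i, ⟨trivial, rfl⟩⟩, ?_⟩
      rintro cc hcc
      rcases List.mem_map.1 hcc with ⟨j, _, rfl⟩
      exact hi j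
    · rintro ⟨L, ⟨i, hiL⟩, hL⟩
      refine ⟨i, fun j => ?_⟩
      have := hL (f i j, c i j)
        (by rw [← hiL.2]; exact List.mem_map.2 ⟨j, List.mem_finRange j, rfl⟩)
      simpa using this
  · rintro ⟨LL, rfl⟩
    classical
    set q := (LL.map List.length).foldr max 0 with hq
    refine ⟨LL.length, q, fun i j => ((LL.get i).getD j (0, true)).1,
      fun i j => ((LL.get i).getD j (0, true)).2, ?_⟩
    ext x
    simp only [mem_iUnion, mem_iInter, saSet, cellSet, mem_setOf_eq]
    constructor
    · rintro ⟨L, hL, hx⟩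
      rcases List.mem_iff_get.1 hL with ⟨i, rfl⟩
      refine ⟨i, fun j => ?_⟩
      by_cases h : (j : ℕ) < (LL.get i).length
      · have : (LL.get i).getD j (0, true) = (LL.get i).get ⟨j, h⟩ := by
          have h' : (j:ℕ) < LL[(i:ℕ)].length := by simpa using h
          simp [List.getD_eq_getElem?_getD, List.getElem?_eq_getElem h']
        rw [this]
        have := hx _ (List.get_mem _ ⟨j, h⟩)
        rwa [mem_condSet] at this
      · have : (LL.get i).getD j (0, true) = (0, true) :=
          List.getD_eq_default _ _ (le_of_not_gt h)
        rw [this]; simp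
    · rintro ⟨i, hi⟩
      refine ⟨LL.get i, List.get_mem _ i, fun cc hcc => ?_⟩
      rcases List.mem_iff_get.1 hcc with ⟨k, rfl⟩
      have hk : (k : ℕ) < q := lt_of_lt_of_le k.2 (le_foldr_max _ _ (by
        exact List.mem_map.2 ⟨LL.get i, List.get_mem _ i, rfl⟩))
      have := hi ⟨k, hk⟩
      rw [mem_condSet]
      have hgd : (LL.get i).getD ((⟨k, hk⟩ : Fin q) : ℕ) (0, true) = (LL.get i).get k := by
        have h' : (k:ℕ) < LL[(i:ℕ)].length := by simpa using k.2
        simp [List.getD_eq_getElem?_getD, List.getElem?_eq_getElem h']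
      rwa [hgd] at this

lemma SA.union {n : ℕ} {S T : Set (Fin n → ℝ)} (hS : SA S) (hT : SA T) : SA (S ∪ T) := by
  rcases hS with ⟨L1, rfl⟩; rcases hT with ⟨L2, rfl⟩
  refine ⟨L1 ++ L2, ?_⟩
  ext x
  simp only [saSet, mem_union, mem_setOf_eq, List.mem_append]
  constructor
  · rintro (⟨L, hL, hx⟩ | ⟨L, hL, hx⟩)
    exacts [⟨L, Or.inl hL, hx⟩, ⟨L, Or.inr hL, hx⟩]
  · rintro ⟨L, hL | hL, hx⟩
    exacts [Or.inl ⟨L, hL, hx⟩, Or.inr ⟨L, hL, hx⟩]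

lemma cellSet_append {n : ℕ} (L1 L2 : List (Cond n)) :
    cellSet (L1 ++ L2) = cellSet L1 ∩ cellSet L2 := by
  ext x
  simp only [cellSet, mem_setOf_eq, List.mem_append, mem_inter_iff]
  constructor
  · intro h; exact ⟨fun c hc => h c (Or.inl hc), fun c hc => h c (Or.inr hc)⟩
  · rintro ⟨h1, h2⟩ c (hc | hc); exacts [h1 c hc, h2 c hc]

lemma SA.inter {n : ℕ} {S T : Set (Fin n → ℝ)} (hS : SA S) (hT : SA T) : SA (S ∩ T) := by
  rcases hS with ⟨L1, rfl⟩; rcases hT with ⟨L2, rfl⟩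
  refine ⟨L1.flatMap (fun A => L2.map (fun B => A ++ B)), ?_⟩
  ext x
  simp only [saSet, mem_inter_iff, mem_setOf_eq, List.mem_flatMap, List.mem_map]
  constructor
  · rintro ⟨⟨A, hA, hxA⟩, ⟨B, hB, hxB⟩⟩
    refine ⟨A ++ B, ⟨A, hA, ⟨B, hB, rfl⟩⟩, ?_⟩
    rw [cellSet_append]; exact ⟨hxA, hxB⟩
  · rintro ⟨L, ⟨A, hA, B, hB, rfl⟩, hx⟩
    rw [cellSet_append] at hx
    exact ⟨⟨A, hA, hx.1⟩, ⟨B, hB, hx.2⟩⟩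

lemma SA.empty {n : ℕ} : SA (∅ : Set (Fin n → ℝ)) := by
  refine ⟨[], ?_⟩; ext x; simp [saSet]

lemma SA.univ {n : ℕ} : SA (univ : Set (Fin n → ℝ)) := by
  refine ⟨[[]], ?_⟩; ext x; simp [saSet, cellSet]

lemma SA.eqZero {n : ℕ} (e : MvPolynomial (Fin n) ℝ) : SA {x | MvPolynomial.eval x e = 0} := by
  refine ⟨[[(e, true)]], ?_⟩; ext x; simp [saSet, cellSet, condSet]

lemma SA.pos {n : ℕ} (e : MvPolynomial (Fin n) ℝ) : SA {x | 0 < MvPolynomial.eval x e} := by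
  refine ⟨[[(e, false)]], ?_⟩; ext x; simp [saSet, cellSet, condSet]

lemma SA.neg {n : ℕ} (e : MvPolynomial (Fin n) ℝ) : SA {x | MvPolynomial.eval x e < 0} := by
  have := SA.pos (-e)
  convert this using 1
  ext x; simp [neg_pos]

lemma SA.neZero {n : ℕ} (e : MvPolynomial (Fin n) ℝ) : SA {x | MvPolynomial.eval x e ≠ 0} := by
  have h := (SA.pos e).union (SA.neg e)
  convert h using 1
  ext x
  simp only [mem_setOf_eq, mem_union]
  constructor
  · intro h'; rcases lt_or_gt_of_ne h' with h'' | h''; exacts [Or.inr h'', Or.inl h'']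
  · rintro (h' | h') <;> [exact ne_of_gt h'; exact ne_of_lt h']

lemma SA.signSet {n : ℕ} (e : MvPolynomial (Fin n) ℝ) (s : SignType) :
    SA {x | SignType.sign (MvPolynomial.eval x e) = s} := by
  cases s
  · convert SA.eqZero e using 1; ext x; simp [sign_eq_zero_iff]
  · convert SA.neg e using 1; ext x; simp [sign_eq_neg_one_iff]
  · convert SA.pos e using 1; ext x; simp [sign_eq_one_iff]

lemma SA.listInter {n : ℕ} {ι : Type*} (l : List ι) (f : ι → Set (Fin n → ℝ))
    (hf : ∀ i ∈ l, SA (f i)) : SA {x | ∀ i ∈ l, x ∈ f i} := by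
  induction l with
  | nil => convert SA.univ (n := n) using 1; ext x; simp
  | cons a t ih =>
      have h1 : SA (f a) := hf a List.mem_cons_self
      have h2 := ih (fun i hi => hf i (List.mem_cons_of_mem a hi))
      convert h1.inter h2 using 1
      ext x; simp only [mem_setOf_eq, mem_inter_iff, List.mem_cons]
      constructor
      · intro h; exact ⟨h a (Or.inl rfl), fun i hi => h i (Or.inr hi)⟩
      · rintro ⟨h1, h2⟩ i (rfl | hi); exacts [h1, h2 i hi]

lemma SA.listUnion {n : ℕ} {ι : Type*} (l : List ι) (f : ι → Set (Fin n → ℝ))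
    (hf : ∀ i ∈ l, SA (f i)) : SA {x | ∃ i ∈ l, x ∈ f i} := by
  induction l with
  | nil => convert SA.empty (n := n) using 1; ext x; simp
  | cons a t ih =>
      have h1 : SA (f a) := hf a List.mem_cons_self
      have h2 := ih (fun i hi => hf i (List.mem_cons_of_mem a hi))
      convert h1.union h2 using 1
      ext x; simp only [mem_setOf_eq, mem_union, List.mem_cons]
      constructor
      · rintro ⟨i, (rfl | hi), hx⟩; exacts [Or.inl hx, Or.inr ⟨i, hi, hx⟩]
      · rintro (hx | ⟨i, hi, hx⟩); exacts [⟨a, Or.inl rfl, hx⟩, ⟨i, Or.inr hi, hx⟩]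

noncomputable def toPoly {n : ℕ} (p : MvPolynomial (Fin (n + 1)) ℝ) :
    Polynomial (MvPolynomial (Fin n) ℝ) :=
  MvPolynomial.finSuccEquiv ℝ n (MvPolynomial.rename (finRotate (n + 1)) p)

lemma eval_snoc {n : ℕ} (p : MvPolynomial (Fin (n + 1)) ℝ) (x : Fin n → ℝ) (t : ℝ) :
    MvPolynomial.eval (Fin.snoc x t) p
      = Polynomial.eval t ((toPoly p).map (MvPolynomial.eval x)) := by
  rw [toPoly, ← MvPolynomial.eval_eq_eval_mv_eval', MvPolynomial.eval_rename]
  have h : (Fin.cons t x ∘ ⇑(finRotate (n + 1))) = Fin.snoc x t := by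
    funext v
    refine Fin.lastCases ?_ ?_ v
    · simp [finRotate_succ_apply, Fin.last_add_one]
    · intro i
      simp [finRotate_succ_apply, Fin.coeSucc_eq_succ]
  rw [h]

lemma image_proj_eq {n : ℕ} (A : Set (Fin (n + 1) → ℝ)) :
    (fun x : Fin (n + 1) → ℝ => x ∘ Fin.castSucc) '' A = {x | ∃ t : ℝ, Fin.snoc x t ∈ A} := by
  ext x
  constructor
  · rintro ⟨y, hy, rfl⟩
    refine ⟨y (Fin.last n), ?_⟩
    have : Fin.snoc (y ∘ Fin.castSucc) (y (Fin.last n)) = y := by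
      funext v
      refine Fin.lastCases ?_ ?_ v
      · simp
      · intro i; simp
    rwa [this]
  · rintro ⟨t, ht⟩
    refine ⟨Fin.snoc x t, ht, ?_⟩
    funext i; simp

section Prem

variable {A : Type*} [CommRing A]

local notation "PC" => Polynomial.C
local notation "PX" => Polynomial.X

noncomputable def premAux (b : A) (dq : ℕ) (q : Polynomial A) :
    ℕ → Polynomial A → Polynomial A
  | 0, p => p
  | (fuel+1), p =>
    if p.natDegree < dq then p
    else premAux b dq q fuel
      (PC (b ^ 2) * p - PC (b * p.leadingCoeff) * (PX ^ (p.natDegree - dq) * q))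

noncomputable def prem (p q : Polynomial A) : Polynomial A :=
  if q.natDegree = 0 then 0
  else premAux q.leadingCoeff q.natDegree q (p.natDegree + 1) p

lemma premAux_spec [IsDomain A] {q : Polynomial A} (hq : q.natDegree ≠ 0) :
    ∀ (fuel : ℕ) (p : Polynomial A), p.natDegree < fuel →
      (∃ k S, PC (q.leadingCoeff ^ (2 * k)) * p
          = S * q + premAux q.leadingCoeff q.natDegree q fuel p) ∧
        (premAux q.leadingCoeff q.natDegree q fuel p).natDegree < q.natDegree := by
  intro fuel
  induction fuel with
  | zero => intro p hp; omega
  | succ fuel ih =>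
      intro p hp
      by_cases hd : p.natDegree < q.natDegree
      · rw [premAux, if_pos hd]
        refine ⟨⟨0, 0, ?_⟩, hd⟩
        simp
      · rw [premAux, if_neg hd]
        push_neg at hd
        set b := q.leadingCoeff with hb
        set δ := p.natDegree - q.natDegree with hδ
        set p₁ := PC (b ^ 2) * p - PC (b * p.leadingCoeff) * (PX ^ δ * q) with hp₁
        have hq0 : q ≠ 0 := fun h => hq (by simp [h])
        have hdpq : δ + q.natDegree = p.natDegree := by omega
        have hco : p₁.coeff p.natDegree = 0 := by
          have h1 : (PC (b ^ 2) * p).coeff p.natDegree = b ^ 2 * p.leadingCoeff := by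
            rw [Polynomial.coeff_C_mul]; rfl
          have h2 : (PC (b * p.leadingCoeff) * (PX ^ δ * q)).coeff p.natDegree
              = b * p.leadingCoeff * b := by
            rw [Polynomial.coeff_C_mul]
            have h3 := Polynomial.coeff_X_pow_mul q δ q.natDegree
            rw [Nat.add_comm] at h3
            rw [hdpq] at h3
            rw [h3]
            rfl
          rw [hp₁, Polynomial.coeff_sub, h1, h2]
          ring
        have hdeg : p₁.natDegree ≤ p.natDegree := by
          refine le_trans (Polynomial.natDegree_sub_le _ _) (max_le ?_ ?_)
          · exact le_trans (Polynomial.natDegree_mul_le) (by simp)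
          · refine le_trans (Polynomial.natDegree_mul_le) ?_
            have hXq : (PX ^ δ * q : Polynomial A).natDegree ≤ δ + q.natDegree := by
              refine le_trans (Polynomial.natDegree_mul_le) ?_
              simp [Polynomial.natDegree_X_pow]
            simp only [Polynomial.natDegree_C, zero_add]
            omega
        have hlt : p₁.natDegree < p.natDegree := by
          rcases eq_or_ne p₁ 0 with h | h
          · rw [h]; simpa using lt_of_lt_of_le (Nat.pos_of_ne_zero hq) hd
          · rcases lt_or_eq_of_le hdeg with h' | h'
            · exact h'
            · exfalso
              have hne := Polynomial.leadingCoeff_ne_zero.2 h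
              rw [Polynomial.leadingCoeff, h'] at hne
              exact hne hco
        have hfuel : p₁.natDegree < fuel := by omega
        obtain ⟨⟨k, S, hkS⟩, hdeg'⟩ := ih p₁ hfuel
        refine ⟨⟨k + 1, S + PC (b ^ (2 * k)) * (PC (b * p.leadingCoeff) * PX ^ δ), ?_⟩, hdeg'⟩
        have hpow : PC (b ^ (2 * (k + 1))) = PC (b ^ (2 * k)) * PC (b ^ 2) := by
          have h22 : 2 * (k + 1) = 2 * k + 2 := by ring
          rw [h22, ← Polynomial.C_mul, ← pow_add]
        rw [hpow]
        have hsplit : PC (b ^ 2) * p = p₁ + PC (b * p.leadingCoeff) * (PX ^ δ * q) := by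
          rw [hp₁]; ring
        calc PC (b ^ (2 * k)) * PC (b ^ 2) * p
            = PC (b ^ (2 * k)) * p₁
              + PC (b ^ (2 * k)) * (PC (b * p.leadingCoeff) * (PX ^ δ * q)) := by
              rw [mul_assoc, hsplit]; ring
          _ = S * q + premAux b q.natDegree q fuel p₁
              + PC (b ^ (2 * k)) * (PC (b * p.leadingCoeff) * (PX ^ δ * q)) := by rw [hkS]
          _ = (S + PC (b ^ (2 * k)) * (PC (b * p.leadingCoeff) * PX ^ δ)) * q
              + premAux b q.natDegree q fuel p₁ := by ring

lemma prem_spec [IsDomain A] (p q : Polynomial A) :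
    ∃ k S, PC (q.leadingCoeff ^ (2 * k)) * p = S * q + prem p q := by
  by_cases hq : q.natDegree = 0
  · rw [prem, if_pos hq]
    obtain ⟨c, rfl⟩ : ∃ c, q = PC c := ⟨q.coeff 0, Polynomial.eq_C_of_natDegree_eq_zero hq⟩
    refine ⟨1, PC c * p, ?_⟩
    rw [add_zero, Polynomial.leadingCoeff_C, map_pow]
    ring
  · rw [prem, if_neg hq]
    exact ((premAux_spec hq _ p (Nat.lt_succ_self _)).1)

lemma prem_natDegree_lt [IsDomain A] (p q : Polynomial A)
    (hq : q.natDegree ≠ 0) : (prem p q).natDegree < q.natDegree := by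
  rw [prem, if_neg hq]
  exact (premAux_spec hq _ p (Nat.lt_succ_self _)).2

lemma prem_eq_zero_of_natDegree_eq_zero (p q : Polynomial A)
    (hq : q.natDegree = 0) : prem p q = 0 := by
  rw [prem, if_pos hq]

end Prem

section Tables

variable {ι : Type*}

noncomputable def sgnv (g : ι → Polynomial ℝ) (s : ℝ) : ι → SignType :=
  fun i => SignType.sign ((g i).eval s)

def OLT : Option ℝ → ℝ → Prop
  | none, _ => True
  | some a, s => a < s

abbrev TableL (ι : Type*) := List ((ι → SignType) × (ι → SignType)) × (ι → SignType)

def RA (g : ι → Polynomial ℝ) :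
    Option ℝ → List ((ι → SignType) × (ι → SignType)) → (ι → SignType) → Prop
  | lo, [], cl => ∀ s, OLT lo s → sgnv g s = cl
  | lo, (civ, cpt) :: rest, cl =>
      ∃ u, OLT lo u ∧ (∀ s, OLT lo s → s < u → sgnv g s = civ) ∧ sgnv g u = cpt
        ∧ RA g (some u) rest cl

def Realizes (g : ι → Polynomial ℝ) (T : TableL ι) : Prop := RA g none T.1 T.2

def cols (T : TableL ι) : List (ι → SignType) :=
  T.1.map Prod.fst ++ T.1.map Prod.snd ++ [T.2]

lemma exists_olt (lo : Option ℝ) : ∃ s, OLT lo s := by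
  cases lo with
  | none => exact ⟨0, trivial⟩
  | some a => exact ⟨a + 1, by simp [OLT]⟩

lemma exists_olt_lt (lo : Option ℝ) (u : ℝ) (h : OLT lo u) : ∃ s, OLT lo s ∧ s < u := by
  cases lo with
  | none => exact ⟨u - 1, trivial, by linarith⟩
  | some a => exact ⟨(a + u) / 2, by simp only [OLT] at h ⊢; linarith, by
      simp only [OLT] at h; linarith⟩

lemma RA_mem_cols (g : ι → Polynomial ℝ) :
    ∀ (L : List ((ι → SignType) × (ι → SignType))) (cl : ι → SignType) (lo : Option ℝ),
      RA g lo L cl → ∀ s, OLT lo s →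
        sgnv g s ∈ L.map Prod.fst ++ L.map Prod.snd ++ [cl] := by
  intro L
  induction L with
  | nil =>
      intro cl lo h s hs
      simp [h s hs]
  | cons hd rest ih =>
      rcases hd with ⟨civ, cpt⟩
      intro cl lo h s hs
      obtain ⟨u, hu, hiv, hpt, hrest⟩ := h
      rcases lt_trichotomy s u with h' | h' | h'
      · have := hiv s hs h'
        simp [this]
      · subst h'
        simp [hpt]
      · have := ih cl (some u) hrest s h'
        simp only [List.map_cons, List.cons_append, List.mem_cons, List.mem_append,
          List.mem_singleton] at this ⊢
        tauto

lemma RA_cols_realized (g : ι → Polynomial ℝ) :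
    ∀ (L : List ((ι → SignType) × (ι → SignType))) (cl : ι → SignType) (lo : Option ℝ),
      RA g lo L cl → ∀ c ∈ L.map Prod.fst ++ L.map Prod.snd ++ [cl],
        ∃ s, OLT lo s ∧ sgnv g s = c := by
  intro L
  induction L with
  | nil =>
      intro cl lo h c hc
      simp only [List.map_nil, List.nil_append, List.mem_singleton] at hc
      subst hc
      obtain ⟨s, hs⟩ := exists_olt lo
      exact ⟨s, hs, h s hs⟩
  | cons hd rest ih =>
      rcases hd with ⟨civ, cpt⟩
      intro cl lo h c hc
      obtain ⟨u, hu, hiv, hpt, hrest⟩ := h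
      have hc2 : c = civ ∨ c = cpt ∨ c ∈ rest.map Prod.fst ++ rest.map Prod.snd ++ [cl] := by
        simp only [List.map_cons, List.cons_append, List.mem_cons, List.mem_append,
          List.mem_singleton] at hc ⊢
        tauto
      rcases hc2 with rfl | rfl | hc'
      · obtain ⟨s, hs, hsu⟩ := exists_olt_lt lo u hu
        exact ⟨s, hs, hiv s hs hsu⟩
      · exact ⟨u, hu, hpt⟩
      · obtain ⟨s, hs, hsg⟩ := ih cl (some u) hrest c hc'
        refine ⟨s, ?_, hsg⟩
        cases lo with
        | none => trivial
        | some a => simp only [OLT] at hu hs ⊢; linarith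

lemma realizes_readoff {g : ι → Polynomial ℝ} {T : TableL ι} (h : Realizes g T)
    (c : ι → SignType) : (∃ s, sgnv g s = c) ↔ c ∈ cols T := by
  constructor
  · rintro ⟨s, rfl⟩
    exact RA_mem_cols g T.1 T.2 none h s trivial
  · intro hc
    obtain ⟨s, _, hs⟩ := RA_cols_realized g T.1 T.2 none h c hc
    exact ⟨s, hs⟩

end Tables

section RealPoly

open Polynomial Filter

lemma poly_eq_zero_of_zero_on_Ioo {p : Polynomial ℝ} {a b : ℝ} (hab : a < b)
    (h : ∀ s ∈ Set.Ioo a b, p.eval s = 0) : p = 0 := by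
  refine Polynomial.eq_zero_of_infinite_isRoot p ?_
  apply Set.Infinite.mono (s := Set.Ioo a b)
  · intro s hs; exact h s hs
  · exact Set.infinite_coe_iff.mp (Set.Ioo.infinite hab)

lemma sign_eq_zero_on_Ioo {p : Polynomial ℝ} {a b : ℝ} (hab : a < b)
    (h : ∀ s ∈ Set.Ioo a b, SignType.sign (p.eval s) = 0) : p = 0 :=
  poly_eq_zero_of_zero_on_Ioo hab (fun s hs => sign_eq_zero_iff.1 (h s hs))

lemma st_tri (c : SignType) : c = 0 ∨ c = -1 ∨ c = 1 := by cases c <;> decide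

lemma sign_left_of_pt (p : Polynomial ℝ) {a u : ℝ} (hau : a < u) {c₁ c₀ : SignType}
    (hiv : ∀ s ∈ Set.Ioo a u, SignType.sign (p.eval s) = c₁)
    (hpt : SignType.sign (p.eval u) = c₀) (h0 : c₀ ≠ 0) : c₁ = c₀ := by
  have hcont : Filter.Tendsto (fun s => p.eval s) (nhdsWithin u (Set.Iio u)) (nhds (p.eval u)) :=
    (p.continuous.tendsto u).mono_left nhdsWithin_le_nhds
  have hmem : Set.Ioo a u ∈ nhdsWithin u (Set.Iio u) := Ioo_mem_nhdsLT_of_mem ⟨hau, le_refl u⟩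
  rcases st_tri c₁ with rfl | rfl | rfl
  · exfalso
    apply h0
    have hz : p = 0 := sign_eq_zero_on_Ioo hau hiv
    rw [hz] at hpt
    simpa using hpt.symm
  · -- c₁ = -1 : p < 0 on interval, so p.eval u ≤ 0
    have hle : p.eval u ≤ 0 := by
      refine le_of_tendsto hcont ?_
      filter_upwards [hmem] with s hs
      exact le_of_lt (sign_eq_neg_one_iff.1 (hiv s hs))
    rcases st_tri c₀ with rfl | rfl | rfl
    · exact absurd rfl h0
    · rfl
    · exfalso; have := sign_eq_one_iff.1 hpt; linarith
  · have hge : 0 ≤ p.eval u := by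
      refine ge_of_tendsto hcont ?_
      filter_upwards [hmem] with s hs
      exact le_of_lt (sign_eq_one_iff.1 (hiv s hs))
    rcases st_tri c₀ with rfl | rfl | rfl
    · exact absurd rfl h0
    · exfalso; have := sign_eq_neg_one_iff.1 hpt; linarith
    · rfl

lemma sign_right_of_pt (p : Polynomial ℝ) {u b : ℝ} (hub : u < b) {c₂ c₀ : SignType}
    (hiv : ∀ s ∈ Set.Ioo u b, SignType.sign (p.eval s) = c₂)
    (hpt : SignType.sign (p.eval u) = c₀) (h0 : c₀ ≠ 0) : c₂ = c₀ := by
  have hcont : Filter.Tendsto (fun s => p.eval s) (nhdsWithin u (Set.Ioi u)) (nhds (p.eval u)) :=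
    (p.continuous.tendsto u).mono_left nhdsWithin_le_nhds
  have hmem : Set.Ioo u b ∈ nhdsWithin u (Set.Ioi u) := Ioo_mem_nhdsGT_of_mem ⟨le_refl u, hub⟩
  rcases st_tri c₂ with rfl | rfl | rfl
  · exfalso
    apply h0
    have hz : p = 0 := sign_eq_zero_on_Ioo hub hiv
    rw [hz] at hpt
    simpa using hpt.symm
  · have hle : p.eval u ≤ 0 := by
      refine le_of_tendsto hcont ?_
      filter_upwards [hmem] with s hs
      exact le_of_lt (sign_eq_neg_one_iff.1 (hiv s hs))
    rcases st_tri c₀ with rfl | rfl | rfl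
    · exact absurd rfl h0
    · rfl
    · exfalso; have := sign_eq_one_iff.1 hpt; linarith
  · have hge : 0 ≤ p.eval u := by
      refine ge_of_tendsto hcont ?_
      filter_upwards [hmem] with s hs
      exact le_of_lt (sign_eq_one_iff.1 (hiv s hs))
    rcases st_tri c₀ with rfl | rfl | rfl
    · exact absurd rfl h0
    · exfalso; have := sign_eq_neg_one_iff.1 hpt; linarith
    · rfl

lemma run_inc (p : Polynomial ℝ) {a b : ℝ} (hab : a < b)
    (hder : ∀ s ∈ Set.Ioo a b, 0 < (Polynomial.derivative p).eval s) :
    (0 ≤ p.eval a → ∀ s ∈ Set.Ioo a b, 0 < p.eval s) ∧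
    (p.eval b ≤ 0 → ∀ s ∈ Set.Ioo a b, p.eval s < 0) ∧
    (p.eval a < 0 → 0 < p.eval b → ∃ v, v ∈ Set.Ioo a b ∧ p.eval v = 0 ∧
       (∀ s ∈ Set.Ioo a v, p.eval s < 0) ∧ (∀ s ∈ Set.Ioo v b, 0 < p.eval s)) := by
  have hmono : StrictMonoOn (fun s => p.eval s) (Set.Icc a b) := by
    refine strictMonoOn_of_deriv_pos (convex_Icc a b) (p.continuous.continuousOn) ?_
    intro s hs
    rw [interior_Icc] at hs
    rw [Polynomial.deriv]
    exact hder s hs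
  refine ⟨?_, ?_, ?_⟩
  · intro ha s hs
    have := hmono (Set.left_mem_Icc.2 (le_of_lt hab)) ⟨le_of_lt hs.1, le_of_lt hs.2⟩ hs.1
    simpa using lt_of_le_of_lt ha this
  · intro hb s hs
    have := hmono ⟨le_of_lt hs.1, le_of_lt hs.2⟩ (Set.right_mem_Icc.2 (le_of_lt hab)) hs.2
    simp only at this
    linarith
  · intro ha hb
    have hivt : (0:ℝ) ∈ Set.Ioo (p.eval a) (p.eval b) := ⟨ha, hb⟩
    have := intermediate_value_Ioo (le_of_lt hab) (p.continuous.continuousOn (s := Set.Icc a b))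
    obtain ⟨v, hv, hv0⟩ := this hivt
    have hv0' : p.eval v = 0 := hv0
    refine ⟨v, hv, hv0', ?_, ?_⟩
    · intro s hs
      have := hmono ⟨le_of_lt hs.1, le_of_lt (lt_trans hs.2 hv.2)⟩
        ⟨le_of_lt hv.1, le_of_lt hv.2⟩ hs.2
      simp only at this
      rw [hv0'] at this
      linarith
    · intro s hs
      have := hmono ⟨le_of_lt hv.1, le_of_lt hv.2⟩
        ⟨le_of_lt (lt_trans hv.1 hs.1), le_of_lt hs.2⟩ hs.1
      simp only at this
      rw [hv0'] at this
      linarith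

lemma eventually_sign_atTop (p : Polynomial ℝ) (hp : p ≠ 0) :
    ∀ᶠ s in Filter.atTop, SignType.sign (p.eval s) = SignType.sign p.leadingCoeff := by
  rcases eq_or_ne p.natDegree 0 with h0 | h0
  · obtain ⟨c, rfl⟩ : ∃ c, p = Polynomial.C c := ⟨p.coeff 0, eq_C_of_natDegree_eq_zero h0⟩
    filter_upwards with s
    simp
  · have hdeg : 0 < p.degree := natDegree_pos_iff_degree_pos.1 (Nat.pos_of_ne_zero h0)
    rcases lt_trichotomy p.leadingCoeff 0 with hlc | hlc | hlc
    · have := Polynomial.tendsto_atBot_of_leadingCoeff_nonpos p hdeg (le_of_lt hlc)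
      filter_upwards [this.eventually_lt_atBot 0] with s hs
      rw [sign_eq_neg_one_iff.2 hs, (sign_eq_neg_one_iff.2 hlc)]
    · exact absurd hlc (leadingCoeff_ne_zero.2 hp)
    · have := Polynomial.tendsto_atTop_of_leadingCoeff_nonneg p hdeg (le_of_lt hlc)
      filter_upwards [this.eventually_gt_atTop 0] with s hs
      rw [sign_eq_one_iff.2 hs, (sign_eq_one_iff.2 hlc)]

lemma eventually_sign_atBot (p : Polynomial ℝ) (hp : p ≠ 0) :
    ∀ᶠ s in Filter.atBot, SignType.sign (p.eval s)
      = (if Even p.natDegree then SignType.sign p.leadingCoeff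
         else -SignType.sign p.leadingCoeff) := by
  set q := p.comp (-Polynomial.X) with hq
  have hqd : q.natDegree = p.natDegree := by
    rw [hq, natDegree_comp]
    simp
  have hqlc : q.leadingCoeff = p.leadingCoeff * (-1) ^ p.natDegree := by
    rw [hq, leadingCoeff_comp (by simp)]
    simp
  have hq0 : q ≠ 0 := by
    intro h
    apply hp
    have : q.leadingCoeff = 0 := by rw [h]; simp
    rw [hqlc] at this
    rcases mul_eq_zero.1 this with h' | h'
    · exact leadingCoeff_eq_zero.1 h'
    · exact absurd h' (pow_ne_zero _ (by norm_num))
  have hev := eventually_sign_atTop q hq0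
  rw [Filter.eventually_atTop] at hev
  obtain ⟨M, hM⟩ := hev
  rw [Filter.eventually_atBot]
  refine ⟨-M, fun s hs => ?_⟩
  have h1 : q.eval (-s) = p.eval s := by
    rw [hq, Polynomial.eval_comp]
    simp
  have h2 := hM (-s) (by linarith)
  rw [h1] at h2
  rw [h2, hqlc]
  rcases Nat.even_or_odd p.natDegree with he | ho
  · rw [if_pos he, he.neg_one_pow]
    simp
  · rw [if_neg (Nat.not_even_iff_odd.2 ho), ho.neg_one_pow]
    rw [mul_neg_one, Left.sign_neg]

end RealPoly

section Derive

open scoped Classical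

variable {ι : Type*}

def keptP (core : ι → Prop) (c : (Option ι ⊕ ι) → SignType) : Prop :=
  c (Sum.inl none) = 0 ∨ ∃ i, core i ∧ c (Sum.inl (some i)) = 0

noncomputable def psign (i₀ : ι) (core : ι → Prop) (c : (Option ι ⊕ ι) → SignType) : SignType :=
  if c (Sum.inl none) = 0 then c (Sum.inr i₀)
  else if h : ∃ i, core i ∧ c (Sum.inl (some i)) = 0 then c (Sum.inr (Classical.choose h))
  else 0

noncomputable def restr (i₀ : ι) (c : (Option ι ⊕ ι) → SignType) (v : SignType) : ι → SignType :=
  fun i => if i = i₀ then v else c (Sum.inl (some i))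

noncomputable def derive (i₀ : ι) (core : ι → Prop) (ε : SignType) :
    SignType → List (((Option ι ⊕ ι) → SignType) × ((Option ι ⊕ ι) → SignType)) →
      ((Option ι ⊕ ι) → SignType) →
      List ((ι → SignType) × (ι → SignType)) × (ι → SignType)
  | lp, [], cl =>
      let ε' := cl (Sum.inl none)
      let lL := if lp = 0 then ε' else lp
      if lL = ε then ([], restr i₀ cl ε)
      else ([(restr i₀ cl lL, restr i₀ cl 0)], restr i₀ cl ε)
  | lp, (civ, cpt) :: rest, cl =>
      if keptP core cpt then
        let ε' := civ (Sum.inl none)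
        let sp := psign i₀ core cpt
        let lL := if lp = 0 then ε' else lp
        let rL := if sp = 0 then -ε' else sp
        let ptc := restr i₀ cpt sp
        let out := derive i₀ core ε sp rest cl
        ((if lL = rL then [(restr i₀ civ lL, ptc)]
          else [(restr i₀ civ lL, restr i₀ civ 0), (restr i₀ civ rL, ptc)]) ++ out.1, out.2)
      else derive i₀ core ε lp rest cl

/-- Weak realization : interval conditions only for the `inl` part of the family. -/
def RAH (gκ : (Option ι ⊕ ι) → Polynomial ℝ) :
    Option ℝ → List (((Option ι ⊕ ι) → SignType) × ((Option ι ⊕ ι) → SignType)) →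
      ((Option ι ⊕ ι) → SignType) → Prop
  | lo, [], cl => ∀ s, OLT lo s → ∀ j : Option ι,
      SignType.sign ((gκ (Sum.inl j)).eval s) = cl (Sum.inl j)
  | lo, (civ, cpt) :: rest, cl =>
      ∃ u, OLT lo u ∧
        (∀ s, OLT lo s → s < u → ∀ j : Option ι,
          SignType.sign ((gκ (Sum.inl j)).eval s) = civ (Sum.inl j)) ∧
        (∀ k, SignType.sign ((gκ k).eval u) = cpt k) ∧ RAH gκ (some u) rest cl

lemma RA_to_RAH (gκ : (Option ι ⊕ ι) → Polynomial ℝ) :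
    ∀ (L : List _) (cl) (lo), RA gκ lo L cl → RAH gκ lo L cl := by
  intro L
  induction L with
  | nil =>
      intro cl lo h s hs j
      exact congrFun (h s hs) _
  | cons hd rest ih =>
      rcases hd with ⟨civ, cpt⟩
      intro cl lo h
      obtain ⟨u, hu, hiv, hpt, hrest⟩ := h
      exact ⟨u, hu, fun s hs hsu j => congrFun (hiv s hs hsu) _,
        fun k => congrFun hpt _, ih cl (some u) hrest⟩

lemma olt_trans {lo : Option ℝ} {a s : ℝ} (h : OLT lo a) (h' : a < s) : OLT lo s := by
  cases lo with
  | none => trivial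
  | some b => exact lt_trans h h'

/-- Sign-run description for a bounded interval, sign-typed version. -/
lemma run_general (p : Polynomial ℝ) {a b : ℝ} (hab : a < b) {ε' : SignType} (hε' : ε' ≠ 0)
    (hder : ∀ s ∈ Set.Ioo a b, SignType.sign ((Polynomial.derivative p).eval s) = ε') :
    ∀ lL rL, lL = (if SignType.sign (p.eval a) = 0 then ε' else SignType.sign (p.eval a)) →
      rL = (if SignType.sign (p.eval b) = 0 then -ε' else SignType.sign (p.eval b)) →
      (lL = rL → ∀ s ∈ Set.Ioo a b, SignType.sign (p.eval s) = lL) ∧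
      (lL ≠ rL → ∃ v, v ∈ Set.Ioo a b ∧ p.eval v = 0 ∧
        (∀ s ∈ Set.Ioo a v, SignType.sign (p.eval s) = lL) ∧
        (∀ s ∈ Set.Ioo v b, SignType.sign (p.eval s) = rL)) := by
  have key : ∀ (q : Polynomial ℝ), (∀ s ∈ Set.Ioo a b, 0 < (Polynomial.derivative q).eval s) →
      ∀ lL rL, lL = (if SignType.sign (q.eval a) = 0 then 1 else SignType.sign (q.eval a)) →
      rL = (if SignType.sign (q.eval b) = 0 then -1 else SignType.sign (q.eval b)) →
      (lL = rL → ∀ s ∈ Set.Ioo a b, SignType.sign (q.eval s) = lL) ∧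
      (lL ≠ rL → ∃ v, v ∈ Set.Ioo a b ∧ q.eval v = 0 ∧
        (∀ s ∈ Set.Ioo a v, SignType.sign (q.eval s) = lL) ∧
        (∀ s ∈ Set.Ioo v b, SignType.sign (q.eval s) = rL)) := by
    intro q hder' lL rL hlL hrL
    obtain ⟨R1, R2, R3⟩ := run_inc q hab hder'
    have hne : ((a + b) / 2) ∈ Set.Ioo a b := ⟨by linarith, by linarith⟩
    rcases le_or_gt 0 (q.eval a) with ha | ha
    · -- q > 0 on interval
      have hpos := R1 ha
      have hlL1 : lL = 1 := by
        rcases eq_or_lt_of_le ha with h | h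
        · rw [hlL, ← h]; simp
        · rw [hlL, sign_eq_one_iff.2 h]; simp
      have hb1 : 0 < q.eval b := by
        by_contra hb
        push_neg at hb
        have := R2 hb _ hne
        have := hpos _ hne
        linarith
      have hrL1 : rL = 1 := by rw [hrL, sign_eq_one_iff.2 hb1]; simp
      refine ⟨fun _ s hs => by rw [sign_eq_one_iff.2 (hpos s hs), hlL1], fun h => ?_⟩
      exact absurd (hlL1.trans hrL1.symm) h
    · have hlLm : lL = -1 := by rw [hlL, sign_eq_neg_one_iff.2 ha]; simp
      rcases le_or_gt (q.eval b) 0 with hb | hb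
      · have hneg := R2 hb
        have hrLm : rL = -1 := by
          rcases eq_or_lt_of_le hb with h | h
          · rw [hrL, h]; simp
          · rw [hrL, sign_eq_neg_one_iff.2 h]; simp
        refine ⟨fun _ s hs => by rw [sign_eq_neg_one_iff.2 (hneg s hs), hlLm], fun h => ?_⟩
        exact absurd (hlLm.trans hrLm.symm) h
      · have hrL1 : rL = 1 := by rw [hrL, sign_eq_one_iff.2 hb]; simp
        obtain ⟨v, hv, hv0, hl, hr⟩ := R3 ha hb
        refine ⟨fun h => absurd h (by rw [hlLm, hrL1]; decide), fun _ => ?_⟩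
        refine ⟨v, hv, hv0, fun s hs => by rw [sign_eq_neg_one_iff.2 (hl s hs), hlLm],
          fun s hs => by rw [sign_eq_one_iff.2 (hr s hs), hrL1]⟩
  intro lL rL hlL hrL
  rcases st_tri ε' with h | h | h
  · exact absurd h hε'
  · -- ε' = -1 : apply key to -p
    subst h
    have hderneg : ∀ s ∈ Set.Ioo a b, 0 < (Polynomial.derivative (-p)).eval s := by
      intro s hs
      have := hder s hs
      rw [Polynomial.derivative_neg, Polynomial.eval_neg]
      have := sign_eq_neg_one_iff.1 this
      linarith
    have := key (-p) hderneg (-lL) (-rL) ?_ ?_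
    · obtain ⟨K1, K2⟩ := this
      constructor
      · intro hEq s hs
        have := K1 (by rw [hEq]) s hs
        rw [Polynomial.eval_neg, Left.sign_neg, neg_eq_iff_eq_neg] at this
        rw [this, neg_neg]
      · intro hne
        obtain ⟨v, hv, hv0, hl, hr⟩ := K2 (fun h => hne (by
          have := neg_injective h
          exact this))
        refine ⟨v, hv, by rw [Polynomial.eval_neg] at hv0; linarith, ?_, ?_⟩
        · intro s hs
          have := hl s hs
          rw [Polynomial.eval_neg, Left.sign_neg, neg_eq_iff_eq_neg] at this
          rw [this, neg_neg]
        · intro s hs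
          have := hr s hs
          rw [Polynomial.eval_neg, Left.sign_neg, neg_eq_iff_eq_neg] at this
          rw [this, neg_neg]
    · rw [hlL, Polynomial.eval_neg, Left.sign_neg]
      rcases st_tri (SignType.sign (p.eval a)) with h | h | h <;> rw [h] <;> simp
    · rw [hrL, Polynomial.eval_neg, Left.sign_neg]
      rcases st_tri (SignType.sign (p.eval b)) with h | h | h <;> rw [h] <;> simp
  · subst h
    have hderpos : ∀ s ∈ Set.Ioo a b, 0 < (Polynomial.derivative p).eval s := by
      intro s hs
      exact sign_eq_one_iff.1 (hder s hs)
    exact key p hderpos lL rL hlL hrL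

end Derive

section Runs

lemma einf_ne_zero {p : Polynomial ℝ} (hp : p ≠ 0) :
    (if Even p.natDegree then SignType.sign p.leadingCoeff
     else -SignType.sign p.leadingCoeff) ≠ 0 := by
  have h : SignType.sign p.leadingCoeff ≠ 0 := by
    rw [Ne, sign_eq_zero_iff]
    exact Polynomial.leadingCoeff_ne_zero.2 hp
  split
  · exact h
  · intro hh
    apply h
    rcases st_tri (SignType.sign p.leadingCoeff) with h1 | h1 | h1
    · exact h1
    · rw [h1] at hh; exact absurd hh (by decide)
    · rw [h1] at hh; exact absurd hh (by decide)

lemma run_left_inf (p : Polynomial ℝ) (hp : p ≠ 0) {b : ℝ} {ε' : SignType} (hε' : ε' ≠ 0)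
    (hder : ∀ s < b, SignType.sign ((Polynomial.derivative p).eval s) = ε') :
    ∀ εinf rL,
      εinf = (if Even p.natDegree then SignType.sign p.leadingCoeff
              else -SignType.sign p.leadingCoeff) →
      rL = (if SignType.sign (p.eval b) = 0 then -ε' else SignType.sign (p.eval b)) →
      (εinf = rL → ∀ s < b, SignType.sign (p.eval s) = εinf) ∧
      (εinf ≠ rL → ∃ v, v < b ∧ p.eval v = 0 ∧
        (∀ s < v, SignType.sign (p.eval s) = εinf) ∧
        (∀ s ∈ Set.Ioo v b, SignType.sign (p.eval s) = rL)) := by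
  intro εinf rL hεinf hrL
  have hεinf0 : εinf ≠ 0 := hεinf ▸ einf_ne_zero hp
  obtain ⟨A, hA⟩ := Filter.eventually_atBot.1 (eventually_sign_atBot p hp)
  set a := min A (b - 1) with ha
  have hab : a < b := lt_of_le_of_lt (min_le_right _ _) (by linarith)
  have hsa : ∀ s ≤ a, SignType.sign (p.eval s) = εinf := by
    intro s hs
    rw [hεinf]
    exact hA s (le_trans hs (min_le_left _ _))
  have hpa : SignType.sign (p.eval a) = εinf := hsa a (le_refl a)
  have hderI : ∀ s ∈ Set.Ioo a b, SignType.sign ((Polynomial.derivative p).eval s) = ε' :=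
    fun s hs => hder s hs.2
  have := run_general p hab hε' hderI εinf rL (by rw [hpa, if_neg hεinf0]) hrL
  obtain ⟨K1, K2⟩ := this
  constructor
  · intro hEq s hs
    rcases le_or_gt s a with h | h
    · exact hsa s h
    · exact K1 hEq s ⟨h, hs⟩
  · intro hne
    obtain ⟨v, hv, hv0, hl, hr⟩ := K2 hne
    refine ⟨v, hv.2, hv0, ?_, hr⟩
    intro s hs
    rcases le_or_gt s a with h | h
    · exact hsa s h
    · exact hl s ⟨h, hs⟩

lemma run_right_inf (p : Polynomial ℝ) (hp : p ≠ 0) {a : ℝ} {ε' : SignType} (hε' : ε' ≠ 0)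
    (hder : ∀ s, a < s → SignType.sign ((Polynomial.derivative p).eval s) = ε') :
    ∀ lL ε,
      ε = SignType.sign p.leadingCoeff →
      lL = (if SignType.sign (p.eval a) = 0 then ε' else SignType.sign (p.eval a)) →
      (lL = ε → ∀ s, a < s → SignType.sign (p.eval s) = lL) ∧
      (lL ≠ ε → ∃ v, a < v ∧ p.eval v = 0 ∧
        (∀ s ∈ Set.Ioo a v, SignType.sign (p.eval s) = lL) ∧
        (∀ s, v < s → SignType.sign (p.eval s) = ε)) := by
  intro lL ε hε hlL
  have hε0 : ε ≠ 0 := by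
    rw [hε, Ne, sign_eq_zero_iff]
    exact Polynomial.leadingCoeff_ne_zero.2 hp
  obtain ⟨B, hB⟩ := Filter.eventually_atTop.1 (eventually_sign_atTop p hp)
  set b := max B (a + 1) with hb
  have hab : a < b := lt_of_lt_of_le (by linarith) (le_max_right _ _)
  have hsb : ∀ s, b ≤ s → SignType.sign (p.eval s) = ε := by
    intro s hs
    rw [hε]
    exact hB s (le_trans (le_max_left _ _) hs)
  have hpb : SignType.sign (p.eval b) = ε := hsb b (le_refl b)
  have hderI : ∀ s ∈ Set.Ioo a b, SignType.sign ((Polynomial.derivative p).eval s) = ε' :=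
    fun s hs => hder s hs.1
  have := run_general p hab hε' hderI lL ε hlL (by rw [hpb, if_neg hε0])
  obtain ⟨K1, K2⟩ := this
  constructor
  · intro hEq s hs
    rcases lt_or_ge s b with h | h
    · exact K1 hEq s ⟨hs, h⟩
    · rw [hsb s h, ← hEq]
  · intro hne
    obtain ⟨v, hv, hv0, hl, hr⟩ := K2 hne
    refine ⟨v, hv.1, hv0, hl, ?_⟩
    intro s hs
    rcases lt_or_ge s b with h | h
    · exact hr s ⟨hs, h⟩
    · exact hsb s h

lemma run_both_inf (p : Polynomial ℝ) (hp : p ≠ 0) {ε' : SignType} (hε' : ε' ≠ 0)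
    (hder : ∀ s, SignType.sign ((Polynomial.derivative p).eval s) = ε') :
    ∀ εinf ε,
      ε = SignType.sign p.leadingCoeff →
      εinf = (if Even p.natDegree then SignType.sign p.leadingCoeff
              else -SignType.sign p.leadingCoeff) →
      (εinf = ε → ∀ s, SignType.sign (p.eval s) = εinf) ∧
      (εinf ≠ ε → ∃ v, p.eval v = 0 ∧
        (∀ s < v, SignType.sign (p.eval s) = εinf) ∧
        (∀ s, v < s → SignType.sign (p.eval s) = ε)) := by
  intro εinf ε hε hεinf
  have hεinf0 : εinf ≠ 0 := hεinf ▸ einf_ne_zero hp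
  obtain ⟨A, hA⟩ := Filter.eventually_atBot.1 (eventually_sign_atBot p hp)
  have hsa : ∀ s ≤ A, SignType.sign (p.eval s) = εinf := by
    intro s hs
    rw [hεinf]
    exact hA s hs
  have hpa : SignType.sign (p.eval A) = εinf := hsa A (le_refl A)
  have := run_right_inf p hp hε' (fun s _ => hder s) εinf ε hε
    (by rw [hpa, if_neg hεinf0])
  obtain ⟨K1, K2⟩ := this
  constructor
  · intro hEq s
    rcases le_or_gt s A with h | h
    · exact hsa s h
    · exact K1 hEq s h
  · intro hne
    obtain ⟨v, hv, hv0, hl, hr⟩ := K2 hne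
    refine ⟨v, hv0, ?_, hr⟩
    intro s hs
    rcases le_or_gt s A with h | h
    · exact hsa s h
    · exact hl s ⟨h, hs⟩

end Runs

section Drop

variable {ι : Type*}

lemma col_eq (q : Polynomial ℝ) {c₁ c₀ c₂ : SignType} {lo : Option ℝ} {u w : ℝ}
    (hu : OLT lo u) (huw : u < w)
    (hleft : ∀ s, OLT lo s → s < u → SignType.sign (q.eval s) = c₁)
    (hpt : SignType.sign (q.eval u) = c₀)
    (hright : ∀ s, u < s → s < w → SignType.sign (q.eval s) = c₂)
    (hdich : q = 0 ∨ c₀ ≠ 0) : c₁ = c₀ ∧ c₂ = c₀ := by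
  obtain ⟨a, ha, hau⟩ := exists_olt_lt lo u hu
  rcases hdich with rfl | h0
  · have h1 : c₁ = 0 := by
      rw [← hleft a ha hau]; simp
    have h0' : c₀ = 0 := by rw [← hpt]; simp
    have h2 : c₂ = 0 := by
      rw [← hright ((u + w) / 2) (by linarith) (by linarith)]; simp
    exact ⟨h1.trans h0'.symm, h2.trans h0'.symm⟩
  · constructor
    · exact sign_left_of_pt q hau (fun s hs => hleft s (olt_trans ha hs.1) hs.2) hpt h0
    · exact sign_right_of_pt q huw (fun s hs => hright s hs.1 hs.2) hpt h0

lemma not_kept_dich {i₀ : ι} {core : ι → Prop} {gκ : (Option ι ⊕ ι) → Polynomial ℝ}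
    (hκi₀ : gκ (Sum.inl (some i₀)) = 0)
    (hzero : ∀ i, i ≠ i₀ → ¬ core i → gκ (Sum.inl (some i)) = 0)
    {cpt : (Option ι ⊕ ι) → SignType} (hnk : ¬ keptP core cpt) :
    ∀ j : Option ι, gκ (Sum.inl j) = 0 ∨ cpt (Sum.inl j) ≠ 0 := by
  intro j
  rw [keptP, not_or] at hnk
  cases j with
  | none => exact Or.inr hnk.1
  | some i =>
      by_cases hi : i = i₀
      · subst hi; exact Or.inl hκi₀
      · by_cases hc : core i
        · refine Or.inr fun h => hnk.2 ⟨i, hc, h⟩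
        · exact Or.inl (hzero i hi hc)

lemma RAH_drop {i₀ : ι} {core : ι → Prop} {gκ : (Option ι ⊕ ι) → Polynomial ℝ}
    (hκi₀ : gκ (Sum.inl (some i₀)) = 0)
    (hzero : ∀ i, i ≠ i₀ → ¬ core i → gκ (Sum.inl (some i)) = 0)
    {lo : Option ℝ} {civ cpt : (Option ι ⊕ ι) → SignType} {rest : List _}
    {cl : (Option ι ⊕ ι) → SignType}
    (h : RAH gκ lo ((civ, cpt) :: rest) cl) (hnk : ¬ keptP core cpt) :
    RAH gκ lo rest cl := by
  obtain ⟨u, hu, hiv, hpt, hrest⟩ := h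
  have hdich := not_kept_dich hκi₀ hzero hnk
  cases rest with
  | nil =>
      intro s hs j
      have hcols : civ (Sum.inl j) = cpt (Sum.inl j) ∧ cl (Sum.inl j) = cpt (Sum.inl j) := by
        refine col_eq (gκ (Sum.inl j)) hu (lt_add_one u)
          (fun s hs hsu => hiv s hs hsu j) (hpt _)
          (fun s hs _ => hrest s hs j) ?_
        rcases hdich j with h | h
        · exact Or.inl h
        · exact Or.inr (fun h0 => h (by rw [← hpt (Sum.inl j)] at h0 ⊢; exact h0))
      rcases lt_trichotomy s u with h' | h' | h'
      · rw [hiv s hs h' j, hcols.1, ← hcols.2]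
      · subst h'; rw [hpt (Sum.inl j), ← hcols.2]
      · exact hrest s h' j
  | cons hd' rest' =>
      rcases hd' with ⟨civ', cpt'⟩
      obtain ⟨u', hu', hiv', hpt', hrest'⟩ := hrest
      refine ⟨u', olt_trans hu hu', ?_, hpt', hrest'⟩
      intro s hs hsu' j
      have hcols : civ (Sum.inl j) = cpt (Sum.inl j) ∧ civ' (Sum.inl j) = cpt (Sum.inl j) := by
        refine col_eq (gκ (Sum.inl j)) hu hu'
          (fun s hs hsu => hiv s hs hsu j) (hpt _)
          (fun s hs hs' => hiv' s hs hs' j) ?_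
        rcases hdich j with h | h
        · exact Or.inl h
        · exact Or.inr (fun h0 => h (by rw [← hpt (Sum.inl j)] at h0 ⊢; exact h0))
      rcases lt_trichotomy s u with h' | h' | h'
      · rw [hiv s hs h' j, hcols.1, ← hcols.2]
      · subst h'; rw [hpt (Sum.inl j), ← hcols.2]
      · exact hiv' s h' hsu' j

end Drop

section DeriveCorrect

open scoped Classical

variable {ι : Type*}

lemma sign_seg_ne_zero {q : Polynomial ℝ} (hq : q ≠ 0) {lo : Option ℝ} {u : ℝ} {c : SignType}
    (hu : OLT lo u) (hiv : ∀ s, OLT lo s → s < u → SignType.sign (q.eval s) = c) : c ≠ 0 := by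
  intro hc
  obtain ⟨a, ha, hau⟩ := exists_olt_lt lo u hu
  exact hq (sign_eq_zero_on_Ioo hau (fun s hs => (hiv s (olt_trans ha hs.1) hs.2).trans hc))

lemma sign_ray_ne_zero {q : Polynomial ℝ} (hq : q ≠ 0) {lo : Option ℝ} {c : SignType}
    (hiv : ∀ s, OLT lo s → SignType.sign (q.eval s) = c) : c ≠ 0 := by
  intro hc
  obtain ⟨a, ha⟩ := exists_olt lo
  refine hq (sign_eq_zero_on_Ioo (lt_add_one a) (fun s hs => ?_))
  exact (hiv s (olt_trans ha hs.1)).trans hc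

lemma psign_correct {i₀ : ι} {core : ι → Prop} {g : ι → Polynomial ℝ}
    {gκ : (Option ι ⊕ ι) → Polynomial ℝ}
    (hκ0 : gκ (Sum.inl none) = Polynomial.derivative (g i₀))
    (hκ1 : ∀ i, i ≠ i₀ → gκ (Sum.inl (some i)) = g i)
    (hcore : ∀ i, core i → i ≠ i₀)
    (hrem0 : ∀ u, (Polynomial.derivative (g i₀)).eval u = 0 →
        SignType.sign ((g i₀).eval u) = SignType.sign ((gκ (Sum.inr i₀)).eval u))
    (hrem : ∀ i, core i → ∀ u, (g i).eval u = 0 →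
        SignType.sign ((g i₀).eval u) = SignType.sign ((gκ (Sum.inr i)).eval u))
    {cpt : (Option ι ⊕ ι) → SignType} {u : ℝ}
    (hpt : ∀ k, SignType.sign ((gκ k).eval u) = cpt k) (hk : keptP core cpt) :
    SignType.sign ((g i₀).eval u) = psign i₀ core cpt := by
  rw [psign]
  by_cases h0 : cpt (Sum.inl none) = 0
  · rw [if_pos h0]
    have h1 : (Polynomial.derivative (g i₀)).eval u = 0 := by
      have := hpt (Sum.inl none)
      rw [hκ0] at this
      rw [← sign_eq_zero_iff, this, h0]
    rw [hrem0 u h1, hpt (Sum.inr i₀)]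
  · rw [if_neg h0]
    have h : ∃ i, core i ∧ cpt (Sum.inl (some i)) = 0 := by
      rcases hk with h' | h'
      · exact absurd h' h0
      · exact h'
    rw [dif_pos h]
    obtain ⟨hc, hz⟩ := Classical.choose_spec h
    set i := Classical.choose h
    have h1 : (g i).eval u = 0 := by
      have := hpt (Sum.inl (some i))
      rw [hκ1 i (hcore i hc)] at this
      rw [← sign_eq_zero_iff, this, hz]
    rw [hrem i hc u h1, hpt (Sum.inr i)]

lemma derive_correct {i₀ : ι} {core : ι → Prop} {g : ι → Polynomial ℝ}
    {gκ : (Option ι ⊕ ι) → Polynomial ℝ}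
    (hp : g i₀ ≠ 0) (hd : (g i₀).natDegree ≠ 0)
    (hκ0 : gκ (Sum.inl none) = Polynomial.derivative (g i₀))
    (hκ1 : ∀ i, i ≠ i₀ → gκ (Sum.inl (some i)) = g i)
    (hκi₀ : gκ (Sum.inl (some i₀)) = 0)
    (hcore : ∀ i, core i → i ≠ i₀)
    (hzero : ∀ i, i ≠ i₀ → ¬ core i → g i = 0)
    (hrem0 : ∀ u, (Polynomial.derivative (g i₀)).eval u = 0 →
        SignType.sign ((g i₀).eval u) = SignType.sign ((gκ (Sum.inr i₀)).eval u))
    (hrem : ∀ i, core i → ∀ u, (g i).eval u = 0 →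
        SignType.sign ((g i₀).eval u) = SignType.sign ((gκ (Sum.inr i)).eval u)) :
    ∀ (L : List _) (cl : (Option ι ⊕ ι) → SignType) (lo : Option ℝ) (lp : SignType),
      RAH gκ lo L cl →
      (lo = none → lp = (if Even (g i₀).natDegree then SignType.sign (g i₀).leadingCoeff
          else -SignType.sign (g i₀).leadingCoeff)) →
      (∀ u, lo = some u → SignType.sign ((g i₀).eval u) = lp) →
      RA g lo (derive i₀ core (SignType.sign (g i₀).leadingCoeff) lp L cl).1
        (derive i₀ core (SignType.sign (g i₀).leadingCoeff) lp L cl).2 := by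
  set p := g i₀ with hpdef
  set ε := SignType.sign p.leadingCoeff with hεdef
  set εinf := (if Even p.natDegree then SignType.sign p.leadingCoeff
      else -SignType.sign p.leadingCoeff) with hεinfdef
  have hε0 : ε ≠ 0 := by
    rw [hεdef, Ne, sign_eq_zero_iff]
    exact Polynomial.leadingCoeff_ne_zero.2 hp
  have hεinf0 : εinf ≠ 0 := einf_ne_zero hp
  have hp' : Polynomial.derivative p ≠ 0 := by
    intro h
    exact hd (Polynomial.natDegree_eq_zero_of_derivative_eq_zero h)
  intro L
  induction L with
  | nil =>
      intro cl lo lp hRAH hlp hlo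
      set ε' := cl (Sum.inl none) with hε'def
      have hder : ∀ s, OLT lo s → SignType.sign ((Polynomial.derivative p).eval s) = ε' := by
        intro s hs
        rw [← hκ0]
        exact hRAH s hs none
      have hε'0 : ε' ≠ 0 := sign_ray_ne_zero hp' hder
      have hoth : ∀ i, i ≠ i₀ → ∀ s, OLT lo s →
          SignType.sign ((g i).eval s) = cl (Sum.inl (some i)) := by
        intro i hi s hs
        rw [← hκ1 i hi]
        exact hRAH s hs (some i)
      rw [derive]
      set lL := if lp = 0 then ε' else lp with hlLdef
      by_cases hLε : lL = ε
      · rw [if_pos hLε]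
        intro s hs
        funext i
        by_cases hi : i = i₀
        · subst hi
          show SignType.sign (p.eval s) = restr i (fun k => cl k) ε i
          rw [restr, if_pos rfl]
          cases lo with
          | none =>
              have hlp' : lp = εinf := hlp rfl
              have hlL : lL = εinf := by rw [hlLdef, hlp', if_neg hεinf0]
              obtain ⟨K1, _⟩ := run_both_inf p hp hε'0 (fun s => hder s trivial)
                εinf ε rfl rfl
              rw [← hLε, hlL]
              exact K1 (hlL.symm.trans hLε) s
          | some u₀ =>
              have hpu₀ : SignType.sign (p.eval u₀) = lp := hlo u₀ rfl
              obtain ⟨K1, _⟩ := run_right_inf p hp hε'0 (fun s hs => hder s hs)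
                lL ε rfl (by rw [hpu₀, hlLdef])
              rw [← hLε]
              exact K1 hLε s hs
        · show SignType.sign ((g i).eval s) = restr i₀ (fun k => cl k) ε i
          rw [restr, if_neg hi]
          exact hoth i hi s hs
      · rw [if_neg hLε]
        -- there is a root in the last interval
        have hroot : ∃ v, OLT lo v ∧ p.eval v = 0 ∧
            (∀ s, OLT lo s → s < v → SignType.sign (p.eval s) = lL) ∧
            (∀ s, v < s → SignType.sign (p.eval s) = ε) := by
          cases lo with
          | none =>
              have hlp' : lp = εinf := hlp rfl
              have hlL : lL = εinf := by rw [hlLdef, hlp', if_neg hεinf0]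
              obtain ⟨_, K2⟩ := run_both_inf p hp hε'0 (fun s => hder s trivial)
                εinf ε rfl rfl
              obtain ⟨v, hv0, hvl, hvr⟩ := K2 (hlL ▸ hLε)
              exact ⟨v, trivial, hv0, fun s _ hsv => (hvl s hsv).trans hlL.symm, hvr⟩
          | some u₀ =>
              have hpu₀ : SignType.sign (p.eval u₀) = lp := hlo u₀ rfl
              obtain ⟨_, K2⟩ := run_right_inf p hp hε'0 (fun s hs => hder s hs)
                lL ε rfl (by rw [hpu₀, hlLdef])
              obtain ⟨v, hv, hv0, hvl, hvr⟩ := K2 hLε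
              exact ⟨v, hv, hv0, fun s hs hsv => hvl s ⟨hs, hsv⟩, hvr⟩
        obtain ⟨v, hvlo, hv0, hvl, hvr⟩ := hroot
        refine ⟨v, hvlo, ?_, ?_, ?_⟩
        · intro s hs hsv
          funext i
          by_cases hi : i = i₀
          · subst hi
            show SignType.sign (p.eval s) = restr i (fun k => cl k) lL i
            rw [restr, if_pos rfl]
            exact hvl s hs hsv
          · show SignType.sign ((g i).eval s) = restr i₀ (fun k => cl k) lL i
            rw [restr, if_neg hi]
            exact hoth i hi s hs
        · funext i
          by_cases hi : i = i₀
          · subst hi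
            show SignType.sign (p.eval v) = restr i (fun k => cl k) 0 i
            rw [restr, if_pos rfl, hv0]
            simp
          · show SignType.sign ((g i).eval v) = restr i₀ (fun k => cl k) 0 i
            rw [restr, if_neg hi]
            exact hoth i hi v hvlo
        · intro s hs
          funext i
          by_cases hi : i = i₀
          · subst hi
            show SignType.sign (p.eval s) = restr i (fun k => cl k) ε i
            rw [restr, if_pos rfl]
            exact hvr s hs
          · show SignType.sign ((g i).eval s) = restr i₀ (fun k => cl k) ε i
            rw [restr, if_neg hi]
            exact hoth i hi s (olt_trans hvlo hs)
  | cons hd' rest ih =>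
      rcases hd' with ⟨civ, cpt⟩
      intro cl lo lp hRAH hlp hlo
      by_cases hk : keptP core cpt
      · obtain ⟨u, hu, hiv, hpt, hrest⟩ := hRAH
        set ε' := civ (Sum.inl none) with hε'def
        have hder : ∀ s, OLT lo s → s < u →
            SignType.sign ((Polynomial.derivative p).eval s) = ε' := by
          intro s hs hsu
          rw [← hκ0]
          exact hiv s hs hsu none
        have hε'0 : ε' ≠ 0 := sign_seg_ne_zero hp' hu hder
        have hoth : ∀ i, i ≠ i₀ → ∀ s, OLT lo s → s < u →
            SignType.sign ((g i).eval s) = civ (Sum.inl (some i)) := by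
          intro i hi s hs hsu
          rw [← hκ1 i hi]
          exact hiv s hs hsu (some i)
        set sp := psign i₀ core cpt with hspdef
        have hsp : SignType.sign (p.eval u) = sp :=
          psign_correct hκ0 hκ1 hcore hrem0 hrem hpt hk
        set lL := if lp = 0 then ε' else lp with hlLdef
        set rL := if sp = 0 then -ε' else sp with hrLdef
        -- the run on (lo, u)
        have hrun : (lL = rL → ∀ s, OLT lo s → s < u → SignType.sign (p.eval s) = lL) ∧
            (lL ≠ rL → ∃ v, OLT lo v ∧ v < u ∧ p.eval v = 0 ∧
              (∀ s, OLT lo s → s < v → SignType.sign (p.eval s) = lL) ∧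
              (∀ s, v < s → s < u → SignType.sign (p.eval s) = rL)) := by
          cases lo with
          | none =>
              have hlp' : lp = εinf := hlp rfl
              have hlL : lL = εinf := by rw [hlLdef, hlp', if_neg hεinf0]
              obtain ⟨K1, K2⟩ := run_left_inf p hp hε'0 (fun s hs => hder s trivial hs)
                εinf rL rfl (by rw [hsp, hrLdef])
              constructor
              · intro hEq s _ hsu
                rw [hlL]
                exact K1 (hlL ▸ hEq) s hsu
              · intro hne
                obtain ⟨v, hvu, hv0, hvl, hvr⟩ := K2 (hlL ▸ hne)
                exact ⟨v, trivial, hvu, hv0,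
                  fun s _ hsv => (hvl s hsv).trans hlL.symm,
                  fun s hs hsu => hvr s ⟨hs, hsu⟩⟩
          | some u₀ =>
              have hpu₀ : SignType.sign (p.eval u₀) = lp := hlo u₀ rfl
              obtain ⟨K1, K2⟩ := run_general p hu hε'0
                (fun s hs => hder s hs.1 hs.2) lL rL
                (by rw [hpu₀, hlLdef]) (by rw [hsp, hrLdef])
              constructor
              · intro hEq s hs hsu
                exact K1 hEq s ⟨hs, hsu⟩
              · intro hne
                obtain ⟨v, hv, hv0, hvl, hvr⟩ := K2 hne
                exact ⟨v, hv.1, hv.2, hv0,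
                  fun s hs hsv => hvl s ⟨hs, hsv⟩,
                  fun s hs hsu => hvr s ⟨hs, hsu⟩⟩
        have hIH := ih cl (some u) sp hrest (by simp)
          (by rintro u' h'; cases h'; exact hsp)
        rw [derive, if_pos hk]
        change RA g lo
          ((if lL = rL then [(restr i₀ civ lL, restr i₀ cpt sp)]
            else [(restr i₀ civ lL, restr i₀ civ 0), (restr i₀ civ rL, restr i₀ cpt sp)]) ++
            (derive i₀ core ε sp rest cl).1)
          (derive i₀ core ε sp rest cl).2
        by_cases hLR : lL = rL
        · rw [if_pos hLR]
          simp only [List.singleton_append]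
          refine ⟨u, hu, ?_, ?_, hIH⟩
          · intro s hs hsu
            funext i
            by_cases hi : i = i₀
            · subst hi
              show SignType.sign (p.eval s) = restr i (fun k => civ k) lL i
              rw [restr, if_pos rfl]
              exact hrun.1 hLR s hs hsu
            · show SignType.sign ((g i).eval s) = restr i₀ (fun k => civ k) lL i
              rw [restr, if_neg hi]
              exact hoth i hi s hs hsu
          · funext i
            by_cases hi : i = i₀
            · subst hi
              show SignType.sign (p.eval u) = restr i (fun k => cpt k) sp i
              rw [restr, if_pos rfl]
              exact hsp
            · show SignType.sign ((g i).eval u) = restr i₀ (fun k => cpt k) sp i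
              rw [restr, if_neg hi]
              rw [← hκ1 i hi]
              exact hpt (Sum.inl (some i))
        · rw [if_neg hLR]
          obtain ⟨v, hvlo, hvu, hv0, hvl, hvr⟩ := hrun.2 hLR
          simp only [List.cons_append]
          refine ⟨v, hvlo, ?_, ?_, u, hvu, ?_, ?_, hIH⟩
          · intro s hs hsv
            funext i
            by_cases hi : i = i₀
            · subst hi
              show SignType.sign (p.eval s) = restr i (fun k => civ k) lL i
              rw [restr, if_pos rfl]
              exact hvl s hs hsv
            · show SignType.sign ((g i).eval s) = restr i₀ (fun k => civ k) lL i
              rw [restr, if_neg hi]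
              exact hoth i hi s hs (lt_trans hsv hvu)
          · funext i
            by_cases hi : i = i₀
            · subst hi
              show SignType.sign (p.eval v) = restr i (fun k => civ k) 0 i
              rw [restr, if_pos rfl, hv0]
              simp
            · show SignType.sign ((g i).eval v) = restr i₀ (fun k => civ k) 0 i
              rw [restr, if_neg hi]
              exact hoth i hi v hvlo hvu
          · intro s hs hsu
            funext i
            by_cases hi : i = i₀
            · subst hi
              show SignType.sign (p.eval s) = restr i (fun k => civ k) rL i
              rw [restr, if_pos rfl]
              exact hvr s hs hsu
            · show SignType.sign ((g i).eval s) = restr i₀ (fun k => civ k) rL i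
              rw [restr, if_neg hi]
              exact hoth i hi s (olt_trans hvlo hs) hsu
          · funext i
            by_cases hi : i = i₀
            · subst hi
              show SignType.sign (p.eval u) = restr i (fun k => cpt k) sp i
              rw [restr, if_pos rfl]
              exact hsp
            · show SignType.sign ((g i).eval u) = restr i₀ (fun k => cpt k) sp i
              rw [restr, if_neg hi]
              rw [← hκ1 i hi]
              exact hpt (Sum.inl (some i))
      · rw [derive, if_neg hk]
        have hzeroκ : ∀ i, i ≠ i₀ → ¬ core i → gκ (Sum.inl (some i)) = 0 := by
          intro i hi hc
          rw [hκ1 i hi]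
          exact hzero i hi hc
        exact ih cl lo lp (RAH_drop hκi₀ hzeroκ hRAH hk) hlp hlo

end DeriveCorrect

section Main

open scoped Classical

variable {n : ℕ}

/-- Weight of a polynomial for the induction. -/
noncomputable def pw (P : Polynomial (MvPolynomial (Fin n) ℝ)) : ℕ :=
  if P = 0 then 0 else P.natDegree + 1

noncomputable def mapx (x : Fin n → ℝ) (P : Polynomial (MvPolynomial (Fin n) ℝ)) :
    Polynomial ℝ := P.map (MvPolynomial.eval x)

def GoodCover {ι : Type} (F : ι → Polynomial (MvPolynomial (Fin n) ℝ)) : Prop :=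
  ∃ LS : List (Set (Fin n → ℝ) × TableL ι),
    (∀ x, ∃ pr ∈ LS, x ∈ pr.1) ∧
    ∀ pr ∈ LS, SA pr.1 ∧ ∀ x ∈ pr.1, Realizes (fun i => mapx x (F i)) pr.2

lemma pw_eq_zero_iff (P : Polynomial (MvPolynomial (Fin n) ℝ)) : pw P = 0 ↔ P = 0 := by
  rw [pw]; split <;> simp_all

lemma natDegree_lt_pw {P : Polynomial (MvPolynomial (Fin n) ℝ)} (hP : P ≠ 0) :
    P.natDegree < pw P := by
  rw [pw, if_neg hP]; omega

lemma pw_le_of_natDegree_lt {P : Polynomial (MvPolynomial (Fin n) ℝ)} {d : ℕ}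
    (h : P.natDegree < d) : pw P ≤ d := by
  rw [pw]; split <;> omega

lemma pw_eraseLead_lt {P : Polynomial (MvPolynomial (Fin n) ℝ)} (hP : P ≠ 0) :
    pw P.eraseLead < pw P := by
  have h2 : P.eraseLead.natDegree ≤ P.natDegree - 1 := Polynomial.eraseLead_natDegree_le P
  rcases eq_or_ne P.eraseLead 0 with h | h
  · rw [pw, pw, if_pos h, if_neg hP]; omega
  · rw [pw, pw, if_neg h, if_neg hP]
    rcases Nat.eq_zero_or_pos P.natDegree with h0 | h0
    · exfalso
      apply h
      have hc := Polynomial.eq_C_of_natDegree_eq_zero h0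
      rw [hc]
      simp [Polynomial.eraseLead_C]
    · omega

lemma goodCover_const {ι : Type} [Fintype ι] (F : ι → Polynomial (MvPolynomial (Fin n) ℝ))
    (h : ∀ i, (F i).natDegree = 0) : GoodCover F := by
  classical
  refine ⟨(Finset.univ : Finset (ι → SignType)).toList.map
    (fun σ => ({x | ∀ i, SignType.sign (MvPolynomial.eval x ((F i).coeff 0)) = σ i},
      ([], σ))), ?_, ?_⟩
  · intro x
    refine ⟨({x' | ∀ i, SignType.sign (MvPolynomial.eval x' ((F i).coeff 0))
        = SignType.sign (MvPolynomial.eval x ((F i).coeff 0))},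
        ([], fun i => SignType.sign (MvPolynomial.eval x ((F i).coeff 0)))), ?_, ?_⟩
    · exact List.mem_map.2 ⟨_, Finset.mem_toList.2 (Finset.mem_univ _), rfl⟩
    · intro i; rfl
  · rintro pr hpr
    rcases List.mem_map.1 hpr with ⟨σ, _, rfl⟩
    constructor
    · have : {x | ∀ i, SignType.sign (MvPolynomial.eval x ((F i).coeff 0)) = σ i}
          = {x : Fin n → ℝ | ∀ i ∈ (Finset.univ : Finset ι).toList,
              x ∈ {x' | SignType.sign (MvPolynomial.eval x' ((F i).coeff 0)) = σ i}} := by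
        ext x
        simp only [Set.mem_setOf_eq, Finset.mem_toList, Finset.mem_univ, true_implies]
      rw [this]
      exact SA.listInter _ _ (fun i _ => SA.signSet _ _)
    · intro x hx
      intro s _
      funext i
      have hC : F i = Polynomial.C ((F i).coeff 0) := Polynomial.eq_C_of_natDegree_eq_zero (h i)
      show SignType.sign ((mapx x (F i)).eval s) = σ i
      rw [mapx]
      nth_rewrite 1 [hC]
      rw [Polynomial.map_C, Polynomial.eval_C]
      exact hx i

lemma sign_pow_mul {c y : ℝ} (hc : c ≠ 0) (k : ℕ) :
    SignType.sign (c ^ (2 * k) * y) = SignType.sign y := by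
  have hpos : 0 < c ^ (2 * k) := by
    rw [pow_mul]
    exact pow_pos (by positivity) k
  rw [sign_mul, sign_eq_one_iff.2 hpos, one_mul]

lemma mapx_eraseLead {x : Fin n → ℝ} {P : Polynomial (MvPolynomial (Fin n) ℝ)}
    (h : MvPolynomial.eval x P.leadingCoeff = 0) : mapx x P = mapx x P.eraseLead := by
  conv_lhs => rw [mapx, ← Polynomial.eraseLead_add_C_mul_X_pow P]
  rw [Polynomial.map_add, Polynomial.map_mul, Polynomial.map_C, h, Polynomial.map_pow]
  simp [mapx]

lemma natDegree_mapx {x : Fin n → ℝ} {P : Polynomial (MvPolynomial (Fin n) ℝ)}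
    (h : MvPolynomial.eval x P.leadingCoeff ≠ 0) : (mapx x P).natDegree = P.natDegree :=
  Polynomial.natDegree_map_of_leadingCoeff_ne_zero _ h

lemma leadingCoeff_mapx {x : Fin n → ℝ} {P : Polynomial (MvPolynomial (Fin n) ℝ)}
    (h : MvPolynomial.eval x P.leadingCoeff ≠ 0) :
    (mapx x P).leadingCoeff = MvPolynomial.eval x P.leadingCoeff := by
  rw [Polynomial.leadingCoeff, natDegree_mapx h, mapx, Polynomial.coeff_map]
  rfl

lemma mapx_ne_zero {x : Fin n → ℝ} {P : Polynomial (MvPolynomial (Fin n) ℝ)}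
    (h : MvPolynomial.eval x P.leadingCoeff ≠ 0) : mapx x P ≠ 0 := by
  intro h0
  apply h
  rw [← leadingCoeff_mapx h, h0]
  simp

lemma derivative_lc {P : Polynomial (MvPolynomial (Fin n) ℝ)} (hd : P.natDegree ≠ 0) :
    (Polynomial.derivative P).natDegree = P.natDegree - 1 ∧
    (Polynomial.derivative P).leadingCoeff = P.leadingCoeff * (P.natDegree : MvPolynomial (Fin n) ℝ) := by
  have hP : P ≠ 0 := fun h => hd (by rw [h]; simp)
  have hco : (Polynomial.derivative P).coeff (P.natDegree - 1)
      = P.leadingCoeff * (P.natDegree : MvPolynomial (Fin n) ℝ) := by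
    rw [Polynomial.coeff_derivative]
    congr 1
    · rw [Polynomial.leadingCoeff]
      congr 1
      omega
    · push_cast
      have : P.natDegree - 1 + 1 = P.natDegree := by omega
      rw [← this]
      push_cast
      ring
  have hne : P.leadingCoeff * (P.natDegree : MvPolynomial (Fin n) ℝ) ≠ 0 := by
    apply mul_ne_zero (Polynomial.leadingCoeff_ne_zero.2 hP)
    exact_mod_cast Nat.cast_ne_zero.2 hd
  have hge : P.natDegree - 1 ≤ (Polynomial.derivative P).natDegree :=
    Polynomial.le_natDegree_of_ne_zero (by rw [hco]; exact hne)
  have hlt : (Polynomial.derivative P).natDegree < P.natDegree :=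
    Polynomial.natDegree_derivative_lt hd
  have hdeg : (Polynomial.derivative P).natDegree = P.natDegree - 1 := by omega
  exact ⟨hdeg, by rw [Polynomial.leadingCoeff, hdeg, hco]⟩

lemma mapx_prem_sign {x : Fin n → ℝ} {P Q : Polynomial (MvPolynomial (Fin n) ℝ)}
    (hb : MvPolynomial.eval x Q.leadingCoeff ≠ 0) :
    ∀ u : ℝ, (mapx x Q).eval u = 0 →
      SignType.sign ((mapx x P).eval u) = SignType.sign ((mapx x (prem P Q)).eval u) := by
  intro u hu
  obtain ⟨k, S, hkS⟩ := prem_spec P Q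
  have h1 : (MvPolynomial.eval x Q.leadingCoeff) ^ (2 * k) * (mapx x P).eval u
      = (mapx x S).eval u * (mapx x Q).eval u + (mapx x (prem P Q)).eval u := by
    have h := congrArg (fun T => (mapx x T).eval u) hkS
    simpa [mapx, map_pow] using h
  rw [hu, mul_zero, zero_add] at h1
  rw [← h1, sign_pow_mul hb]

theorem goodCover_step : ∀ (D m s : ℕ) {ι : Type} [Fintype ι]
    (F : ι → Polynomial (MvPolynomial (Fin n) ℝ)),
    (∀ i, pw (F i) ≤ D) →
    (Finset.univ.filter (fun i => pw (F i) = D)).card ≤ m →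
    (∑ i, pw (F i)) ≤ s →
    GoodCover F := by
  intro D
  induction D using Nat.strong_induction_on with
  | _ D ihD =>
  intro m
  induction m using Nat.strong_induction_on with
  | _ m ihm =>
  intro s
  induction s using Nat.strong_induction_on with
  | _ s ihs =>
  intro ι inst F hD hm hs
  classical
  by_cases hconst : ∀ i, (F i).natDegree = 0
  · exact goodCover_const F hconst
  push_neg at hconst
  have hD2 : 2 ≤ D := by
    obtain ⟨i, hi⟩ := hconst
    have hFi : F i ≠ 0 := fun h => hi (by rw [h]; simp)
    have h1 := hD i
    rw [pw, if_neg hFi] at h1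
    omega
  by_cases hex : ∃ i, pw (F i) = D
  case neg =>
    push_neg at hex
    refine ihD (D-1) (by omega) (Fintype.card ι) (∑ i, pw (F i)) F ?_ ?_ le_rfl
    · intro i
      have h1 := hD i
      have h2 := hex i
      omega
    · exact le_trans (Finset.card_filter_le _ _) (by simp)
  case pos =>
  obtain ⟨i₀, hi₀⟩ := hex
  have hP0 : F i₀ ≠ 0 := by
    intro h
    rw [h] at hi₀
    rw [pw, if_pos rfl] at hi₀
    omega
  have hdP : (F i₀).natDegree = D - 1 := by
    rw [pw, if_neg hP0] at hi₀
    omega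
  have hdP0 : (F i₀).natDegree ≠ 0 := by omega
  have hm1 : 1 ≤ m := by
    refine le_trans ?_ hm
    rw [Nat.succ_le_iff, Finset.card_pos]
    exact ⟨i₀, Finset.mem_filter.2 ⟨Finset.mem_univ _, hi₀⟩⟩
  have hsum2 : 2 ≤ ∑ i, pw (F i) := by
    refine le_trans (by omega : 2 ≤ pw (F i₀)) ?_
    exact Finset.single_le_sum (f := fun i => pw (F i)) (fun i _ => Nat.zero_le _)
      (Finset.mem_univ i₀)
  set Rv : (ι → Bool) → Set (Fin n → ℝ) := fun v =>
    {x | ∀ i, (v i = true → MvPolynomial.eval x (F i).leadingCoeff = 0) ∧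
              (v i = false → MvPolynomial.eval x (F i).leadingCoeff ≠ 0)} with hRv
  have hRvSA : ∀ v, SA (Rv v) := by
    intro v
    have : Rv v = {x : Fin n → ℝ | ∀ i ∈ (Finset.univ : Finset ι).toList,
        x ∈ (if v i then {x' | MvPolynomial.eval x' (F i).leadingCoeff = 0}
             else {x' | MvPolynomial.eval x' (F i).leadingCoeff ≠ 0})} := by
      ext x
      simp only [hRv, Set.mem_setOf_eq, Finset.mem_toList, Finset.mem_univ, true_implies]
      constructor
      · intro h i
        cases hv : v i with
        | true => rw [if_pos rfl]; exact (h i).1 hv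
        | false => rw [if_neg (by simp)]; exact (h i).2 hv
      · intro h i
        have hi := h i
        constructor
        · intro hv; rw [hv, if_pos rfl] at hi; exact hi
        · intro hv; rw [hv, if_neg (by simp)] at hi; exact hi
    rw [this]
    refine SA.listInter _ _ (fun i _ => ?_)
    cases v i
    · rw [if_neg (by simp)]; exact SA.neZero _
    · rw [if_pos rfl]; exact SA.eqZero _
  have key : ∀ v : ι → Bool, ∃ LSv : List (Set (Fin n → ℝ) × TableL ι),
      (∀ x ∈ Rv v, ∃ pr ∈ LSv, x ∈ pr.1) ∧
      ∀ pr ∈ LSv, SA pr.1 ∧ ∀ x ∈ pr.1, Realizes (fun i => mapx x (F i)) pr.2 := by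
    intro v
    by_cases htr : ∃ i, v i = true ∧ F i ≠ 0
    · -- truncation case
      set F' := fun i => if v i = true ∧ F i ≠ 0 then (F i).eraseLead else F i with hF'
      have hF'eq : ∀ i, F' i = if v i = true ∧ F i ≠ 0 then (F i).eraseLead else F i :=
        fun i => rfl
      have hless : ∀ i, pw (F' i) ≤ pw (F i) := by
        intro i
        rw [hF'eq]
        split
        · next h => exact le_of_lt (pw_eraseLead_lt h.2)
        · exact le_rfl
      have hstrict : ∑ i, pw (F' i) < ∑ i, pw (F i) := by
        obtain ⟨i₁, hv₁, hF₁⟩ := htr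
        refine Finset.sum_lt_sum (fun i _ => hless i) ⟨i₁, Finset.mem_univ _, ?_⟩
        rw [hF'eq, if_pos ⟨hv₁, hF₁⟩]
        exact pw_eraseLead_lt hF₁
      have hcov : GoodCover F' := by
        by_cases hcase : ∃ i, v i = true ∧ F i ≠ 0 ∧ pw (F i) = D
        · obtain ⟨i₁, hv₁, hF₁, hw₁⟩ := hcase
          refine ihm (m-1) (by omega) (∑ i, pw (F' i)) F'
            (fun i => le_trans (hless i) (hD i)) ?_ le_rfl
          have hsub : Finset.univ.filter (fun i => pw (F' i) = D) ⊆
              (Finset.univ.filter (fun i => pw (F i) = D)).erase i₁ := by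
            intro i hi
            rw [Finset.mem_filter] at hi
            rw [Finset.mem_erase, Finset.mem_filter]
            have hFiD : pw (F i) = D := le_antisymm (hD i) (hi.2 ▸ hless i)
            refine ⟨?_, Finset.mem_univ _, hFiD⟩
            intro h
            subst h
            have hlt : pw (F' i) < pw (F i) := by
              rw [hF'eq, if_pos ⟨hv₁, hF₁⟩]
              exact pw_eraseLead_lt hF₁
            omega
          refine le_trans (Finset.card_le_card hsub) ?_
          have hcerase : ((Finset.univ.filter (fun i => pw (F i) = D)).erase i₁).card
              = (Finset.univ.filter (fun i => pw (F i) = D)).card - 1 :=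
            Finset.card_erase_of_mem (Finset.mem_filter.2 ⟨Finset.mem_univ _, hw₁⟩)
          omega
        · push_neg at hcase
          refine ihs (s-1) (by omega) F' (fun i => le_trans (hless i) (hD i)) ?_ (by omega)
          refine le_trans (Finset.card_le_card ?_) hm
          intro i hi
          rw [Finset.mem_filter] at hi ⊢
          refine ⟨Finset.mem_univ _, ?_⟩
          by_cases hc : v i = true ∧ F i ≠ 0
          · exfalso
            have hlt : pw (F' i) < pw (F i) := by
              rw [hF'eq, if_pos hc]
              exact pw_eraseLead_lt hc.2
            have := hD i
            omega
          · rw [hF'eq, if_neg hc] at hi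
            exact hi.2
      obtain ⟨LS, hcov1, hcov2⟩ := hcov
      refine ⟨LS.map (fun pr => (pr.1 ∩ Rv v, pr.2)), ?_, ?_⟩
      · intro x hx
        obtain ⟨pr, hpr, hxpr⟩ := hcov1 x
        exact ⟨(pr.1 ∩ Rv v, pr.2), List.mem_map.2 ⟨pr, hpr, rfl⟩, hxpr, hx⟩
      · rintro pr' hpr'
        rcases List.mem_map.1 hpr' with ⟨pr, hpr, rfl⟩
        refine ⟨SA.inter (hcov2 pr hpr).1 (hRvSA v), ?_⟩
        intro x hx
        have heq : (fun i => mapx x (F i)) = (fun i => mapx x (F' i)) := by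
          funext i
          rw [hF'eq]
          split
          · next h => exact mapx_eraseLead ((hx.2 i).1 h.1)
          · rfl
        rw [heq]
        exact (hcov2 pr hpr).2 x hx.1
    · -- main case
      push_neg at htr
      have htr' : ∀ i, v i = true → F i = 0 := by
        intro i hv
        by_contra h
        exact h (htr i hv)
      set P := F i₀ with hPdef
      set Pd := Polynomial.derivative P with hPddef
      have hvi₀ : v i₀ = false := by
        cases h : v i₀
        · rfl
        · exact absurd (htr' i₀ h) hP0
      set G : (Option ι ⊕ ι) → Polynomial (MvPolynomial (Fin n) ℝ) := fun k =>
        match k with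
        | Sum.inl none => Pd
        | Sum.inl (some j) => if j = i₀ then 0 else F j
        | Sum.inr j => if j = i₀ then prem P Pd else prem P (F j) with hGdef
      have hG0 : G (Sum.inl none) = Pd := rfl
      have hG1 : ∀ j, G (Sum.inl (some j)) = if j = i₀ then 0 else F j := fun j => rfl
      have hG2 : ∀ j, G (Sum.inr j) = if j = i₀ then prem P Pd else prem P (F j) :=
        fun j => rfl
      have hPdw : pw Pd ≤ D - 1 := by
        refine pw_le_of_natDegree_lt ?_
        have h := Polynomial.natDegree_derivative_lt hdP0
        rw [← hPddef] at h
        omega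
      have hpremw : ∀ Q : Polynomial (MvPolynomial (Fin n) ℝ), pw Q ≤ D →
          pw (prem P Q) ≤ D - 1 := by
        intro Q hQ
        by_cases hq : Q.natDegree = 0
        · rw [prem_eq_zero_of_natDegree_eq_zero P Q hq, pw, if_pos rfl]
          omega
        · have h1 := prem_natDegree_lt P Q hq
          have h2 : pw (prem P Q) ≤ Q.natDegree := pw_le_of_natDegree_lt h1
          have hQ0 : Q ≠ 0 := fun h => hq (by rw [h]; simp)
          have h3 : Q.natDegree < pw Q := natDegree_lt_pw hQ0
          omega
      have hGw : ∀ k, pw (G k) ≤ D := by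
        intro k
        rcases k with (_ | j) | j
        · rw [hG0]; omega
        · rw [hG1]
          split
          · rw [pw, if_pos rfl]; omega
          · exact hD j
        · rw [hG2]
          split
          · have := hpremw Pd (by omega); omega
          · have := hpremw (F j) (hD j); omega
      have hGcount : (Finset.univ.filter (fun k => pw (G k) = D)).card ≤ m - 1 := by
        have hsub : Finset.univ.filter (fun k => pw (G k) = D) ⊆
            Finset.image (fun j => (Sum.inl (some j) : Option ι ⊕ ι))
              ((Finset.univ.filter (fun j => pw (F j) = D)).erase i₀) := by
          intro k hk
          rw [Finset.mem_filter] at hk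
          rcases k with (_ | j) | j
          · exfalso
            have h2 := hk.2
            rw [hG0] at h2
            omega
          · have h2 := hk.2
            rw [hG1] at h2
            have hne : j ≠ i₀ := by
              intro h
              rw [if_pos h, pw, if_pos rfl] at h2
              omega
            rw [if_neg hne] at h2
            refine Finset.mem_image.2 ⟨j, ?_, rfl⟩
            rw [Finset.mem_erase, Finset.mem_filter]
            exact ⟨hne, Finset.mem_univ _, h2⟩
          · exfalso
            have h2 := hk.2
            rw [hG2] at h2
            have h1 : pw (if j = i₀ then prem P Pd else prem P (F j)) ≤ D - 1 := by
              split
              · exact hpremw Pd (by omega)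
              · exact hpremw (F j) (hD j)
            omega
        refine le_trans (Finset.card_le_card hsub) ?_
        refine le_trans Finset.card_image_le ?_
        have hcerase : ((Finset.univ.filter (fun j => pw (F j) = D)).erase i₀).card
            = (Finset.univ.filter (fun j => pw (F j) = D)).card - 1 :=
          Finset.card_erase_of_mem (Finset.mem_filter.2 ⟨Finset.mem_univ _, hi₀⟩)
        omega
      have hGcov : GoodCover G :=
        ihm (m-1) (by omega) (∑ k, pw (G k)) G hGw hGcount le_rfl
      obtain ⟨LS, hLS1, hLS2⟩ := hGcov
      set core : ι → Prop := fun i => i ≠ i₀ ∧ F i ≠ 0 with hcoredef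
      set a := P.leadingCoeff with hadef
      set Sg : SignType → Set (Fin n → ℝ) :=
        fun εs => {x | SignType.sign (MvPolynomial.eval x a) = εs} with hSg
      have hpiece : ∀ (εs : SignType), εs ≠ 0 → ∀ (lp : SignType),
          lp = (if Even (D-1) then εs else -εs) → ∀ pr ∈ LS,
          ∀ x ∈ pr.1 ∩ Rv v ∩ Sg εs,
            Realizes (fun i => mapx x (F i)) (derive i₀ core εs lp pr.2.1 pr.2.2) := by
        intro εs hεs lp hlp pr hpr x hx
        obtain ⟨⟨hx1, hx2⟩, hx3⟩ := hx
        have hax : MvPolynomial.eval x a ≠ 0 := (hx2 i₀).2 hvi₀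
        have hpne : mapx x P ≠ 0 := mapx_ne_zero hax
        have hdm : (mapx x P).natDegree = P.natDegree := natDegree_mapx hax
        have hdm0 : (mapx x P).natDegree ≠ 0 := by rw [hdm]; exact hdP0
        have hlcP : MvPolynomial.eval x Pd.leadingCoeff ≠ 0 := by
          obtain ⟨hdeg, hlc⟩ := derivative_lc (P := P) hdP0
          rw [← hPddef] at hlc
          rw [hlc, map_mul]
          refine mul_ne_zero hax ?_
          rw [map_natCast]
          exact_mod_cast Nat.cast_ne_zero.2 hdP0
        have hrem0 : ∀ u, (Polynomial.derivative (mapx x P)).eval u = 0 →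
            SignType.sign ((mapx x P).eval u)
              = SignType.sign ((mapx x (G (Sum.inr i₀))).eval u) := by
          intro u hu
          rw [hG2, if_pos rfl]
          refine mapx_prem_sign hlcP u ?_
          rw [← hu, hPddef, mapx, mapx, Polynomial.derivative_map]
        have hrem : ∀ i, core i → ∀ u, ((mapx x (F i)).eval u) = 0 →
            SignType.sign ((mapx x P).eval u)
              = SignType.sign ((mapx x (G (Sum.inr i))).eval u) := by
          intro i hcᵢ u hu
          rw [hG2, if_neg hcᵢ.1]
          have hvfi : v i = false := by
            cases h : v i
            · rfl
            · exact absurd (htr' i h) hcᵢ.2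
          exact mapx_prem_sign ((hx2 i).2 hvfi) u hu
        have hreal := (hLS2 pr hpr).2 x hx1
        have hRAH := RA_to_RAH (fun k => mapx x (G k)) pr.2.1 pr.2.2 none hreal
        have hεmap : SignType.sign (mapx x P).leadingCoeff = εs := by
          rw [leadingCoeff_mapx hax]
          exact hx3
        have hcor := derive_correct (i₀ := i₀) (core := core)
          (g := fun i => mapx x (F i)) (gκ := fun k => mapx x (G k))
          hpne hdm0
          (by show mapx x (G (Sum.inl none)) = Polynomial.derivative (mapx x P)
              rw [hG0, hPddef, mapx, mapx, Polynomial.derivative_map])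
          (fun i hi => by
            show mapx x (G (Sum.inl (some i))) = mapx x (F i)
            rw [hG1, if_neg hi])
          (by show mapx x (G (Sum.inl (some i₀))) = 0
              rw [hG1, if_pos rfl, mapx, Polynomial.map_zero])
          (fun i hi => hi.1)
          (fun i hi hci => by
            show mapx x (F i) = 0
            have hFi : F i = 0 := by
              by_contra h
              exact hci ⟨hi, h⟩
            rw [hFi, mapx, Polynomial.map_zero])
          hrem0 hrem
          pr.2.1 pr.2.2 none lp
          hRAH
          (fun _ => by
            show lp = if Even (mapx x P).natDegree
              then SignType.sign (mapx x P).leadingCoeff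
              else -SignType.sign (mapx x P).leadingCoeff
            rw [hdm, hdP, hεmap, hlp])
          (fun u h => by cases h)
        have hcor' : RA (fun i => mapx x (F i)) none
            (derive i₀ core εs lp pr.2.1 pr.2.2).1
            (derive i₀ core εs lp pr.2.1 pr.2.2).2 := by
          rw [show εs = SignType.sign ((fun i => mapx x (F i)) i₀).leadingCoeff
            from hεmap.symm]
          exact hcor
        exact hcor'
      have hlpm : ((if Even (D-1) then (-1 : SignType) else 1) : SignType)
          = (if Even (D-1) then (-1 : SignType) else -(-1)) := by
        split
        · rfl
        · decide
      refine ⟨(LS.map (fun pr => (pr.1 ∩ Rv v ∩ Sg 1,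
          derive i₀ core 1 (if Even (D-1) then 1 else -1) pr.2.1 pr.2.2))) ++
        (LS.map (fun pr => (pr.1 ∩ Rv v ∩ Sg (-1),
          derive i₀ core (-1) (if Even (D-1) then (-1 : SignType) else 1) pr.2.1 pr.2.2))),
        ?_, ?_⟩
      · intro x hx
        obtain ⟨pr, hpr, hxpr⟩ := hLS1 x
        have hax : MvPolynomial.eval x a ≠ 0 := (hx i₀).2 hvi₀
        rcases st_tri (SignType.sign (MvPolynomial.eval x a)) with h | h | h
        · exact absurd (sign_eq_zero_iff.1 h) hax
        · refine ⟨(pr.1 ∩ Rv v ∩ Sg (-1),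
            derive i₀ core (-1) (if Even (D-1) then (-1 : SignType) else 1) pr.2.1 pr.2.2),
            ?_, ⟨hxpr, hx⟩, h⟩
          exact List.mem_append.2 (Or.inr (List.mem_map.2 ⟨pr, hpr, rfl⟩))
        · refine ⟨(pr.1 ∩ Rv v ∩ Sg 1,
            derive i₀ core 1 (if Even (D-1) then 1 else -1) pr.2.1 pr.2.2),
            ?_, ⟨hxpr, hx⟩, h⟩
          exact List.mem_append.2 (Or.inl (List.mem_map.2 ⟨pr, hpr, rfl⟩))
      · rintro pr' hpr'
        rcases List.mem_append.1 hpr' with h | h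
        · rcases List.mem_map.1 h with ⟨pr, hpr, rfl⟩
          refine ⟨(SA.inter (SA.inter (hLS2 pr hpr).1 (hRvSA v)) (SA.signSet a 1)), ?_⟩
          intro x hx
          refine hpiece 1 (by decide) _ ?_ pr hpr x hx
          split
          · rfl
          · decide
        · rcases List.mem_map.1 h with ⟨pr, hpr, rfl⟩
          refine ⟨(SA.inter (SA.inter (hLS2 pr hpr).1 (hRvSA v)) (SA.signSet a (-1))), ?_⟩
          intro x hx
          exact hpiece (-1) (by decide) _ hlpm pr hpr x hx
  choose LSv hLSv using key
  refine ⟨((Finset.univ : Finset (ι → Bool)).toList).flatMap LSv, ?_, ?_⟩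
  · intro x
    set vx : ι → Bool := fun i => decide (MvPolynomial.eval x (F i).leadingCoeff = 0) with hvx
    have hxRv : x ∈ Rv vx := by
      intro i
      constructor
      · intro h
        exact of_decide_eq_true h
      · intro h
        exact of_decide_eq_false h
    obtain ⟨pr, hpr, hxpr⟩ := (hLSv vx).1 x hxRv
    exact ⟨pr, List.mem_flatMap.2 ⟨vx, Finset.mem_toList.2 (Finset.mem_univ _), hpr⟩, hxpr⟩
  · rintro pr hpr
    rcases List.mem_flatMap.1 hpr with ⟨v, _, hpr'⟩
    exact (hLSv v).2 pr hpr'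

theorem goodCover {ι : Type} [Fintype ι] (F : ι → Polynomial (MvPolynomial (Fin n) ℝ)) :
    GoodCover F := by
  refine goodCover_step (∑ i, pw (F i)) (Fintype.card ι) (∑ i, pw (F i)) F ?_ ?_ le_rfl
  · intro i
    exact Finset.single_le_sum (f := fun i => pw (F i)) (fun i _ => Nat.zero_le _)
      (Finset.mem_univ i)
  · exact le_trans (Finset.card_filter_le _ _) (by simp)

lemma cell_elim (L : List (Cond (n + 1))) :
    SA {x : Fin n → ℝ | ∃ t : ℝ, Fin.snoc x t ∈ cellSet L} := by
  classical
  set F : Fin L.length → Polynomial (MvPolynomial (Fin n) ℝ) :=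
    fun i => toPoly (L.get i).1 with hF
  set tgt : Fin L.length → SignType := fun i => if (L.get i).2 then 0 else 1 with htgt
  have hset : {x : Fin n → ℝ | ∃ t : ℝ, Fin.snoc x t ∈ cellSet L}
      = {x : Fin n → ℝ | ∃ t : ℝ, sgnv (fun i => mapx x (F i)) t = tgt} := by
    ext x
    simp only [Set.mem_setOf_eq]
    have hiff : ∀ t : ℝ, Fin.snoc x t ∈ cellSet L ↔ sgnv (fun i => mapx x (F i)) t = tgt := by
      intro t
      constructor
      · intro h
        funext i
        have hmem := h (L.get i) (List.get_mem _ i)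
        rw [mem_condSet] at hmem
        have heval : (mapx x (toPoly (L.get i).1)).eval t
            = MvPolynomial.eval (Fin.snoc x t) (L.get i).1 := (eval_snoc _ x t).symm
        show SignType.sign ((mapx x (toPoly (L.get i).1)).eval t)
            = (if (L.get i).2 then (0 : SignType) else 1)
        rw [heval]
        by_cases hb : (L.get i).2
        · rw [if_pos hb] at hmem ⊢
          rw [hmem]
          simp
        · rw [if_neg hb] at hmem ⊢
          exact sign_eq_one_iff.2 hmem
      · intro h c hc
        rcases List.mem_iff_get.1 hc with ⟨i, rfl⟩
        rw [mem_condSet]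
        have heval : (mapx x (toPoly (L.get i).1)).eval t
            = MvPolynomial.eval (Fin.snoc x t) (L.get i).1 := (eval_snoc _ x t).symm
        have hi : SignType.sign ((mapx x (toPoly (L.get i).1)).eval t)
            = (if (L.get i).2 then (0 : SignType) else 1) := congrFun h i
        rw [heval] at hi
        by_cases hb : (L.get i).2
        · rw [if_pos hb] at hi ⊢
          exact sign_eq_zero_iff.1 hi
        · rw [if_neg hb] at hi ⊢
          exact sign_eq_one_iff.1 hi
    constructor
    · rintro ⟨t, ht⟩; exact ⟨t, (hiff t).1 ht⟩
    · rintro ⟨t, ht⟩; exact ⟨t, (hiff t).2 ht⟩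
  rw [hset]
  obtain ⟨LS, hLS1, hLS2⟩ := goodCover F
  have hset2 : {x : Fin n → ℝ | ∃ t : ℝ, sgnv (fun i => mapx x (F i)) t = tgt}
      = {x : Fin n → ℝ | ∃ pr ∈ LS, x ∈ (if tgt ∈ cols pr.2 then pr.1 else (∅ : Set _))} := by
    ext x
    simp only [Set.mem_setOf_eq]
    constructor
    · rintro ⟨t, ht⟩
      obtain ⟨pr, hpr, hxpr⟩ := hLS1 x
      have hreal := (hLS2 pr hpr).2 x hxpr
      have hcols : tgt ∈ cols pr.2 := (realizes_readoff hreal tgt).1 ⟨t, ht⟩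
      exact ⟨pr, hpr, by rw [if_pos hcols]; exact hxpr⟩
    · rintro ⟨pr, hpr, hxpr⟩
      by_cases hcols : tgt ∈ cols pr.2
      · rw [if_pos hcols] at hxpr
        have hreal := (hLS2 pr hpr).2 x hxpr
        exact (realizes_readoff hreal tgt).2 hcols
      · rw [if_neg hcols] at hxpr
        exact absurd hxpr (Set.notMem_empty x)
  rw [hset2]
  refine SA.listUnion LS _ (fun pr hpr => ?_)
  by_cases hcols : tgt ∈ cols pr.2
  · rw [if_pos hcols]; exact (hLS2 pr hpr).1
  · rw [if_neg hcols]; exact SA.empty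

end Main

end TS

/-- Tarski–Seidenberg theorem: the image of a semialgebraic subset of `ℝ^{n+1}`
under the projection onto the first `n` coordinates is a semialgebraic subset
of `ℝⁿ`. -/
theorem tarski_seidenberg
    (n : ℕ) (A : Set (Fin (n + 1) → ℝ)) (hA : IsSemialgebraic A) :
    IsSemialgebraic ((fun x : Fin (n + 1) → ℝ => x ∘ Fin.castSucc) '' A) := by
  rw [TS.isSemialgebraic_iff_SA] at hA ⊢
  obtain ⟨LL, rfl⟩ := hA
  rw [TS.image_proj_eq]
  have hset : {x : Fin n → ℝ | ∃ t : ℝ, Fin.snoc x t ∈ TS.saSet LL}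
      = {x : Fin n → ℝ | ∃ L ∈ LL, x ∈ {x' : Fin n → ℝ | ∃ t : ℝ, Fin.snoc x' t ∈ TS.cellSet L}} := by
    ext x
    simp only [Set.mem_setOf_eq, TS.saSet]
    constructor
    · rintro ⟨t, L, hL, hx⟩
      exact ⟨L, hL, t, hx⟩
    · rintro ⟨L, hL, t, hx⟩
      exact ⟨t, L, hL, hx⟩
  rw [hset]
  exact TS.SA.listUnion LL _ (fun L _ => TS.cell_elim L)
end
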